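/- arXiv:2009.10540 — 18 statements merged into one kernel-verified Lean document; each statement's English description precedes it below -/
import Mathlib

section
/- Let Z be a real normed space, let z_1^*, …, z_m^* be continuous linear functionals on Z and s_1, …, s_m real numbers, and let P = {z ∈ Z : ⟨z_i^*, z⟩ ≤ s_i for all i = 1,…,m}. Let Z_1 and Z_2 be closed linear subspaces of Z such that Z_1 ⊆ ⋂_{i=1}^m ker(z_i^*), Z_1 ∩ Z_2 = {0}, Z_1 + Z_2 = Z, and Z_2 is finite-dimensional. Set P̂ = {z ∈ Z_2 : ⟨z_i^*, z⟩ ≤ s_i for all i = 1,…,m}. Then P = Z_1 + P̂ (Minkowski sum) and rint(P) = Z_1 + rint(P̂). -/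
open Set Pointwise

section AuxIntrinsic

open AffineSubspace

private lemma aux_intrinsic {Z : Type*} [NormedAddCommGroup Z] [NormedSpace ℝ Z]
    (Z1 Z2 : Submodule ℝ Z) (π : Z →ₗ[ℝ] Z) (hcont : Continuous π)
    (hmem2 : ∀ z, π z ∈ Z2) (hfix : ∀ z ∈ Z2, π z = z) (hker1 : ∀ z ∈ Z1, π z = 0)
    (hdiff : ∀ z, z - π z ∈ Z1)
    (S : Set Z) (hS : S ⊆ (Z2 : Set Z)) :
    intrinsicInterior ℝ (π ⁻¹' S) = π ⁻¹' (intrinsicInterior ℝ S) := by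
  rcases S.eq_empty_or_nonempty with rfl | ⟨p, hp⟩
  · simp
  have hfixS : ∀ x ∈ S, π x = x := fun x hx => hfix x (hS hx)
  have hSsub : S ⊆ π ⁻¹' S := fun x hx => by
    simp only [Set.mem_preimage, hfixS x hx]; exact hx
  set A := affineSpan ℝ (π ⁻¹' S) with hAdef
  set B := affineSpan ℝ S with hBdef
  have hBA : B ≤ A := affineSpan_mono ℝ hSsub
  have hBZ2 : ∀ w ∈ B, w ∈ Z2 := by
    intro w hw
    have : B ≤ Z2.toAffineSubspace := affineSpan_le.2 (by exact hS)
    exact this hw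
  -- membership characterization of A
  have hA : ∀ z, z ∈ A ↔ π z ∈ B := by
    intro z
    constructor
    · intro hz
      have hle : A ≤ B.comap π.toAffineMap := by
        rw [hAdef, affineSpan_le]
        intro x hx
        exact mem_comap.2 (subset_affineSpan ℝ S hx)
      exact hle hz
    · intro hz
      have h1 : z - π z ∈ A.direction := by
        rw [hAdef, direction_affineSpan]
        have hpv : p + (z - π z) ∈ π ⁻¹' S := by
          simp only [Set.mem_preimage, map_add, hfixS p hp,
            hker1 _ (hdiff z), add_zero]
          exact hp
        have := vsub_mem_vectorSpan ℝ hpv (hSsub hp)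
        simpa using this
      have h2 : π z ∈ A := hBA hz
      have := AffineSubspace.vadd_mem_of_mem_direction h1 h2
      simpa [vadd_eq_add, sub_add_cancel] using this
  -- the continuous "projection" between the affine spans
  set ρ : A → B := fun x => ⟨π x, (hA x).1 x.2⟩ with hρdef
  have hρcont : Continuous ρ := (hcont.comp continuous_subtype_val).subtype_mk _
  show Subtype.val '' interior (Subtype.val ⁻¹' (π ⁻¹' S) : Set A)
      = π ⁻¹' (Subtype.val '' interior (Subtype.val ⁻¹' S : Set B))
  ext z
  constructor
  · rintro ⟨x, hx, rfl⟩
    -- the continuous section through x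
    have hσmemval : ∀ w : B, π ((w : Z) + ((x : Z) - π x)) = (w : Z) := by
      intro w
      simp only [map_add, map_sub, hfix _ (hmem2 (x : Z)),
        hfix _ (hBZ2 _ w.2), sub_self, add_zero]
    have hσmem : ∀ w : B, ((w : Z) + ((x : Z) - π x)) ∈ A := by
      intro w
      rw [hA]
      rw [hσmemval w]
      exact w.2
    set σ : B → A := fun w => ⟨(w : Z) + ((x : Z) - π x), hσmem w⟩ with hσdef
    have hσcont : Continuous σ := (continuous_subtype_val.add continuous_const).subtype_mk _
    have hσρ : σ (ρ x) = x := by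
      apply Subtype.ext
      show π (x : Z) + ((x : Z) - π x) = (x : Z)
      abel
    have hpre : σ ⁻¹' (Subtype.val ⁻¹' (π ⁻¹' S) : Set A) = (Subtype.val ⁻¹' S : Set B) := by
      ext w
      simp only [Set.mem_preimage, hσdef]
      rw [show π ((w : Z) + ((x : Z) - π x)) = (w : Z) from hσmemval w]
    refine ⟨ρ x, ?_, rfl⟩
    have : ρ x ∈ σ ⁻¹' (interior (Subtype.val ⁻¹' (π ⁻¹' S) : Set A)) := by
      simp only [Set.mem_preimage, hσρ]; exact hx
    have h2 := (preimage_interior_subset_interior_preimage hσcont) this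
    rwa [hpre] at h2
  · rintro ⟨y, hy, hyz⟩
    have hzA : z ∈ A := by
      rw [hA]
      have : (y : Z) ∈ B := y.2
      rwa [hyz] at this
    refine ⟨⟨z, hzA⟩, ?_, rfl⟩
    have hρx : ρ ⟨z, hzA⟩ = y := Subtype.ext (by exact hyz.symm)
    have h1 : (⟨z, hzA⟩ : A) ∈ ρ ⁻¹' (interior (Subtype.val ⁻¹' S : Set B)) := by
      simp only [Set.mem_preimage, hρx]; exact hy
    have h2 := (preimage_interior_subset_interior_preimage hρcont) h1
    have hpre : ρ ⁻¹' (Subtype.val ⁻¹' S : Set B) = (Subtype.val ⁻¹' (π ⁻¹' S) : Set A) := rfl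
    rwa [hpre] at h2

end AuxIntrinsic

/-- Decomposition of a polyhedron `P = Z₁ + P̂` and of its relative
interior `rint P = Z₁ + rint P̂`. -/
theorem stmt_0 {Z : Type*} [NormedAddCommGroup Z] [NormedSpace ℝ Z]
    {m : ℕ} (zs : Fin m → Z →L[ℝ] ℝ) (s : Fin m → ℝ)
    (Z1 Z2 : Submodule ℝ Z)
    (hZ1closed : IsClosed (Z1 : Set Z)) (hZ2closed : IsClosed (Z2 : Set Z))
    (hker : ∀ x ∈ Z1, ∀ i, zs i x = 0)
    (hinf : Z1 ⊓ Z2 = ⊥) (hsup : Z1 ⊔ Z2 = ⊤)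
    (hfin : FiniteDimensional ℝ Z2)
    (P Phat : Set Z)
    (hP : P = {z | ∀ i, zs i z ≤ s i})
    (hPhat : Phat = {z | z ∈ Z2 ∧ ∀ i, zs i z ≤ s i}) :
    P = (Z1 : Set Z) + Phat ∧
      intrinsicInterior ℝ P = (Z1 : Set Z) + intrinsicInterior ℝ Phat := by
  have hcompl : IsCompl Z1 Z2 := ⟨disjoint_iff.2 hinf, codisjoint_iff.2 hsup⟩
  -- construct the continuous linear projection onto Z2 along Z1
  haveI : IsClosed (Z1 : Set Z) := hZ1closed
  haveI : FiniteDimensional ℝ (Z ⧸ Z1) :=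
    (Submodule.quotientEquivOfIsCompl Z1 Z2 hcompl).symm.finiteDimensional
  set e := Submodule.quotientEquivOfIsCompl Z1 Z2 hcompl with hedef
  set π : Z →ₗ[ℝ] Z := Z2.subtype ∘ₗ e.toLinearMap ∘ₗ Z1.mkQ with hπdef
  have hcont : Continuous π := continuous_subtype_val.comp
      ((e.toLinearMap.continuous_of_finiteDimensional).comp continuous_quot_mk)
  have hmem2 : ∀ z, π z ∈ Z2 := fun z => (e (Z1.mkQ z)).2
  have hfix : ∀ z ∈ Z2, π z = z := by
    intro z hz
    have := Submodule.quotientEquivOfIsCompl_apply_mk_coe hcompl ⟨z, hz⟩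
    simp [hπdef, hedef, this, hz]
  have hker1 : ∀ z ∈ Z1, π z = 0 := by
    intro z hz
    have : Z1.mkQ z = 0 := (Submodule.Quotient.mk_eq_zero Z1).2 hz
    simp [hπdef, this]
  have hdiff : ∀ z, z - π z ∈ Z1 := by
    intro z
    obtain ⟨a, ha, b, hb, rfl⟩ : ∃ a ∈ Z1, ∃ b ∈ Z2, a + b = z := by
      have : z ∈ Z1 ⊔ Z2 := hsup ▸ Submodule.mem_top
      exact Submodule.mem_sup.1 this
    have : π (a + b) = b := by rw [map_add, hker1 a ha, hfix b hb, zero_add]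
    rw [this]
    simpa using ha
  -- `Z1 + S = π ⁻¹' S` for `S ⊆ Z2`
  have hadd : ∀ S : Set Z, S ⊆ (Z2 : Set Z) → (Z1 : Set Z) + S = π ⁻¹' S := by
    intro S hSsub
    ext z
    constructor
    · rintro ⟨a, ha, b, hb, rfl⟩
      have : π (a + b) = b := by
        rw [map_add, hker1 a ha, hfix b (hSsub hb), zero_add]
      simpa [Set.mem_preimage, this] using hb
    · intro hz
      exact ⟨z - π z, hdiff z, π z, hz, sub_add_cancel z (π z)⟩
  -- `P = π ⁻¹' Phat`
  have hπinv : ∀ z i, zs i (π z) = zs i z := by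
    intro z i
    have h := hker (z - π z) (hdiff z) i
    have : zs i z - zs i (π z) = 0 := by rw [← map_sub]; exact h
    linarith
  have hPpre : P = π ⁻¹' Phat := by
    ext z
    simp only [hP, hPhat, Set.mem_preimage, Set.mem_setOf_eq]
    constructor
    · intro hz
      exact ⟨hmem2 z, fun i => by rw [hπinv z i]; exact hz i⟩
    · rintro ⟨-, hz⟩ i
      have := hz i
      rwa [hπinv z i] at this
  have hPhatsub : Phat ⊆ (Z2 : Set Z) := by
    rw [hPhat]; exact fun z hz => hz.1
  constructor
  · rw [hPpre, hadd Phat hPhatsub]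
  · rw [hPpre, aux_intrinsic Z1 Z2 π hcont hmem2 hfix hker1 hdiff Phat hPhatsub,
      hadd (intrinsicInterior ℝ Phat) ((intrinsicInterior_subset).trans hPhatsub)]
end

section
/- Let Z be a real normed space, let u_1^*, …, u_n^* be continuous linear functionals on Z and s_1, …, s_n real numbers, and suppose P = {z ∈ Z : ⟨u_i^*, z⟩ ≤ s_i for all i = 1,…,n} is nonempty. Let Ī_P = {i ∈ {1,…,n} : ⟨u_i^*, z⟩ = s_i for every z ∈ P}. Then rint(P) = {z ∈ Z : ⟨u_i^*, z⟩ < s_i for all i ∉ Ī_P} ∩ ⋂_{i ∈ Ī_P} {z ∈ Z : ⟨u_i^*, z⟩ = s_i}. -/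
open Set Pointwise

/-- Description of the relative interior of a polyhedron. -/
theorem stmt_1 {Z : Type*} [NormedAddCommGroup Z] [NormedSpace ℝ Z]
    {n : ℕ} (u : Fin n → Z →L[ℝ] ℝ) (s : Fin n → ℝ)
    (P : Set Z) (hP : P = {z | ∀ i, u i z ≤ s i}) (hne : P.Nonempty)
    (Ibar : Set (Fin n)) (hIbar : Ibar = {i | ∀ z ∈ P, u i z = s i}) :
    intrinsicInterior ℝ P =
      {z | ∀ i ∉ Ibar, u i z < s i} ∩ ⋂ i ∈ Ibar, {z | u i z = s i} := by
  have hPspan : P ⊆ (affineSpan ℝ P : Set Z) := subset_affineSpan ℝ P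
  -- every point of the affine span satisfies the active equalities
  have hspan_eq : ∀ i ∈ Ibar, ∀ w ∈ affineSpan ℝ P, u i w = s i := by
    intro i hi
    have hle : affineSpan ℝ P ≤ AffineSubspace.comap ((u i).toLinearMap.toAffineMap)
        (AffineSubspace.mk' (s i) (⊥ : Submodule ℝ ℝ)) := by
      rw [affineSpan_le]
      intro z hz
      have := (hIbar ▸ hi) z hz
      simp [AffineSubspace.mem_comap, AffineSubspace.mem_mk', sub_eq_zero, this]
    intro w hw
    have := hle hw
    simpa [AffineSubspace.mem_comap, AffineSubspace.mem_mk', sub_eq_zero] using this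
  ext z
  constructor
  · intro hz
    have hzP : z ∈ P := intrinsicInterior_subset hz
    obtain ⟨y, hy, hyz⟩ := hz
    rw [mem_interior_iff_mem_nhds, Metric.mem_nhds_iff] at hy
    obtain ⟨ε, hε, hball⟩ := hy
    refine ⟨?_, ?_⟩
    · intro i hi
      have hzle : u i z ≤ s i := (hP ▸ hzP) i
      rcases lt_or_eq_of_le hzle with h | heq
      · exact h
      · exfalso
        -- get a point of P where the i-th constraint is strict
        have : ¬ ∀ w ∈ P, u i w = s i := by rw [hIbar] at hi; exact hi
        push_neg at this
        obtain ⟨z₀, hz₀P, hz₀ne⟩ := this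
        have hz₀lt : u i z₀ < s i := lt_of_le_of_ne ((hP ▸ hz₀P) i) hz₀ne
        have hzz₀ : z ≠ z₀ := by
          intro h; exact hz₀ne (h ▸ heq)
        have hnorm : (0:ℝ) < ‖z - z₀‖ := by
          rw [norm_pos_iff, sub_ne_zero]; exact hzz₀
        set t : ℝ := ε / (2 * ‖z - z₀‖) with ht_def
        have ht : 0 < t := by positivity
        set w : Z := t • (z - z₀) + z with hw_def
        have hwspan : w ∈ affineSpan ℝ P := by
          have := AffineSubspace.smul_vsub_vadd_mem (affineSpan ℝ P) t
            (hPspan hzP) (hPspan hz₀P) (hPspan hzP)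
          simpa [vsub_eq_sub, vadd_eq_add] using this
        have hdist : dist (⟨w, hwspan⟩ : affineSpan ℝ P) y < ε := by
          rw [Subtype.dist_eq, hyz, dist_eq_norm]
          have : w - z = t • (z - z₀) := by rw [hw_def]; abel
          rw [this, norm_smul, Real.norm_of_nonneg ht.le]
          rw [ht_def]
          rw [div_mul_eq_mul_div, mul_comm 2 ‖z - z₀‖, ← div_div,
            mul_div_assoc, div_self hnorm.ne']
          linarith
        have hwP : w ∈ P := hball (Metric.mem_ball.mpr hdist)
        have hwle : u i w ≤ s i := (hP ▸ hwP) i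
        have : u i w = s i + t * (s i - u i z₀) := by
          simp [hw_def, map_add, map_smul, map_sub, heq, smul_eq_mul]
          ring
        nlinarith
    · rw [mem_iInter₂]
      intro i hi
      exact (hIbar ▸ hi) z hzP
  · rintro ⟨h1, h2⟩
    rw [mem_iInter₂] at h2
    have hzP : z ∈ P := by
      rw [hP]
      intro i
      by_cases hi : i ∈ Ibar
      · exact le_of_eq (h2 i hi)
      · exact (h1 i hi).le
    have hzspan : z ∈ affineSpan ℝ P := hPspan hzP
    refine ⟨⟨z, hzspan⟩, ?_, rfl⟩
    set U : Set Z := ⋂ i ∈ {i : Fin n | i ∉ Ibar}, {w | u i w < s i} with hU_def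
    have hUopen : IsOpen U := by
      apply Set.Finite.isOpen_biInter (Set.toFinite _)
      intro i _
      exact isOpen_lt (u i).continuous continuous_const
    have hzU : z ∈ U := by
      rw [hU_def, mem_iInter₂]
      intro i hi
      exact h1 i hi
    have hsub : ((↑) ⁻¹' U : Set (affineSpan ℝ P)) ⊆ ((↑) ⁻¹' P) := by
      rintro ⟨w, hwspan⟩ hwU
      rw [mem_preimage] at hwU ⊢
      show w ∈ P
      rw [hP]
      intro i
      by_cases hi : i ∈ Ibar
      · exact le_of_eq (hspan_eq i hi w hwspan)
      · rw [hU_def, mem_iInter₂] at hwU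
        exact (hwU i hi).le
    exact interior_maximal hsub (hUopen.preimage continuous_subtype_val) hzU
end

section
/- Let Z be a real normed space. If P_1 and P_2 are polyhedra in Z, then the Minkowski sum P_1 + P_2 and the intersection P_1 ∩ P_2 are polyhedra in Z. If P_1 and P_2 are generalized polyhedra in Z, then P_1 + P_2 and P_1 ∩ P_2 are generalized polyhedra in Z. -/
open Set Pointwise

/-- A polyhedron in a real normed space: a finite intersection of closed half-spaces. -/
def IsPolyhedron {Z : Type*} [NormedAddCommGroup Z] [NormedSpace ℝ Z] (P : Set Z) : Prop :=
  ∃ (n : ℕ) (u : Fin n → Z →L[ℝ] ℝ) (s : Fin n → ℝ), P = {z | ∀ i, u i z ≤ s i}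

/-- A generalized polyhedron in a real normed space: the intersection of a polyhedron
with finitely many open half-spaces. -/
def IsGeneralizedPolyhedron {Z : Type*} [NormedAddCommGroup Z] [NormedSpace ℝ Z]
    (P : Set Z) : Prop :=
  ∃ Q : Set Z, IsPolyhedron Q ∧
    ∃ (k : ℕ) (v : Fin k → Z →L[ℝ] ℝ) (t : Fin k → ℝ),
      P = Q ∩ {z | ∀ j, v j z < t j}

open Finset

section Aux

lemma pick (A B C D : Finset ℝ)
    (h1 : ∀ x ∈ A, ∀ y ∈ C, x ≤ y) (h2 : ∀ x ∈ A, ∀ y ∈ D, x < y)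
    (h3 : ∀ x ∈ B, ∀ y ∈ C, x < y) (h4 : ∀ x ∈ B, ∀ y ∈ D, x < y) :
    ∃ r : ℝ, (∀ x ∈ A, x ≤ r) ∧ (∀ x ∈ B, x < r) ∧ (∀ y ∈ C, r ≤ y) ∧ (∀ y ∈ D, r < y) := by
  rcases (A ∪ B).eq_empty_or_nonempty with hAB | hAB
  · rw [Finset.union_eq_empty] at hAB
    rcases (C ∪ D).eq_empty_or_nonempty with hCD | hCD
    · rw [Finset.union_eq_empty] at hCD
      exact ⟨0, by simp [hAB.1, hAB.2, hCD.1, hCD.2]⟩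
    · refine ⟨(C ∪ D).min' hCD - 1, by simp [hAB.1], by simp [hAB.2], ?_, ?_⟩
      · intro y hy
        have := Finset.min'_le (C ∪ D) y (Finset.mem_union_left D hy)
        linarith
      · intro y hy
        have := Finset.min'_le (C ∪ D) y (Finset.mem_union_right C hy)
        linarith
  · rcases (C ∪ D).eq_empty_or_nonempty with hCD | hCD
    · rw [Finset.union_eq_empty] at hCD
      refine ⟨(A ∪ B).max' hAB + 1, ?_, ?_, by simp [hCD.1], by simp [hCD.2]⟩
      · intro x hx
        have := Finset.le_max' (A ∪ B) x (Finset.mem_union_left B hx)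
        linarith
      · intro x hx
        have := Finset.le_max' (A ∪ B) x (Finset.mem_union_right A hx)
        linarith
    · obtain ⟨p, hpm, hpmax⟩ : ∃ p ∈ A ∪ B, ∀ x ∈ A ∪ B, x ≤ p :=
        ⟨(A ∪ B).max' hAB, (A ∪ B).max'_mem hAB, fun x hx => Finset.le_max' _ x hx⟩
      obtain ⟨q, hqm, hqmin⟩ : ∃ q ∈ C ∪ D, ∀ y ∈ C ∪ D, q ≤ y :=
        ⟨(C ∪ D).min' hCD, (C ∪ D).min'_mem hCD, fun y hy => Finset.min'_le _ y hy⟩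
      rw [Finset.mem_union] at hpm hqm
      have hpq : p ≤ q := by
        rcases hpm with hA | hB <;> rcases hqm with hC | hD
        · exact h1 _ hA _ hC
        · exact (h2 _ hA _ hD).le
        · exact (h3 _ hB _ hC).le
        · exact (h4 _ hB _ hD).le
      refine ⟨(p + q) / 2, ?_, ?_, ?_, ?_⟩
      · intro x hx
        have := hpmax x (Finset.mem_union_left B hx)
        linarith
      · intro x hx
        have hxp := hpmax x (Finset.mem_union_right A hx)
        rcases lt_or_eq_of_le hpq with h | h
        · linarith
        · have hxq : x < q := by
            rcases hqm with hC | hD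
            · exact h3 _ hx _ hC
            · exact h4 _ hx _ hD
          linarith
      · intro y hy
        have := hqmin y (Finset.mem_union_left D hy)
        linarith
      · intro y hy
        have hyq := hqmin y (Finset.mem_union_right C hy)
        rcases lt_or_eq_of_le hpq with h | h
        · linarith
        · have hpy : p < y := by
            rcases hpm with hA | hB
            · exact h2 _ hA _ hy
            · exact h4 _ hB _ hy
          linarith

lemma dle {x y v w : ℝ} (hx : x < 0) (hy : 0 < y) (h : x * v ≤ y * w) : w / x ≤ v / y := by
  rw [le_div_iff₀ hy, div_mul_eq_mul_div, div_le_iff_of_neg hx]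
  linarith

lemma dlt {x y v w : ℝ} (hx : x < 0) (hy : 0 < y) (h : x * v < y * w) : w / x < v / y := by
  rw [lt_div_iff₀ hy, div_mul_eq_mul_div, div_lt_iff_of_neg hx]
  linarith

lemma fm_exists {ι ι' : Type*} [Fintype ι] [Fintype ι'] (a b : ι → ℝ) (c e : ι' → ℝ)
    (h0 : ∀ i, a i = 0 → 0 ≤ b i) (h0' : ∀ i', c i' = 0 → 0 < e i')
    (hll : ∀ i i'', 0 < a i → a i'' < 0 → a i'' * b i ≤ a i * b i'')
    (hls : ∀ i i', 0 < a i → c i' < 0 → c i' * b i < a i * e i')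
    (hsl : ∀ i' i, 0 < c i' → a i < 0 → a i * e i' < c i' * b i)
    (hss : ∀ i' i'', 0 < c i' → c i'' < 0 → c i'' * e i' < c i' * e i'') :
    ∃ r : ℝ, (∀ i, a i * r ≤ b i) ∧ (∀ i', c i' * r < e i') := by
  classical
  obtain ⟨r, hA, hB, hC, hD⟩ := pick
      ((univ.filter (fun i => a i < 0)).image (fun i => b i / a i))
      ((univ.filter (fun i' => c i' < 0)).image (fun i' => e i' / c i'))
      ((univ.filter (fun i => 0 < a i)).image (fun i => b i / a i))
      ((univ.filter (fun i' => 0 < c i')).image (fun i' => e i' / c i'))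
      (by
        simp only [Finset.mem_image, Finset.mem_filter, Finset.mem_univ, true_and]
        rintro x ⟨i'', hn, rfl⟩ y ⟨i, hp, rfl⟩
        exact dle hn hp (hll i i'' hp hn))
      (by
        simp only [Finset.mem_image, Finset.mem_filter, Finset.mem_univ, true_and]
        rintro x ⟨i, hn, rfl⟩ y ⟨i', hp, rfl⟩
        exact dlt hn hp (hsl i' i hp hn))
      (by
        simp only [Finset.mem_image, Finset.mem_filter, Finset.mem_univ, true_and]
        rintro x ⟨i', hn, rfl⟩ y ⟨i, hp, rfl⟩
        exact dlt hn hp (hls i i' hp hn))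
      (by
        simp only [Finset.mem_image, Finset.mem_filter, Finset.mem_univ, true_and]
        rintro x ⟨i'', hn, rfl⟩ y ⟨i', hp, rfl⟩
        exact dlt hn hp (hss i' i'' hp hn))
  refine ⟨r, fun i => ?_, fun i' => ?_⟩
  · rcases lt_trichotomy (a i) 0 with hn | h0i | hp
    · have := hA (b i / a i) (by
        simp only [Finset.mem_image, Finset.mem_filter, Finset.mem_univ, true_and]
        exact ⟨i, hn, rfl⟩)
      rw [div_le_iff_of_neg hn] at this
      linarith
    · rw [h0i]; simpa using h0 i h0i
    · have := hC (b i / a i) (by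
        simp only [Finset.mem_image, Finset.mem_filter, Finset.mem_univ, true_and]
        exact ⟨i, hp, rfl⟩)
      rw [le_div_iff₀ hp] at this
      linarith
  · rcases lt_trichotomy (c i') 0 with hn | h0i | hp
    · have := hB (e i' / c i') (by
        simp only [Finset.mem_image, Finset.mem_filter, Finset.mem_univ, true_and]
        exact ⟨i', hn, rfl⟩)
      rw [div_lt_iff_of_neg hn] at this
      linarith
    · rw [h0i]; simpa using h0' i' h0i
    · have := hD (e i' / c i') (by
        simp only [Finset.mem_image, Finset.mem_filter, Finset.mem_univ, true_and]
        exact ⟨i', hp, rfl⟩)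
      rw [lt_div_iff₀ hp] at this
      linarith

variable {Z : Type*} [NormedAddCommGroup Z] [NormedSpace ℝ Z]

lemma fwd_le {aU aL r bU bL : ℝ} (hU : 0 < aU) (hL : aL < 0)
    (h1 : aU * r ≤ bU) (h2 : aL * r ≤ bL) : aL * bU ≤ aU * bL := by nlinarith

lemma fwd_lt {aU aL r bU bL : ℝ} (hU : 0 < aU) (hL : aL < 0)
    (h1 : aU * r ≤ bU) (h2 : aL * r < bL) : aL * bU < aU * bL := by nlinarith

lemma fwd_lt' {aU aL r bU bL : ℝ} (hU : 0 < aU) (hL : aL < 0)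
    (h1 : aU * r < bU) (h2 : aL * r ≤ bL) : aL * bU < aU * bL := by nlinarith

lemma fwd_lt'' {aU aL r bU bL : ℝ} (hU : 0 < aU) (hL : aL < 0)
    (h1 : aU * r < bU) (h2 : aL * r < bL) : aL * bU < aU * bL := by nlinarith

lemma sum_row {d : ℕ} (aU aL : ℝ) (AU AL : Fin d → ℝ) (μ : Fin d → ℝ) :
    ∑ j, (aU * AL j - aL * AU j) * μ j
      = aU * (∑ j, AL j * μ j) - aL * (∑ j, AU j * μ j) := by
  rw [Finset.mul_sum, Finset.mul_sum, ← Finset.sum_sub_distrib]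
  exact Finset.sum_congr rfl fun j _ => by ring

lemma row_le_iff {d : ℕ} (aU aL : ℝ) (AU AL : Fin d → ℝ) (uU uL : Z →L[ℝ] ℝ)
    (sU sL : ℝ) (z : Z) (μ : Fin d → ℝ) :
    ((∑ j, (aU * AL j - aL * AU j) * μ j) + (aU • uL - aL • uU) z ≤ aU * sL - aL * sU)
      ↔ aL * (sU - uU z - ∑ j, AU j * μ j) ≤ aU * (sL - uL z - ∑ j, AL j * μ j) := by
  rw [sum_row]
  simp only [ContinuousLinearMap.sub_apply, ContinuousLinearMap.smul_apply, smul_eq_mul]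
  constructor <;> intro h <;> nlinarith [h]

lemma row_lt_iff {d : ℕ} (aU aL : ℝ) (AU AL : Fin d → ℝ) (uU uL : Z →L[ℝ] ℝ)
    (sU sL : ℝ) (z : Z) (μ : Fin d → ℝ) :
    ((∑ j, (aU * AL j - aL * AU j) * μ j) + (aU • uL - aL • uU) z < aU * sL - aL * sU)
      ↔ aL * (sU - uU z - ∑ j, AU j * μ j) < aU * (sL - uL z - ∑ j, AL j * μ j) := by
  rw [sum_row]
  simp only [ContinuousLinearMap.sub_apply, ContinuousLinearMap.smul_apply, smul_eq_mul]
  constructor <;> intro h <;> nlinarith [h]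

lemma poly_pi {ι : Type*} [Fintype ι] (u : ι → Z →L[ℝ] ℝ) (s : ι → ℝ) :
    IsPolyhedron {z : Z | ∀ i, u i z ≤ s i} := by
  refine ⟨Fintype.card ι, u ∘ (Fintype.equivFin ι).symm, s ∘ (Fintype.equivFin ι).symm, ?_⟩
  ext z
  simp only [mem_setOf_eq, Function.comp]
  exact ⟨fun h i => h _, fun h i => by simpa using h (Fintype.equivFin ι i)⟩

lemma gen_pi {ι ι' : Type*} [Fintype ι] [Fintype ι'] (u : ι → Z →L[ℝ] ℝ) (s : ι → ℝ)
    (v : ι' → Z →L[ℝ] ℝ) (t : ι' → ℝ) :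
    IsGeneralizedPolyhedron {z : Z | (∀ i, u i z ≤ s i) ∧ (∀ j, v j z < t j)} := by
  refine ⟨{z | ∀ i, u i z ≤ s i}, poly_pi u s, Fintype.card ι',
    v ∘ (Fintype.equivFin ι').symm, t ∘ (Fintype.equivFin ι').symm, ?_⟩
  ext z
  simp only [mem_setOf_eq, Set.mem_inter_iff, Function.comp]
  constructor
  · rintro ⟨h1, h2⟩
    exact ⟨h1, fun j => h2 _⟩
  · rintro ⟨h1, h2⟩
    exact ⟨h1, fun j => by simpa using h2 (Fintype.equivFin ι' j)⟩

theorem gen_elim : ∀ (d : ℕ) (ι ι' : Type) [Fintype ι] [Fintype ι']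
    (A : ι → Fin d → ℝ) (u : ι → Z →L[ℝ] ℝ) (s : ι → ℝ)
    (C : ι' → Fin d → ℝ) (v : ι' → Z →L[ℝ] ℝ) (t : ι' → ℝ),
    IsGeneralizedPolyhedron {z : Z | ∃ l : Fin d → ℝ,
      (∀ i, (∑ j, A i j * l j) + u i z ≤ s i) ∧ (∀ i', (∑ j, C i' j * l j) + v i' z < t i')} := by
  intro d
  induction d with
  | zero =>
    intro ι ι' _ _ A u s C v t
    have : {z : Z | ∃ l : Fin 0 → ℝ,
        (∀ i, (∑ j, A i j * l j) + u i z ≤ s i) ∧ (∀ i', (∑ j, C i' j * l j) + v i' z < t i')}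
        = {z : Z | (∀ i, u i z ≤ s i) ∧ (∀ i', v i' z < t i')} := by
      ext z
      simp
    rw [this]
    exact gen_pi u s v t
  | succ d ih =>
    intro ι ι' _ _ A u s C v t
    classical
    set a : ι → ℝ := fun i => A i (Fin.last d) with ha
    set c : ι' → ℝ := fun i' => C i' (Fin.last d) with hc
    -- new nonstrict system over κ
    have key : {z : Z | ∃ l : Fin (d+1) → ℝ,
        (∀ i, (∑ j, A i j * l j) + u i z ≤ s i) ∧ (∀ i', (∑ j, C i' j * l j) + v i' z < t i')}
        = {z : Z | ∃ μ : Fin d → ℝ,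
          (∀ p : ι ⊕ ι × ι,
            (∑ j, (Sum.elim (fun i (j : Fin d) => if a i = 0 then A i j.castSucc else 0)
              (fun q (j : Fin d) => if 0 < a q.1 ∧ a q.2 < 0 then
                a q.1 * A q.2 j.castSucc - a q.2 * A q.1 j.castSucc else 0) p) j * μ j)
            + (Sum.elim (fun i => if a i = 0 then u i else 0)
              (fun q => if 0 < a q.1 ∧ a q.2 < 0 then a q.1 • u q.2 - a q.2 • u q.1 else 0) p) z
            ≤ Sum.elim (fun i => if a i = 0 then s i else 0)
              (fun q => if 0 < a q.1 ∧ a q.2 < 0 then a q.1 * s q.2 - a q.2 * s q.1 else 0) p) ∧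
          (∀ p : ι' ⊕ ((ι × ι') ⊕ (ι' × ι) ⊕ (ι' × ι')),
            (∑ j, (Sum.elim (fun i' (j : Fin d) => if c i' = 0 then C i' j.castSucc else 0)
              (Sum.elim (fun q (j : Fin d) => if 0 < a q.1 ∧ c q.2 < 0 then
                  a q.1 * C q.2 j.castSucc - c q.2 * A q.1 j.castSucc else 0)
               (Sum.elim (fun q (j : Fin d) => if 0 < c q.1 ∧ a q.2 < 0 then
                  c q.1 * A q.2 j.castSucc - a q.2 * C q.1 j.castSucc else 0)
                (fun q (j : Fin d) => if 0 < c q.1 ∧ c q.2 < 0 then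
                  c q.1 * C q.2 j.castSucc - c q.2 * C q.1 j.castSucc else 0))) p) j * μ j)
            + (Sum.elim (fun i' => if c i' = 0 then v i' else 0)
              (Sum.elim (fun q => if 0 < a q.1 ∧ c q.2 < 0 then a q.1 • v q.2 - c q.2 • u q.1 else 0)
               (Sum.elim (fun q => if 0 < c q.1 ∧ a q.2 < 0 then c q.1 • u q.2 - a q.2 • v q.1 else 0)
                (fun q => if 0 < c q.1 ∧ c q.2 < 0 then c q.1 • v q.2 - c q.2 • v q.1 else 0))) p) z
            < Sum.elim (fun i' => if c i' = 0 then t i' else 1)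
              (Sum.elim (fun q => if 0 < a q.1 ∧ c q.2 < 0 then a q.1 * t q.2 - c q.2 * s q.1 else 1)
               (Sum.elim (fun q => if 0 < c q.1 ∧ a q.2 < 0 then c q.1 * s q.2 - a q.2 * t q.1 else 1)
                (fun q => if 0 < c q.1 ∧ c q.2 < 0 then c q.1 * t q.2 - c q.2 * t q.1 else 1))) p)} := by
      ext z
      simp only [mem_setOf_eq]
      constructor
      · rintro ⟨l, h1, h2⟩
        refine ⟨fun j => l j.castSucc, ?_, ?_⟩
        · have hb : ∀ i, a i * l (Fin.last d) ≤
              s i - u i z - ∑ j : Fin d, A i j.castSucc * l j.castSucc := by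
            intro i
            have := h1 i
            rw [Fin.sum_univ_castSucc] at this
            simp only [ha]
            linarith
          rintro (i | ⟨i1, i2⟩)
          · simp only [Sum.elim_inl]
            split_ifs with h
            · have := hb i
              rw [h] at this
              simp only [zero_mul] at this
              linarith
            · simp
          · simp only [Sum.elim_inr]
            split_ifs with h
            · rw [row_le_iff]
              exact fwd_le h.1 h.2 (hb i1) (hb i2)
            · simp
        · have hb : ∀ i, a i * l (Fin.last d) ≤
              s i - u i z - ∑ j : Fin d, A i j.castSucc * l j.castSucc := by
            intro i
            have := h1 i
            rw [Fin.sum_univ_castSucc] at this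
            simp only [ha]
            linarith
          have he : ∀ i', c i' * l (Fin.last d) <
              t i' - v i' z - ∑ j : Fin d, C i' j.castSucc * l j.castSucc := by
            intro i'
            have := h2 i'
            rw [Fin.sum_univ_castSucc] at this
            simp only [hc]
            linarith
          rintro (i' | (⟨i1, i2⟩ | ⟨i1, i2⟩ | ⟨i1, i2⟩))
          · simp only [Sum.elim_inl]
            split_ifs with h
            · have := he i'
              rw [h] at this
              simp only [zero_mul] at this
              linarith
            · simp
          · simp only [Sum.elim_inr, Sum.elim_inl]
            split_ifs with h
            · rw [row_lt_iff]
              exact fwd_lt h.1 h.2 (hb i1) (he i2)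
            · simp
          · simp only [Sum.elim_inr, Sum.elim_inl]
            split_ifs with h
            · rw [row_lt_iff]
              exact fwd_lt' h.1 h.2 (he i1) (hb i2)
            · simp
          · simp only [Sum.elim_inr]
            split_ifs with h
            · rw [row_lt_iff]
              exact fwd_lt'' h.1 h.2 (he i1) (he i2)
            · simp
      · rintro ⟨μ, hn1, hn2⟩
        set b : ι → ℝ := fun i => s i - u i z - ∑ j : Fin d, A i j.castSucc * μ j with hbdef
        set e : ι' → ℝ := fun i' => t i' - v i' z - ∑ j : Fin d, C i' j.castSucc * μ j with hedef
        obtain ⟨r, hr1, hr2⟩ := fm_exists a b c e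
          (fun i hi => by
            have := hn1 (Sum.inl i)
            simp only [Sum.elim_inl, if_pos hi] at this
            simp only [hbdef]
            linarith)
          (fun i' hi' => by
            have := hn2 (Sum.inl i')
            simp only [Sum.elim_inl, if_pos hi'] at this
            simp only [hedef]
            linarith)
          (fun i1 i2 h1 h2 => by
            have := hn1 (Sum.inr (i1, i2))
            simp only [Sum.elim_inr, if_pos (And.intro h1 h2)] at this
            exact (row_le_iff _ _ _ _ _ _ _ _ _ _).mp this)
          (fun i1 i2 h1 h2 => by
            have := hn2 (Sum.inr (Sum.inl (i1, i2)))
            simp only [Sum.elim_inr, Sum.elim_inl, if_pos (And.intro h1 h2)] at this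
            exact (row_lt_iff _ _ _ _ _ _ _ _ _ _).mp this)
          (fun i1 i2 h1 h2 => by
            have := hn2 (Sum.inr (Sum.inr (Sum.inl (i1, i2))))
            simp only [Sum.elim_inr, Sum.elim_inl, if_pos (And.intro h1 h2)] at this
            exact (row_lt_iff _ _ _ _ _ _ _ _ _ _).mp this)
          (fun i1 i2 h1 h2 => by
            have := hn2 (Sum.inr (Sum.inr (Sum.inr (i1, i2))))
            simp only [Sum.elim_inr, if_pos (And.intro h1 h2)] at this
            exact (row_lt_iff _ _ _ _ _ _ _ _ _ _).mp this)
        refine ⟨Fin.snoc μ r, fun i => ?_, fun i' => ?_⟩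
        · rw [Fin.sum_univ_castSucc]
          simp only [Fin.snoc_castSucc, Fin.snoc_last]
          have := hr1 i
          simp only [hbdef] at this
          linarith
        · rw [Fin.sum_univ_castSucc]
          simp only [Fin.snoc_castSucc, Fin.snoc_last]
          have := hr2 i'
          simp only [hedef] at this
          linarith
    rw [key]
    exact ih _ _ _ _ _ _ _ _

theorem poly_elim : ∀ (d : ℕ) (ι : Type) [Fintype ι]
    (A : ι → Fin d → ℝ) (u : ι → Z →L[ℝ] ℝ) (s : ι → ℝ),
    IsPolyhedron {z : Z | ∃ l : Fin d → ℝ, ∀ i, (∑ j, A i j * l j) + u i z ≤ s i} := by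
  intro d
  induction d with
  | zero =>
    intro ι _ A u s
    have : {z : Z | ∃ l : Fin 0 → ℝ, ∀ i, (∑ j, A i j * l j) + u i z ≤ s i}
        = {z : Z | ∀ i, u i z ≤ s i} := by
      ext z
      simp
    rw [this]
    exact poly_pi u s
  | succ d ih =>
    intro ι _ A u s
    classical
    set a : ι → ℝ := fun i => A i (Fin.last d) with ha
    have key : {z : Z | ∃ l : Fin (d+1) → ℝ, ∀ i, (∑ j, A i j * l j) + u i z ≤ s i}
        = {z : Z | ∃ μ : Fin d → ℝ,
          ∀ p : ι ⊕ ι × ι,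
            (∑ j, (Sum.elim (fun i (j : Fin d) => if a i = 0 then A i j.castSucc else 0)
              (fun q (j : Fin d) => if 0 < a q.1 ∧ a q.2 < 0 then
                a q.1 * A q.2 j.castSucc - a q.2 * A q.1 j.castSucc else 0) p) j * μ j)
            + (Sum.elim (fun i => if a i = 0 then u i else 0)
              (fun q => if 0 < a q.1 ∧ a q.2 < 0 then a q.1 • u q.2 - a q.2 • u q.1 else 0) p) z
            ≤ Sum.elim (fun i => if a i = 0 then s i else 0)
              (fun q => if 0 < a q.1 ∧ a q.2 < 0 then a q.1 * s q.2 - a q.2 * s q.1 else 0) p} := by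
      ext z
      simp only [mem_setOf_eq]
      constructor
      · rintro ⟨l, h1⟩
        have hb : ∀ i, a i * l (Fin.last d) ≤
            s i - u i z - ∑ j : Fin d, A i j.castSucc * l j.castSucc := by
          intro i
          have := h1 i
          rw [Fin.sum_univ_castSucc] at this
          simp only [ha]
          linarith
        refine ⟨fun j => l j.castSucc, ?_⟩
        rintro (i | ⟨i1, i2⟩)
        · simp only [Sum.elim_inl]
          split_ifs with h
          · have := hb i
            rw [h] at this
            simp only [zero_mul] at this
            linarith
          · simp
        · simp only [Sum.elim_inr]
          split_ifs with h
          · rw [row_le_iff]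
            exact fwd_le h.1 h.2 (hb i1) (hb i2)
          · simp
      · rintro ⟨μ, hn1⟩
        set b : ι → ℝ := fun i => s i - u i z - ∑ j : Fin d, A i j.castSucc * μ j with hbdef
        obtain ⟨r, hr1, -⟩ := fm_exists (ι' := PEmpty.{1}) a b (fun p => p.elim) (fun p => p.elim)
          (fun i hi => by
            have := hn1 (Sum.inl i)
            simp only [Sum.elim_inl, if_pos hi] at this
            simp only [hbdef]
            linarith)
          (fun i' => i'.elim)
          (fun i1 i2 h1 h2 => by
            have := hn1 (Sum.inr (i1, i2))
            simp only [Sum.elim_inr, if_pos (And.intro h1 h2)] at this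
            exact (row_le_iff _ _ _ _ _ _ _ _ _ _).mp this)
          (fun i1 i2 => i2.elim) (fun i1 => i1.elim) (fun i1 => i1.elim)
        refine ⟨Fin.snoc μ r, fun i => ?_⟩
        rw [Fin.sum_univ_castSucc]
        simp only [Fin.snoc_castSucc, Fin.snoc_last]
        have := hr1 i
        simp only [hbdef] at this
        linarith
    rw [key]
    exact ih _ _ _ _

lemma exists_rep {ι : Type} [Fintype ι] (f : ι → Z →L[ℝ] ℝ) :
    ∃ (D : ℕ) (B : Fin D → ι → ℝ), ∀ (Φ : (ι → ℝ) → Prop),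
      ((∃ x : Z, Φ (fun p => f p x)) ↔ (∃ l : Fin D → ℝ, Φ (fun p => ∑ k, B k p * l k))) := by
  classical
  let φ : Z →ₗ[ℝ] (ι → ℝ) :=
    { toFun := fun x p => f p x
      map_add' := fun x y => by funext p; simp
      map_smul' := fun r x => by funext p; simp }
  let W := LinearMap.range φ
  let bW := Module.finBasis ℝ W
  refine ⟨Module.finrank ℝ W, fun k => ((bW k : ι → ℝ)), fun Φ => ?_⟩
  have hcomp : ∀ (c : Fin (Module.finrank ℝ W) → ℝ) (p : ι),
      ((↑(∑ k, c k • bW k) : ι → ℝ) p) = ∑ k, (bW k : ι → ℝ) p * c k := by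
    intro c p
    rw [Submodule.coe_sum, Finset.sum_apply]
    simp [mul_comm]
  constructor
  · rintro ⟨x, hx⟩
    set w : W := ⟨φ x, LinearMap.mem_range_self φ x⟩ with hwdef
    refine ⟨fun k => bW.repr w k, ?_⟩
    have : (fun p => ∑ k, (bW k : ι → ℝ) p * bW.repr w k) = fun p => f p x := by
      funext p
      rw [← hcomp (fun k => bW.repr w k) p]
      rw [bW.sum_repr w]
      rfl
    rw [this]
    exact hx
  · rintro ⟨l, hl⟩
    obtain ⟨x, hx⟩ := LinearMap.mem_range.mp (∑ k, l k • bW k : W).2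
    refine ⟨x, ?_⟩
    have : (fun p => f p x) = fun p => ∑ k, (bW k : ι → ℝ) p * l k := by
      funext p
      have : f p x = ((∑ k, l k • bW k : W) : ι → ℝ) p := by rw [← hx]; rfl
      rw [this, hcomp]
    rw [this]
    exact hl

end Aux

/-- Minkowski sums and intersections of (generalized) polyhedra are
(generalized) polyhedra. -/
theorem stmt_3 {Z : Type*} [NormedAddCommGroup Z] [NormedSpace ℝ Z] (P1 P2 : Set Z) :
    (IsPolyhedron P1 → IsPolyhedron P2 →
      IsPolyhedron (P1 + P2) ∧ IsPolyhedron (P1 ∩ P2)) ∧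
    (IsGeneralizedPolyhedron P1 → IsGeneralizedPolyhedron P2 →
      IsGeneralizedPolyhedron (P1 + P2) ∧ IsGeneralizedPolyhedron (P1 ∩ P2)) := by
  constructor
  · rintro ⟨n1, u1, s1, rfl⟩ ⟨n2, u2, s2, rfl⟩
    constructor
    · -- Minkowski sum of polyhedra
      obtain ⟨D, B, hB⟩ := exists_rep (Sum.elim u1 u2 : Fin n1 ⊕ Fin n2 → Z →L[ℝ] ℝ)
      have key : {z : Z | ∀ i, u1 i z ≤ s1 i} + {z : Z | ∀ i, u2 i z ≤ s2 i}
          = {z : Z | ∃ l : Fin D → ℝ, ∀ p : Fin n1 ⊕ Fin n2,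
              (∑ k, (Sum.elim (fun i (k : Fin D) => B k (Sum.inl i))
                (fun j (k : Fin D) => -(B k (Sum.inr j))) p) k * l k)
              + (Sum.elim (fun _ => (0 : Z →L[ℝ] ℝ)) u2 p) z ≤ Sum.elim s1 s2 p} := by
        ext z
        rw [Set.mem_add]
        have step1 : (∃ x ∈ {z : Z | ∀ i, u1 i z ≤ s1 i}, ∃ y ∈ {z : Z | ∀ i, u2 i z ≤ s2 i},
            x + y = z) ↔ ∃ x : Z,
              (fun g : Fin n1 ⊕ Fin n2 → ℝ =>
                (∀ i, g (Sum.inl i) ≤ s1 i) ∧ (∀ j, u2 j z - g (Sum.inr j) ≤ s2 j))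
              (fun p => Sum.elim u1 u2 p x) := by
          constructor
          · rintro ⟨x, hx, y, hy, rfl⟩
            refine ⟨x, fun i => hx i, fun j => ?_⟩
            have := hy j
            simp only [Sum.elim_inr]
            rw [map_add]
            linarith
          · rintro ⟨x, hx1, hx2⟩
            refine ⟨x, hx1, z - x, fun j => ?_, by abel⟩
            have := hx2 j
            simp only [Sum.elim_inr] at this
            rw [map_sub]
            linarith
        rw [mem_setOf_eq, step1, hB (fun g => (∀ i, g (Sum.inl i) ≤ s1 i) ∧
          (∀ j, u2 j z - g (Sum.inr j) ≤ s2 j))]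
        constructor
        · rintro ⟨l, h1, h2⟩
          refine ⟨l, ?_⟩
          rintro (i | j)
          · simpa using h1 i
          · have := h2 j
            simp only [Sum.elim_inr, neg_mul, Finset.sum_neg_distrib]
            linarith
        · rintro ⟨l, h⟩
          refine ⟨l, fun i => by simpa using h (Sum.inl i), fun j => ?_⟩
          have := h (Sum.inr j)
          simp only [Sum.elim_inr, neg_mul, Finset.sum_neg_distrib] at this
          linarith
      rw [key]
      exact poly_elim D _ _ _ _
    · -- intersection of polyhedra
      have key : {z : Z | ∀ i, u1 i z ≤ s1 i} ∩ {z : Z | ∀ i, u2 i z ≤ s2 i}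
          = {z : Z | ∀ p : Fin n1 ⊕ Fin n2, Sum.elim u1 u2 p z ≤ Sum.elim s1 s2 p} := by
        ext z
        simp [Sum.forall]
      rw [key]
      exact poly_pi _ _
  · rintro ⟨Q1, ⟨n1, u1, s1, rfl⟩, k1, v1, t1, rfl⟩ ⟨Q2, ⟨n2, u2, s2, rfl⟩, k2, v2, t2, rfl⟩
    constructor
    · -- Minkowski sum of generalized polyhedra
      obtain ⟨D, B, hB⟩ := exists_rep
        (Sum.elim (Sum.elim u1 u2) (Sum.elim v1 v2) :
          ((Fin n1 ⊕ Fin n2) ⊕ (Fin k1 ⊕ Fin k2)) → Z →L[ℝ] ℝ)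
      have key : ({z : Z | ∀ i, u1 i z ≤ s1 i} ∩ {z | ∀ j, v1 j z < t1 j})
          + ({z : Z | ∀ i, u2 i z ≤ s2 i} ∩ {z | ∀ j, v2 j z < t2 j})
          = {z : Z | ∃ l : Fin D → ℝ,
              (∀ p : Fin n1 ⊕ Fin n2,
                (∑ k, (Sum.elim (fun i (k : Fin D) => B k (Sum.inl (Sum.inl i)))
                  (fun i (k : Fin D) => -(B k (Sum.inl (Sum.inr i)))) p) k * l k)
                + (Sum.elim (fun _ => (0 : Z →L[ℝ] ℝ)) u2 p) z ≤ Sum.elim s1 s2 p) ∧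
              (∀ q : Fin k1 ⊕ Fin k2,
                (∑ k, (Sum.elim (fun j (k : Fin D) => B k (Sum.inr (Sum.inl j)))
                  (fun j (k : Fin D) => -(B k (Sum.inr (Sum.inr j)))) q) k * l k)
                + (Sum.elim (fun _ => (0 : Z →L[ℝ] ℝ)) v2 q) z < Sum.elim t1 t2 q)} := by
        ext z
        rw [Set.mem_add]
        have step1 : (∃ x ∈ {z : Z | ∀ i, u1 i z ≤ s1 i} ∩ {z | ∀ j, v1 j z < t1 j},
            ∃ y ∈ {z : Z | ∀ i, u2 i z ≤ s2 i} ∩ {z | ∀ j, v2 j z < t2 j}, x + y = z)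
            ↔ ∃ x : Z,
              (fun g : ((Fin n1 ⊕ Fin n2) ⊕ (Fin k1 ⊕ Fin k2)) → ℝ =>
                (∀ i, g (Sum.inl (Sum.inl i)) ≤ s1 i) ∧
                (∀ i, u2 i z - g (Sum.inl (Sum.inr i)) ≤ s2 i) ∧
                (∀ j, g (Sum.inr (Sum.inl j)) < t1 j) ∧
                (∀ j, v2 j z - g (Sum.inr (Sum.inr j)) < t2 j))
              (fun p => Sum.elim (Sum.elim u1 u2) (Sum.elim v1 v2) p x) := by
          constructor
          · rintro ⟨x, ⟨hx1, hx2⟩, y, ⟨hy1, hy2⟩, rfl⟩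
            refine ⟨x, fun i => hx1 i, fun i => ?_, fun j => hx2 j, fun j => ?_⟩
            · have := hy1 i
              simp only [Sum.elim_inl, Sum.elim_inr]
              rw [map_add]
              linarith
            · have := hy2 j
              simp only [Sum.elim_inr]
              rw [map_add]
              linarith
          · rintro ⟨x, h1, h2, h3, h4⟩
            refine ⟨x, ⟨fun i => h1 i, fun j => h3 j⟩, ⟨z - x, ⟨fun i => ?_, fun j => ?_⟩,
              by abel⟩⟩
            · have := h2 i
              simp only [Sum.elim_inl, Sum.elim_inr] at this
              rw [map_sub]
              linarith
            · have := h4 j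
              simp only [Sum.elim_inr] at this
              rw [map_sub]
              linarith
        rw [mem_setOf_eq, step1, hB (fun g => (∀ i, g (Sum.inl (Sum.inl i)) ≤ s1 i) ∧
          (∀ i, u2 i z - g (Sum.inl (Sum.inr i)) ≤ s2 i) ∧
          (∀ j, g (Sum.inr (Sum.inl j)) < t1 j) ∧
          (∀ j, v2 j z - g (Sum.inr (Sum.inr j)) < t2 j))]
        constructor
        · rintro ⟨l, h1, h2, h3, h4⟩
          refine ⟨l, ?_, ?_⟩
          · rintro (i | i)
            · simpa using h1 i
            · have := h2 i
              simp only [Sum.elim_inr, Sum.elim_inl, neg_mul, Finset.sum_neg_distrib]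
              linarith
          · rintro (j | j)
            · simpa using h3 j
            · have := h4 j
              simp only [Sum.elim_inr, neg_mul, Finset.sum_neg_distrib]
              linarith
        · rintro ⟨l, h1, h2⟩
          refine ⟨l, fun i => by simpa using h1 (Sum.inl i), fun i => ?_,
            fun j => by simpa using h2 (Sum.inl j), fun j => ?_⟩
          · have := h1 (Sum.inr i)
            simp only [Sum.elim_inr, Sum.elim_inl, neg_mul, Finset.sum_neg_distrib] at this
            linarith
          · have := h2 (Sum.inr j)
            simp only [Sum.elim_inr, neg_mul, Finset.sum_neg_distrib] at this
            linarith
      rw [key]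
      exact gen_elim D _ _ _ _ _ _ _ _
    · -- intersection of generalized polyhedra
      have key : ({z : Z | ∀ i, u1 i z ≤ s1 i} ∩ {z | ∀ j, v1 j z < t1 j})
          ∩ ({z : Z | ∀ i, u2 i z ≤ s2 i} ∩ {z | ∀ j, v2 j z < t2 j})
          = {z : Z | (∀ p : Fin n1 ⊕ Fin n2, Sum.elim u1 u2 p z ≤ Sum.elim s1 s2 p) ∧
              (∀ q : Fin k1 ⊕ Fin k2, Sum.elim v1 v2 q z < Sum.elim t1 t2 q)} := by
        ext z
        simp only [Set.mem_inter_iff, mem_setOf_eq, Sum.forall, Sum.elim_inl, Sum.elim_inr]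
        tauto
      rw [key]
      exact gen_pi _ _ _ _
end

section
/- Let Z be a real normed space, P a polyhedron in Z, and F_1, …, F_ν (ν ≥ 1) exposed faces of P. If C is a convex subset of Z with C ⊆ ⋃_{j=1}^ν F_j, then there exists j_0 ∈ {1,…,ν} such that C ⊆ F_{j_0}. -/
open Set

/-- `F` is an exposed face of `P`: the set of maximizers over `P` of some continuous
linear functional. -/
def IsExposedFace {Z : Type*} [NormedAddCommGroup Z] [NormedSpace ℝ Z]
    (P F : Set Z) : Prop :=
  ∃ l : Z →L[ℝ] ℝ, F = {u ∈ P | ∀ v ∈ P, l v ≤ l u}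

/-- A convex set covered by finitely many exposed faces of a polyhedron is
contained in one of them. -/
theorem stmt_5 {Z : Type*} [NormedAddCommGroup Z] [NormedSpace ℝ Z]
    (P : Set Z) (hP : IsPolyhedron P)
    {ν : ℕ} (hν : 0 < ν) (F : Fin ν → Set Z) (hF : ∀ j, IsExposedFace P (F j))
    (C : Set Z) (hC : Convex ℝ C) (hsub : C ⊆ ⋃ j, F j) :
    ∃ j0 : Fin ν, C ⊆ F j0 := by
  by_contra h
  push_neg at h
  choose x hxC hxF using fun j => Set.not_subset.mp (h j)
  have hν' : (0:ℝ) < ν := by exact_mod_cast hν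
  set w : Fin ν → ℝ := fun _ => (ν : ℝ)⁻¹ with hw
  have hwpos : ∀ j, 0 < w j := fun j => inv_pos.mpr hν'
  have hsum : ∑ j, w j = 1 := by
    simp [hw, Finset.sum_const, Finset.card_univ]
    field_simp
  set z := ∑ j, w j • x j with hz
  have hzC : z ∈ C := hC.sum_mem (fun j _ => (hwpos j).le) hsum (fun j _ => hxC j)
  obtain ⟨k, hk⟩ := Set.mem_iUnion.mp (hsub hzC)
  obtain ⟨l, hl⟩ := hF k
  rw [hl] at hk
  have hP' : ∀ j, x j ∈ P := by
    intro j
    obtain ⟨i, hi⟩ := Set.mem_iUnion.mp (hsub (hxC j))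
    obtain ⟨li, hli⟩ := hF i
    rw [hli] at hi
    exact hi.1
  have hle : ∀ j, l (x j) ≤ l z := fun j => hk.2 _ (hP' j)
  have hlz : l z = ∑ j, w j * l (x j) := by
    simp [hz, map_sum, map_smul, smul_eq_mul]
  have heq : l (x k) = l z := by
    by_contra hne
    have hlt : l (x k) < l z := lt_of_le_of_ne (hle k) hne
    have hstrict : ∑ j, w j * l (x j) < ∑ j, w j * l z :=
      Finset.sum_lt_sum
        (fun j _ => mul_le_mul_of_nonneg_left (hle j) (hwpos j).le)
        ⟨k, Finset.mem_univ k, mul_lt_mul_of_pos_left hlt (hwpos k)⟩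
    rw [← hlz, ← Finset.sum_mul, hsum, one_mul] at hstrict
    exact lt_irrefl _ hstrict
  exact hxF k (by rw [hl]; exact ⟨hP' k, fun v hv => (hk.2 v hv).trans heq.ge⟩)
end

section
/- Let P_1, …, P_m be polyhedra in a real normed space Z such that int(P_i) ≠ ∅ for every i = 1,…,m. Then there exist finitely many polyhedra Q_1, …, Q_ν in Z with int(Q_j) ≠ ∅ for every j, such that ⋃_{i=1}^m P_i = ⋃_{j=1}^ν Q_j and Q_{j'} ∩ int(Q_j) = ∅ for all j, j' ∈ {1,…,ν} with j ≠ j'. -/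
open Set

section Aux

open Filter Topology

variable {Z : Type*} [NormedAddCommGroup Z] [NormedSpace ℝ Z]

/-- If a set is contained in the halfspace `{f ≤ s}` with `f ≠ 0`, then interior points
satisfy the strict inequality. -/
lemma aux_interior_lt {f : Z →L[ℝ] ℝ} (hf : f ≠ 0) {s : ℝ} {A : Set Z}
    (hA : A ⊆ {z | f z ≤ s}) {x : Z} (hx : x ∈ interior A) : f x < s := by
  have hle : f x ≤ s := hA (interior_subset hx)
  rcases lt_or_eq_of_le hle with h | h
  · exact h
  · exfalso
    obtain ⟨y, hy⟩ : ∃ y, f y ≠ 0 := by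
      by_contra hc
      push_neg at hc
      exact hf (ContinuousLinearMap.ext fun y => by simp [hc y])
    set x0 := (f y)⁻¹ • y with hx0
    have hfx0 : f x0 = 1 := by
      simp [hx0, inv_mul_cancel₀ hy]
    have hev : ∀ᶠ t : ℝ in 𝓝 (0 : ℝ), x + t • x0 ∈ A := by
      have hc : Continuous fun t : ℝ => x + t • x0 :=
        continuous_const.add (continuous_id.smul continuous_const)
      have hca : Filter.Tendsto (fun t : ℝ => x + t • x0) (𝓝 0) (𝓝 x) := by
        simpa using hc.tendsto 0
      have hmem : ∀ᶠ y in 𝓝 x, y ∈ A := mem_interior_iff_mem_nhds.1 hx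
      exact hca.eventually hmem
    have hpos : ∀ᶠ t : ℝ in 𝓝[>] (0 : ℝ), x + t • x0 ∈ A :=
      hev.filter_mono nhdsWithin_le_nhds
    obtain ⟨t, htA, htpos⟩ := (hpos.and eventually_mem_nhdsWithin).exists
    have h1 : f (x + t • x0) ≤ s := hA htA
    have h2 : f (x + t • x0) = s + t := by
      rw [map_add, map_smul, smul_eq_mul, hfx0, h, mul_one]
    have : (0 : ℝ) < t := htpos
    linarith

lemma aux_interior_gt {f : Z →L[ℝ] ℝ} (hf : f ≠ 0) {s : ℝ} {A : Set Z}
    (hA : A ⊆ {z | s ≤ f z}) {x : Z} (hx : x ∈ interior A) : s < f x := by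
  have hA' : A ⊆ {z | (-f) z ≤ -s} := fun z hz => by
    simp only [ContinuousLinearMap.neg_apply, mem_setOf_eq, neg_le_neg_iff]
    exact hA hz
  have := aux_interior_lt (neg_ne_zero.2 hf) hA' hx
  simp only [ContinuousLinearMap.neg_apply, neg_lt_neg_iff] at this
  exact this

/-- A set defined by finitely many linear inequalities over any finite index type
is a polyhedron. -/
lemma aux_isPolyhedron_fintype {K : Type*} [Fintype K]
    (u : K → Z →L[ℝ] ℝ) (s : K → ℝ) :
    ∃ (n : ℕ) (u' : Fin n → Z →L[ℝ] ℝ) (s' : Fin n → ℝ),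
      {z : Z | ∀ k, u k z ≤ s k} = {z | ∀ i, u' i z ≤ s' i} := by
  let e := Fintype.equivFin K
  refine ⟨Fintype.card K, fun j => u (e.symm j), fun j => s (e.symm j), ?_⟩
  ext z
  simp only [mem_setOf_eq]
  exact ⟨fun h j => h (e.symm j), fun h k => by simpa using h (e k)⟩

/-- A normalized representation of a nonempty polyhedron-like set: every zero functional
comes with right-hand side `1`. -/
lemma aux_rep_norm {n : ℕ} (u : Fin n → Z →L[ℝ] ℝ) (s : Fin n → ℝ)
    (hne : {z : Z | ∀ i, u i z ≤ s i}.Nonempty) :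
    ∃ (s' : Fin n → ℝ), (∀ i, u i = 0 → s' i = 1) ∧
      {z : Z | ∀ i, u i z ≤ s i} = {z | ∀ i, u i z ≤ s' i} := by
  classical
  obtain ⟨p, hp⟩ := hne
  refine ⟨fun i => if u i = 0 then 1 else s i, fun i h => by simp [h], ?_⟩
  ext z
  simp only [mem_setOf_eq]
  constructor
  · intro h i
    by_cases h0 : u i = 0
    · simp [h0]
    · simpa [h0] using h i
  · intro h i
    by_cases h0 : u i = 0
    · have hs : (0 : ℝ) ≤ s i := by simpa [h0] using hp i
      simp [h0, hs]
    · simpa [h0] using h i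

/-- In a nonempty open set one can avoid finitely many hyperplanes (where zero functionals
are paired with right-hand side `1`, so they define the empty set). -/
lemma aux_avoid {K : Type*} [Fintype K] (U : K → Z →L[ℝ] ℝ) (S : K → ℝ)
    (hG : ∀ k, U k = 0 → S k = 1) {V : Set Z} (hV : IsOpen V) (hne : V.Nonempty) :
    ∃ w ∈ V, ∀ k, U k w ≠ S k := by
  classical
  have hint : ∀ k, interior {z : Z | U k z = S k} = ∅ := by
    intro k
    by_cases hU : U k = 0
    · have hS := hG k hU
      have : {z : Z | U k z = S k} = ∅ := by
        ext z; simp [hU, hS]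
      simp [this]
    · rw [eq_empty_iff_forall_notMem]
      intro x hx
      have h1 : U k x < S k := aux_interior_lt hU (fun z hz => le_of_eq hz) hx
      have h2 : x ∈ {z : Z | U k z = S k} := interior_subset hx
      exact absurd h2 (ne_of_lt h1)
  have hcl : ∀ k, IsClosed {z : Z | U k z = S k} := fun k =>
    isClosed_eq (U k).continuous continuous_const
  have hmain : ∀ F : Finset K, interior (⋃ k ∈ F, {z : Z | U k z = S k}) = ∅ := by
    intro F
    induction F using Finset.induction_on with
    | empty => simp
    | insert _ _ hnm ih =>
        rw [Finset.set_biUnion_insert,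
          interior_union_isClosed_of_interior_empty (hcl _) ih, hint]
  by_contra hc
  push_neg at hc
  have hsub : V ⊆ ⋃ k ∈ (Finset.univ : Finset K), {z : Z | U k z = S k} := by
    intro w hw
    obtain ⟨k, hk⟩ := hc w hw
    exact mem_biUnion (Finset.mem_univ k) hk
  have hVi : V ⊆ interior (⋃ k ∈ (Finset.univ : Finset K), {z : Z | U k z = S k}) :=
    interior_maximal hsub hV
  rw [hmain] at hVi
  obtain ⟨x, hx⟩ := hne
  exact hVi hx

end Aux

open Filter Topology

/-- A finite union of polyhedra with nonempty interiors can be rewritten as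
a finite union of polyhedra with nonempty interiors that do not overlap (each one misses
the interiors of the others). -/
theorem stmt_6 {Z : Type*} [NormedAddCommGroup Z] [NormedSpace ℝ Z]
    {m : ℕ} (P : Fin m → Set Z)
    (hpoly : ∀ i, IsPolyhedron (P i))
    (hint : ∀ i, (interior (P i)).Nonempty) :
    ∃ (ν : ℕ) (Q : Fin ν → Set Z),
      (∀ j, IsPolyhedron (Q j)) ∧
      (∀ j, (interior (Q j)).Nonempty) ∧
      (⋃ i, P i) = (⋃ j, Q j) ∧
      ∀ j j', j ≠ j' → Q j' ∩ interior (Q j) = ∅ := by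
  classical
  -- Step 1: normalized representations
  have hrep : ∀ i, ∃ (n : ℕ) (u : Fin n → Z →L[ℝ] ℝ) (s : Fin n → ℝ),
      (∀ j, u j = 0 → s j = 1) ∧ P i = {z | ∀ j, u j z ≤ s j} := by
    intro i
    obtain ⟨n, u, s, hP⟩ := hpoly i
    have hne : {z : Z | ∀ j, u j z ≤ s j}.Nonempty := by
      rw [← hP]; exact (hint i).mono interior_subset
    obtain ⟨s', hs', heq⟩ := aux_rep_norm u s hne
    exact ⟨n, u, s', hs', hP.trans heq⟩
  choose n u s hgood hPeq using hrep
  -- Global index of all constraints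
  let K := (i : Fin m) × Fin (n i)
  let U : K → Z →L[ℝ] ℝ := fun k => u k.1 k.2
  let S : K → ℝ := fun k => s k.1 k.2
  have hG : ∀ k : K, U k = 0 → S k = 1 := fun k => hgood k.1 k.2
  have hPfor : ∀ i, P i = {z | ∀ j : Fin (n i), U ⟨i, j⟩ z ≤ S ⟨i, j⟩} := fun i => hPeq i
  -- Cells and open cells
  let Q : (K → Bool) → Set Z := fun ε =>
    {z | ∀ k, if ε k then U k z ≤ S k else S k ≤ U k z}
  let R : (K → Bool) → Set Z := fun ε =>
    {z | ∀ k, if ε k then U k z < S k else S k < U k z}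
  have hQpoly : ∀ ε, IsPolyhedron (Q ε) := by
    intro ε
    have heq : Q ε = {z : Z | ∀ k, (if ε k then U k else -U k) z ≤ (if ε k then S k else -S k)} := by
      ext z
      simp only [Q, mem_setOf_eq]
      refine forall_congr' fun k => ?_
      by_cases h : ε k <;> simp [h, neg_le]
    obtain ⟨n', u', s', h⟩ := aux_isPolyhedron_fintype
      (fun k => if ε k then U k else -U k) (fun k => if ε k then S k else -S k)
    exact ⟨n', u', s', heq.trans h⟩
  have hRopen : ∀ ε, IsOpen (R ε) := by
    intro ε
    have : R ε = ⋂ k, {z : Z | if ε k then U k z < S k else S k < U k z} := by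
      ext z; simp [R, mem_iInter]
    rw [this]
    refine isOpen_iInter_of_finite fun k => ?_
    by_cases h : ε k <;> simp only [h, if_true, if_false]
    · exact isOpen_lt (U k).continuous continuous_const
    · exact isOpen_lt continuous_const (U k).continuous
  have hRQ : ∀ ε, R ε ⊆ Q ε := by
    intro ε z hz k
    have := hz k
    by_cases h : ε k = true <;> simp [h] at this ⊢ <;> linarith
  have hRint : ∀ ε, R ε ⊆ interior (Q ε) := fun ε => interior_maximal (hRQ ε) (hRopen ε)
  have hQle : ∀ ε x, x ∈ Q ε → ∀ k : K, ε k = true → U k x ≤ S k := by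
    intro ε x hx k hk
    have := hx k
    simpa [hk] using this
  have hQge : ∀ ε x, x ∈ Q ε → ∀ k : K, ε k = false → S k ≤ U k x := by
    intro ε x hx k hk
    have := hx k
    simpa [hk] using this
  -- strict inequalities on interiors
  have hIntLt : ∀ ε (k : K), U k ≠ 0 → ε k = true →
      ∀ x ∈ interior (Q ε), U k x < S k := by
    intro ε k hU hk x hx
    refine aux_interior_lt hU (fun z hz => ?_) hx
    have := hz k
    simpa [hk] using this
  have hIntGt : ∀ ε (k : K), U k ≠ 0 → ε k = false →
      ∀ x ∈ interior (Q ε), S k < U k x := by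
    intro ε k hU hk x hx
    refine aux_interior_gt hU (fun z hz => ?_) hx
    have := hz k
    simpa [hk] using this
  -- selection
  let Sel : (K → Bool) → Prop := fun ε => ∃ i, (interior (Q ε) ∩ P i).Nonempty
  let G := {ε : K → Bool // Sel ε}
  have : Finite G := Subtype.finite
  have : Fintype G := Fintype.ofFinite G
  let e : Fin (Fintype.card G) ≃ G := (Fintype.equivFin G).symm
  refine ⟨Fintype.card G, fun j => Q (e j).1, fun j => hQpoly _, ?_, ?_, ?_⟩
  · -- nonempty interiors
    intro j
    obtain ⟨i, x, hx, -⟩ := (e j).2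
    exact ⟨x, hx⟩
  · -- equality of unions
    apply Subset.antisymm
    · -- ⋃ P ⊆ ⋃ Q
      intro z hz
      rw [mem_iUnion] at hz
      obtain ⟨i, hz⟩ := hz
      -- avoid point
      obtain ⟨w, hw, hwne⟩ := aux_avoid U S hG isOpen_interior (hint i)
      let ε : K → Bool := fun k =>
        if U k z < S k then true else if S k < U k z then false else decide (U k w < S k)
      have hzQ : z ∈ Q ε := by
        intro k
        rcases lt_trichotomy (U k z) (S k) with h | h | h
        · simp [ε, h, le_of_lt h]
        · have h1 : ¬ U k z < S k := by rw [h]; exact lt_irrefl _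
          have h2 : ¬ S k < U k z := by rw [h]; exact lt_irrefl _
          by_cases hd : U k w < S k <;> simp [ε, h1, h2, hd, le_of_eq h, le_of_eq h.symm]
        · simp [ε, asymm h, h, le_of_lt h]
      have hconv : Convex ℝ (P i) := by
        rw [hPfor i]
        have : {z : Z | ∀ j : Fin (n i), U ⟨i, j⟩ z ≤ S ⟨i, j⟩}
            = ⋂ j : Fin (n i), {z : Z | U ⟨i, j⟩ z ≤ S ⟨i, j⟩} := by
          ext z; simp [mem_iInter]
        rw [this]
        exact convex_iInter fun j =>
          convex_halfSpace_le ⟨map_add _, map_smul _⟩ _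
      have hkEV : ∀ k : K, ∀ᶠ t : ℝ in 𝓝[>] (0 : ℝ),
          (if ε k then U k (t • w + (1 - t) • z) < S k
           else S k < U k (t • w + (1 - t) • z)) := by
        intro k
        have hφ : Continuous fun t : ℝ => t • w + (1 - t) • z :=
          (continuous_id.smul continuous_const).add
            ((continuous_const.sub continuous_id).smul continuous_const)
        have hcont : Continuous fun t : ℝ => U k (t • w + (1 - t) • z) :=
          (U k).continuous.comp hφ
        have htend : Tendsto (fun t : ℝ => U k (t • w + (1 - t) • z)) (𝓝[>] (0 : ℝ))
            (𝓝 (U k z)) := by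
          have h := (hcont.tendsto 0).mono_left
            (nhdsWithin_le_nhds : 𝓝[>] (0 : ℝ) ≤ 𝓝 0)
          simpa using h
        rcases lt_trichotomy (U k z) (S k) with h | h | h
        · have hεk : ε k = true := by simp [ε, h]
          simp only [hεk, if_true]
          exact htend.eventually_lt_const h
        · have h1 : ¬ U k z < S k := by rw [h]; exact lt_irrefl _
          have h2 : ¬ S k < U k z := by rw [h]; exact lt_irrefl _
          have key : ∀ t : ℝ, U k (t • w + (1 - t) • z) - S k = t * (U k w - S k) := by
            intro t
            rw [map_add, map_smul, map_smul, smul_eq_mul, smul_eq_mul, h]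
            ring
          rcases lt_or_gt_of_ne (hwne k) with hlt | hgt
          · have hεk : ε k = true := by simp [ε, h1, h2, hlt]
            simp only [hεk, if_true]
            filter_upwards [self_mem_nhdsWithin] with t ht
            have ht' : (0 : ℝ) < t := ht
            have := mul_neg_of_pos_of_neg ht' (sub_neg.2 hlt)
            have hk := key t
            linarith
          · have hεk : ε k = false := by simp [ε, h1, h2, not_lt.2 (le_of_lt hgt)]
            simp only [hεk, Bool.false_eq_true, if_false]
            filter_upwards [self_mem_nhdsWithin] with t ht
            have ht' : (0 : ℝ) < t := ht
            have := mul_pos ht' (sub_pos.2 hgt)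
            have hk := key t
            linarith
        · have hεk : ε k = false := by simp [ε, asymm h, h]
          simp only [hεk, Bool.false_eq_true, if_false]
          exact htend.eventually_const_lt h
      have hall : ∀ᶠ t : ℝ in 𝓝[>] (0 : ℝ), ∀ k : K,
          (if ε k then U k (t • w + (1 - t) • z) < S k
           else S k < U k (t • w + (1 - t) • z)) := eventually_all.2 hkEV
      have ht1 : ∀ᶠ t : ℝ in 𝓝[>] (0 : ℝ), t < 1 :=
        (eventually_lt_nhds (by norm_num : (0:ℝ) < 1)).filter_mono nhdsWithin_le_nhds
      obtain ⟨t, ⟨htR, htlt1⟩, htpos⟩ := ((hall.and ht1).and eventually_mem_nhdsWithin).exists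
      have htpos' : (0 : ℝ) < t := htpos
      set zt := t • w + (1 - t) • z with hzt
      have hztR : zt ∈ R ε := fun k => htR k
      have hztP : zt ∈ interior (P i) :=
        hconv.combo_interior_self_mem_interior hw hz htpos' (by linarith) (by ring)
      have hSel : Sel ε := ⟨i, zt, hRint ε hztR, interior_subset hztP⟩
      refine mem_iUnion.2 ⟨e.symm ⟨ε, hSel⟩, ?_⟩
      have : e (e.symm ⟨ε, hSel⟩) = ⟨ε, hSel⟩ := e.apply_symm_apply _
      rw [this]
      exact hzQ
    · -- ⋃ Q ⊆ ⋃ P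
      intro z hz
      rw [mem_iUnion] at hz
      obtain ⟨j, hz⟩ := hz
      obtain ⟨i, w, hw1, hw2⟩ := (e j).2
      set ε := (e j).1 with hε
      have hall : ∀ jj : Fin (n i), ε ⟨i, jj⟩ = true := by
        intro jj
        by_contra hf
        have hf' : ε ⟨i, jj⟩ = false := by
          cases h : ε ⟨i, jj⟩
          · rfl
          · exact absurd h hf
        set k : K := ⟨i, jj⟩
        by_cases hU : U k = 0
        · have hS := hG k hU
          have hwQ : w ∈ Q ε := interior_subset hw1
          have h1 : S k ≤ U k w := hQge ε w hwQ k hf'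
          rw [hU, hS] at h1
          simp at h1
          linarith
        · have h1 : S k < U k w := hIntGt ε k hU hf' w hw1
          have h2 : U k w ≤ S k := by
            rw [hPfor i] at hw2
            exact hw2 jj
          linarith
      have hQP : Q ε ⊆ P i := by
        intro x hx
        rw [hPfor i]
        intro jj
        exact hQle ε x hx ⟨i, jj⟩ (hall jj)
      exact mem_iUnion.2 ⟨i, hQP hz⟩
  · -- disjointness
    intro j j' hne
    set ε := (e j).1 with hεdef
    set ε' := (e j').1 with hε'def
    have hεε' : ε ≠ ε' := by
      intro h
      exact hne (e.injective (Subtype.ext h))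
    obtain ⟨k, hk⟩ := Function.ne_iff.1 hεε'
    rw [eq_empty_iff_forall_notMem]
    rintro x ⟨hx', hx⟩
    by_cases hU : U k = 0
    · have hS := hG k hU
      cases h : ε k with
      | false =>
          have hxQ : x ∈ Q ε := interior_subset hx
          have h1 : S k ≤ U k x := hQge ε x hxQ k h
          rw [hU, hS] at h1
          simp at h1
          linarith
      | true =>
          have h' : ε' k = false := by
            cases h2 : ε' k
            · rfl
            · rw [h, h2] at hk; exact absurd rfl hk
          have h1 : S k ≤ U k x := hQge ε' x hx' k h'
          rw [hU, hS] at h1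
          simp at h1
          linarith
    · cases h : ε k with
      | true =>
          have h' : ε' k = false := by
            cases h2 : ε' k
            · rfl
            · rw [h, h2] at hk; exact absurd rfl hk
          have h1 : U k x < S k := hIntLt ε k hU h x hx
          have h2 : S k ≤ U k x := hQge ε' x hx' k h'
          linarith
      | false =>
          have h' : ε' k = true := by
            cases h2 : ε' k
            · rw [h, h2] at hk; exact absurd rfl hk
            · rfl
          have h1 : S k < U k x := hIntGt ε k hU h x hx
          have h2 : U k x ≤ S k := hQle ε' x hx' k h'
          linarith
end

section
/- Let {(u_1^*, s_1), …, (u_n^*, s_n)} be a prime generator group of a polyhedron P in a real normed space Z, and suppose int(P) ≠ ∅. If j_1, j_2 ∈ {1,…,n} with j_1 ≠ j_2 and there exists x̄ ∈ P with ⟨u_{j_1}^*, x̄⟩ = s_{j_1} and ⟨u_{j_2}^*, x̄⟩ = s_{j_2}, then u_{j_1}^* and u_{j_2}^* are linearly independent. -/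
open Set

/-- For a prime generator group of a polyhedron with nonempty interior,
two generators active at a common point are linearly independent. -/
theorem stmt_7 {Z : Type*} [NormedAddCommGroup Z] [NormedSpace ℝ Z]
    {n : ℕ} (u : Fin n → Z →L[ℝ] ℝ) (s : Fin n → ℝ) (P : Set Z)
    (hP : P = {z | ∀ i, u i z ≤ s i})
    (hprime : ∀ j, P ≠ {z | ∀ i, i ≠ j → u i z ≤ s i})
    (hproper : P ≠ Set.univ)
    (hint : (interior P).Nonempty)
    (j1 j2 : Fin n) (hj : j1 ≠ j2) (xbar : Z) (hxbar : xbar ∈ P)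
    (h1 : u j1 xbar = s j1) (h2 : u j2 xbar = s j2) :
    LinearIndependent ℝ ![u j1, u j2] := by
  -- a generator active at xbar cannot be the zero functional
  have hne : ∀ j : Fin n, u j xbar = s j → u j ≠ 0 := by
    intro j hact hz
    apply hprime j
    rw [hP]
    ext z
    simp only [mem_setOf_eq]
    constructor
    · intro h i _; exact h i
    · intro h i
      by_cases hij : i = j
      · have hs : s j = 0 := by rw [← hact, hz]; simp
        rw [hij, hz, hs]; simp
      · exact h i hij
  rw [LinearIndependent.pair_iff]
  intro a b hab
  have habz : ∀ z, a * u j1 z + b * u j2 z = 0 := by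
    intro z
    have := congrArg (fun f : Z →L[ℝ] ℝ => f z) hab
    simpa using this
  by_cases hb : b = 0
  · subst hb
    refine ⟨?_, rfl⟩
    by_contra ha
    apply hne j1 h1
    ext z
    have := habz z
    simp only [zero_mul, add_zero, mul_eq_zero] at this
    rcases this with h | h
    · exact absurd h ha
    · simpa using h
  · exfalso
    set c : ℝ := -a / b with hcdef
    have hu2z : ∀ z, u j2 z = c * u j1 z := by
      intro z
      have hz := habz z
      rw [hcdef]
      field_simp
      linarith
    have hcne : c ≠ 0 := by
      intro hc0
      apply hne j2 h2
      ext z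
      have := hu2z z
      rw [hc0, zero_mul] at this
      simpa using this
    have hs2 : s j2 = c * s j1 := by
      rw [← h2, ← h1]; exact hu2z xbar
    rcases lt_trichotomy c 0 with hc0 | hc0 | hc0
    · -- negative factor: u j1 is constant on P, contradicting nonempty interior
      have hconst : ∀ z ∈ P, u j1 z = s j1 := by
        intro z hzP
        rw [hP] at hzP
        have hle : u j1 z ≤ s j1 := hzP j1
        have h2' : u j2 z ≤ s j2 := hzP j2
        rw [hu2z z, hs2] at h2'
        nlinarith
      obtain ⟨x0, hx0⟩ := hint
      rw [mem_interior_iff_mem_nhds, Metric.mem_nhds_iff] at hx0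
      obtain ⟨ε, hε, hball⟩ := hx0
      have hx0P : x0 ∈ P := hball (Metric.mem_ball_self hε)
      apply hne j1 h1
      ext v
      show u j1 v = 0
      by_cases hv : v = 0
      · simp [hv]
      · have hnv : (0:ℝ) < ‖v‖ := norm_pos_iff.mpr hv
        set t : ℝ := ε / (2 * ‖v‖) with htdef
        have ht : 0 < t := by positivity
        have hmem : x0 + t • v ∈ P := by
          apply hball
          simp only [Metric.mem_ball, dist_eq_norm, add_sub_cancel_left, norm_smul,
            Real.norm_eq_abs, abs_of_pos ht]
          have heq : t * ‖v‖ = ε / 2 := by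
            rw [htdef]; field_simp
          rw [heq]; linarith
        have hA := hconst _ hmem
        have hB := hconst x0 hx0P
        simp only [map_add, map_smul, smul_eq_mul] at hA
        rw [hB] at hA
        have hz : t * u j1 v = 0 := by linarith
        exact (mul_eq_zero.mp hz).resolve_left (ne_of_gt ht)
    · exact hcne hc0
    · -- positive factor: constraint j2 is redundant
      apply hprime j2
      rw [hP]
      ext z
      simp only [mem_setOf_eq]
      constructor
      · intro h i _; exact h i
      · intro h i
        by_cases hij : i = j2
        · rw [hij]
          have h1z : u j1 z ≤ s j1 := h j1 hj
          rw [hu2z z, hs2]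
          exact mul_le_mul_of_nonneg_left h1z hc0.le
        · exact h i hij
end

section
/- Let {(u_1^*, s_1), …, (u_n^*, s_n)} be a prime generator group of a polyhedron P in a real normed space Z, with P nonempty and P ≠ Z. For each j ∈ {1,…,n}, set F_j(P) = P ∩ {x ∈ Z : ⟨u_j^*, x⟩ = s_j} and F_j°(P) = {z ∈ Z : ⟨u_j^*, z⟩ = s_j and ⟨u_i^*, z⟩ < s_i for all i ∈ {1,…,n} with i ≠ j}. Then the following are equivalent: (i) int(P) ≠ ∅; (ii) F_j(P) = cl(F_j°(P)) for all j ∈ {1,…,n}; (iii) F_j°(P) ≠ ∅ for all j ∈ {1,…,n}; (iv) F_{j_0}°(P) ≠ ∅ for some j_0 ∈ {1,…,n}. -/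
open Set

/-- For a prime generator group of a nonempty proper polyhedron `P`,
the following are equivalent: (i) `int P ≠ ∅`; (ii) `F_j(P) = cl (F_j°(P))` for all `j`;
(iii) `F_j°(P) ≠ ∅` for all `j`; (iv) `F_{j₀}°(P) ≠ ∅` for some `j₀`. -/
theorem stmt_8 {Z : Type*} [NormedAddCommGroup Z] [NormedSpace ℝ Z]
    {n : ℕ} (u : Fin n → Z →L[ℝ] ℝ) (s : Fin n → ℝ) (P : Set Z)
    (hP : P = {z | ∀ i, u i z ≤ s i})
    (hprime : ∀ j, P ≠ {z | ∀ i, i ≠ j → u i z ≤ s i})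
    (hne : P.Nonempty) (hproper : P ≠ Set.univ)
    (F Fo : Fin n → Set Z)
    (hF : ∀ j, F j = P ∩ {x | u j x = s j})
    (hFo : ∀ j, Fo j = {z | u j z = s j ∧ ∀ i, i ≠ j → u i z < s i}) :
    ((interior P).Nonempty ↔ ∀ j, F j = closure (Fo j)) ∧
    ((interior P).Nonempty ↔ ∀ j, (Fo j).Nonempty) ∧
    ((interior P).Nonempty ↔ ∃ j0, (Fo j0).Nonempty) := by
  have hPsub : ∀ z ∈ P, ∀ i, u i z ≤ s i := by
    intro z hz; rw [hP] at hz; exact hz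
  -- n > 0
  have hn : 0 < n := by
    rcases Nat.eq_zero_or_pos n with h | h
    · exfalso; apply hproper; rw [hP]
      subst h
      ext z; simp
    · exact h
  -- all functionals nonzero; get normalized witnesses
  have hu : ∀ i, ∃ w : Z, u i w = 1 := by
    intro i
    have hne0 : u i ≠ 0 := by
      intro h0
      apply hprime i
      rw [hP]; ext z
      simp only [Set.mem_setOf_eq]
      constructor
      · intro hz k _; exact hz k
      · intro hz k
        by_cases hk : k = i
        · subst hk
          rw [h0]
          obtain ⟨p, hp⟩ := hne
          have hps := hPsub p hp k
          rw [h0] at hps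
          simpa using hps
        · exact hz k hk
    obtain ⟨w0, hw0⟩ : ∃ w0, u i w0 ≠ 0 := by
      by_contra h; push_neg at h
      exact hne0 (ContinuousLinearMap.ext fun w => by simp [h w])
    refine ⟨(u i w0)⁻¹ • w0, ?_⟩
    rw [map_smul, smul_eq_mul, inv_mul_cancel₀ hw0]
  -- primality: for each j, a point violating only constraint j
  have hq : ∀ j, ∃ q, (∀ i, i ≠ j → u i q ≤ s i) ∧ s j < u j q := by
    intro j
    have hsub : P ⊆ {z | ∀ i, i ≠ j → u i z ≤ s i} := fun z hz i _ => hPsub z hz i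
    have hnsub : ¬ {z : Z | ∀ i, i ≠ j → u i z ≤ s i} ⊆ P := by
      intro h; exact hprime j (Subset.antisymm hsub h)
    obtain ⟨q, hq1, hq2⟩ := not_subset.mp hnsub
    refine ⟨q, hq1, ?_⟩
    by_contra h; push_neg at h
    apply hq2; rw [hP]; intro i
    by_cases hi : i = j
    · subst hi; exact h
    · exact hq1 i hi
  -- strict set
  set S : Set Z := {z | ∀ i, u i z < s i} with hSdef
  have hSopen : IsOpen S := by
    have hS : S = ⋂ i, (u i) ⁻¹' Iio (s i) := by ext z; simp [hSdef]
    rw [hS]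
    exact isOpen_iInter_of_finite fun i => (isOpen_Iio).preimage (u i).continuous
  have hSP : S ⊆ P := by intro z hz; rw [hP]; exact fun i => le_of_lt (hz i)
  have hSint : S ⊆ interior P := interior_maximal hSP hSopen
  have hintS : interior P ⊆ S := by
    intro x hx i
    have hxP : x ∈ P := interior_subset hx
    have hle : u i x ≤ s i := hPsub x hxP i
    rcases lt_or_eq_of_le hle with h | h
    · exact h
    · exfalso
      obtain ⟨w, hw⟩ := hu i
      obtain ⟨ε, hε, hball⟩ := Metric.isOpen_iff.mp isOpen_interior x hx
      have hwne : w ≠ 0 := by intro h0; rw [h0] at hw; simp at hw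
      have hw0 : 0 < ‖w‖ := norm_pos_iff.mpr hwne
      set t := ε / (2 * ‖w‖) with ht
      have ht0 : 0 < t := by positivity
      have hmem : x + t • w ∈ interior P := by
        apply hball
        rw [Metric.mem_ball, dist_eq_norm]
        have h1 : x + t • w - x = t • w := by abel
        rw [h1, norm_smul, Real.norm_eq_abs, abs_of_pos ht0, ht]
        rw [div_mul_eq_mul_div, div_lt_iff₀ (by positivity)]
        nlinarith
      have hle2 := hPsub _ (interior_subset hmem) i
      rw [map_add, map_smul, smul_eq_mul, hw] at hle2
      rw [← h] at hle2
      linarith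
  have hiS : (interior P).Nonempty ↔ S.Nonempty :=
    ⟨fun ⟨x, hx⟩ => ⟨x, hintS hx⟩, fun ⟨x, hx⟩ => ⟨x, hSint hx⟩⟩
  -- (i) → (iii)
  have hSFo : S.Nonempty → ∀ j, (Fo j).Nonempty := by
    rintro ⟨p, hp⟩ j
    obtain ⟨q, hq1, hq2⟩ := hq j
    have hp' : ∀ i, u i p < s i := hp
    have hab : u j p < u j q := lt_trans (hp' j) hq2
    set t := (s j - u j p) / (u j q - u j p) with ht
    have ht0 : 0 < t := div_pos (by linarith [hp' j]) (by linarith)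
    have ht1 : t < 1 := (div_lt_one (by linarith)).mpr (by linarith)
    refine ⟨p + t • (q - p), ?_⟩
    rw [hFo j]
    constructor
    · simp only [map_add, map_smul, map_sub, smul_eq_mul]
      have hc : t * (u j q - u j p) = s j - u j p :=
        div_mul_cancel₀ _ (by linarith)
      linarith
    · intro i hij
      have h1 : u i p < s i := hp' i
      have h2 : u i q ≤ s i := hq1 i hij
      simp only [Set.mem_setOf_eq, map_add, map_smul, map_sub, smul_eq_mul]
      nlinarith
  -- Fo ⊆ F, F closed
  have hFoF : ∀ j, Fo j ⊆ F j := by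
    intro j z hz
    rw [hFo j] at hz; rw [hF j]
    obtain ⟨h1, h2⟩ := hz
    refine ⟨?_, h1⟩
    rw [hP]; intro i
    by_cases hi : i = j
    · subst hi; exact le_of_eq h1
    · exact (h2 i hi).le
  have hFclosed : ∀ j, IsClosed (F j) := by
    intro j; rw [hF j, hP]
    apply IsClosed.inter
    · have hP2 : {z : Z | ∀ i, u i z ≤ s i} = ⋂ i, (u i) ⁻¹' Iic (s i) := by ext; simp
      rw [hP2]
      exact isClosed_iInter fun i => (isClosed_Iic).preimage (u i).continuous
    · exact isClosed_eq (u j).continuous continuous_const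
  -- (iii) → (ii)
  have hFoclos : (∀ j, (Fo j).Nonempty) → ∀ j, F j = closure (Fo j) := by
    intro hFo' j
    apply Subset.antisymm
    · intro x hx
      obtain ⟨z, hz⟩ := hFo' j
      rw [hF j] at hx; obtain ⟨hxP, hxj⟩ := hx
      rw [hP] at hxP
      simp only [Set.mem_setOf_eq] at hxj
      rw [hFo j] at hz; obtain ⟨hz1, hz2⟩ := hz
      rw [Metric.mem_closure_iff]
      intro ε hε
      have hd0 : (0:ℝ) < ‖z - x‖ + 1 := by positivity
      set t := min 1 (ε / (‖z - x‖ + 1)) with htdef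
      have ht0 : 0 < t := lt_min one_pos (div_pos hε hd0)
      have ht1 : t ≤ 1 := min_le_left _ _
      refine ⟨x + t • (z - x), ?_, ?_⟩
      · rw [hFo j]
        constructor
        · simp only [Set.mem_setOf_eq, map_add, map_smul, map_sub, smul_eq_mul, hxj, hz1]
          ring
        · intro i hij
          have h1 : u i x ≤ s i := hxP i
          have h2 : u i z < s i := hz2 i hij
          simp only [Set.mem_setOf_eq, map_add, map_smul, map_sub, smul_eq_mul]
          nlinarith
      · rw [dist_eq_norm]
        have h1 : x - (x + t • (z - x)) = (-t) • (z - x) := by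
          rw [neg_smul]; abel
        rw [h1, norm_smul, Real.norm_eq_abs, abs_neg, abs_of_pos ht0]
        have h2 : t * ‖z - x‖ ≤ ε / (‖z - x‖ + 1) * ‖z - x‖ :=
          mul_le_mul_of_nonneg_right (min_le_right _ _) (norm_nonneg _)
        have h3 : ε / (‖z - x‖ + 1) * ‖z - x‖ < ε := by
          rw [div_mul_eq_mul_div, div_lt_iff₀ hd0]
          nlinarith [norm_nonneg (z - x)]
        linarith
    · exact closure_minimal (hFoF j) (hFclosed j)
  -- F j always nonempty
  have hFne : ∀ j, (F j).Nonempty := by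
    intro j
    obtain ⟨p, hp⟩ := hne
    obtain ⟨q, hq1, hq2⟩ := hq j
    have hpP := hPsub p hp
    have hab : u j p < u j q := lt_of_le_of_lt (hpP j) hq2
    set t := (s j - u j p) / (u j q - u j p) with ht
    have ht0 : 0 ≤ t := div_nonneg (by linarith [hpP j]) (by linarith)
    have ht1 : t < 1 := (div_lt_one (by linarith)).mpr (by linarith)
    refine ⟨p + t • (q - p), ?_⟩
    rw [hF j]
    have hjeq : u j (p + t • (q - p)) = s j := by
      simp only [map_add, map_smul, map_sub, smul_eq_mul]
      have hc : t * (u j q - u j p) = s j - u j p :=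
        div_mul_cancel₀ _ (by linarith)
      linarith
    refine ⟨?_, hjeq⟩
    rw [hP]; intro i
    by_cases hi : i = j
    · subst hi; exact le_of_eq hjeq
    · have h1 := hpP i
      have h2 := hq1 i hi
      simp only [Set.mem_setOf_eq, map_add, map_smul, map_sub, smul_eq_mul]
      nlinarith
  -- (iv) → (i)
  have hFoS : (∃ j0, (Fo j0).Nonempty) → S.Nonempty := by
    rintro ⟨j0, z, hz⟩
    rw [hFo j0] at hz; obtain ⟨hz1, hz2⟩ := hz
    obtain ⟨w, hw⟩ := hu j0
    set T := {z : Z | ∀ i, i ≠ j0 → u i z < s i} with hT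
    have hTopen : IsOpen T := by
      have hT2 : T = ⋂ i, {z : Z | i ≠ j0 → u i z < s i} := by ext; simp [hT]
      rw [hT2]
      apply isOpen_iInter_of_finite
      intro i
      by_cases hi : i = j0
      · have : {z : Z | i ≠ j0 → u i z < s i} = univ := by ext; simp [hi]
        rw [this]; exact isOpen_univ
      · have : {z : Z | i ≠ j0 → u i z < s i} = (u i) ⁻¹' Iio (s i) := by ext; simp [hi]
        rw [this]; exact (isOpen_Iio).preimage (u i).continuous
    have hzT : z ∈ T := hz2
    obtain ⟨ε, hε, hball⟩ := Metric.isOpen_iff.mp hTopen z hzT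
    set t := ε / (2 * (‖w‖ + 1)) with htdef
    have ht0 : 0 < t := by positivity
    refine ⟨z + t • (-w), ?_⟩
    have hmem : z + t • (-w) ∈ T := by
      apply hball
      rw [Metric.mem_ball, dist_eq_norm]
      have h1 : z + t • (-w) - z = t • (-w) := by abel
      rw [h1, norm_smul, Real.norm_eq_abs, abs_of_pos ht0, norm_neg, htdef]
      rw [div_mul_eq_mul_div, div_lt_iff₀ (by positivity)]
      nlinarith [norm_nonneg w]
    intro i
    by_cases hi : i = j0
    · subst hi
      have : u i (z + t • (-w)) = s i - t := by
        rw [map_add, map_smul, map_neg, hw, hz1, smul_eq_mul]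
        ring
      rw [this]; linarith
    · exact hmem i hi
  -- assemble
  have hj0 : Fin n := ⟨0, hn⟩
  have hii : (interior P).Nonempty ↔ ∀ j, (Fo j).Nonempty := by
    constructor
    · intro h; exact hSFo (hiS.mp h)
    · intro h; exact hiS.mpr (hFoS ⟨hj0, h hj0⟩)
  refine ⟨?_, hii, ?_⟩
  · constructor
    · intro h; exact hFoclos (hii.mp h)
    · intro h
      apply hii.mpr
      intro j
      have h1 := hFne j
      rw [h j] at h1
      exact closure_nonempty_iff.mp h1
  · constructor
    · intro h; exact ⟨hj0, hii.mp h hj0⟩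
    · intro h; exact hiS.mpr (hFoS h)
end

section
/- Let P_1 and P_2 be polyhedra in a real normed space Z with int(P_1) ∩ P_2 = ∅, and for i = 1,2 let {(u_{ij}^*, s_{ij}) : j = 1,…,n_i} be a prime generator group of P_i. Then for any (j_1, j_2) ∈ {1,…,n_1} × {1,…,n_2} and any x_0 ∈ F_{j_1}°(P_1) ∩ F_{j_2}°(P_2), we have ker(u_{1 j_1}^*) = ker(u_{2 j_2}^*), and there exists r > 0 such that F_{j_1}°(P_1) ∩ B(x_0, r) = F_{j_2}°(P_2) ∩ B(x_0, r) = (x_0 + ker(u_{1 j_1}^*)) ∩ B(x_0, r). -/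
open Set

/-- For two polyhedra `P₁, P₂` with `int P₁ ∩ P₂ = ∅`, given prime generator
groups of each and a point `x₀ ∈ F_{j₁}°(P₁) ∩ F_{j₂}°(P₂)`, the null spaces of the two
active functionals coincide and near `x₀` both relatively open faces agree with the
affine hyperplane `x₀ + ker u`. -/
theorem stmt_9 {Z : Type*} [NormedAddCommGroup Z] [NormedSpace ℝ Z]
    {n1 n2 : ℕ} (u1 : Fin n1 → Z →L[ℝ] ℝ) (s1 : Fin n1 → ℝ)
    (u2 : Fin n2 → Z →L[ℝ] ℝ) (s2 : Fin n2 → ℝ)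
    (P1 P2 : Set Z)
    (hP1 : P1 = {z | ∀ i, u1 i z ≤ s1 i})
    (hP2 : P2 = {z | ∀ i, u2 i z ≤ s2 i})
    (hprime1 : ∀ j, P1 ≠ {z | ∀ i, i ≠ j → u1 i z ≤ s1 i})
    (hprime2 : ∀ j, P2 ≠ {z | ∀ i, i ≠ j → u2 i z ≤ s2 i})
    (hproper1 : P1 ≠ Set.univ) (hproper2 : P2 ≠ Set.univ)
    (hdisj : interior P1 ∩ P2 = ∅)
    (j1 : Fin n1) (j2 : Fin n2) (x0 : Z)
    (hx1 : u1 j1 x0 = s1 j1 ∧ ∀ i, i ≠ j1 → u1 i x0 < s1 i)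
    (hx2 : u2 j2 x0 = s2 j2 ∧ ∀ i, i ≠ j2 → u2 i x0 < s2 i) :
    {z | u1 j1 z = 0} = {z | u2 j2 z = 0} ∧
    ∃ r > (0 : ℝ),
      {z | u1 j1 z = s1 j1 ∧ ∀ i, i ≠ j1 → u1 i z < s1 i} ∩ Metric.ball x0 r =
        {z | u2 j2 z = s2 j2 ∧ ∀ i, i ≠ j2 → u2 i z < s2 i} ∩ Metric.ball x0 r ∧
      {z | u1 j1 z = s1 j1 ∧ ∀ i, i ≠ j1 → u1 i z < s1 i} ∩ Metric.ball x0 r =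
        ((x0 + ·) '' {z | u1 j1 z = 0}) ∩ Metric.ball x0 r := by
  obtain ⟨hx1e, hx1lt⟩ := hx1
  obtain ⟨hx2e, hx2lt⟩ := hx2
  -- the active functional of P1 is nonzero
  have hne1 : u1 j1 ≠ 0 := by
    intro h
    have hs : s1 j1 = 0 := by
      rw [h] at hx1e; simpa using hx1e.symm
    apply hprime1 j1
    rw [hP1]
    ext z
    simp only [mem_setOf_eq]
    constructor
    · intro hz i _; exact hz i
    · intro hz i
      by_cases hij : i = j1
      · subst hij; rw [h, hs]; simp
      · exact hz i hij
  -- choose a ball on which all inactive constraints are strict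
  have hopen : IsOpen {z : Z | (∀ i, i ≠ j1 → u1 i z < s1 i) ∧ (∀ i, i ≠ j2 → u2 i z < s2 i)} := by
    have h1 : {z : Z | (∀ i, i ≠ j1 → u1 i z < s1 i) ∧ (∀ i, i ≠ j2 → u2 i z < s2 i)} =
        (⋂ i, ⋂ _ : i ≠ j1, {z | u1 i z < s1 i}) ∩ (⋂ i, ⋂ _ : i ≠ j2, {z | u2 i z < s2 i}) := by
      ext z; simp [mem_iInter]
    rw [h1]
    refine IsOpen.inter ?_ ?_ <;>
      exact isOpen_iInter_of_finite fun i => isOpen_iInter_of_finite fun _ =>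
        isOpen_lt (by continuity) continuous_const
  obtain ⟨r, hr, hball⟩ := Metric.isOpen_iff.mp hopen x0 ⟨hx1lt, hx2lt⟩
  have hballmem : ∀ z ∈ Metric.ball x0 r,
      (∀ i, i ≠ j1 → u1 i z < s1 i) ∧ (∀ i, i ≠ j2 → u2 i z < s2 i) := fun z hz => hball hz
  -- core separation fact on the ball
  have hcore : ∀ z ∈ Metric.ball x0 r, u1 j1 z < s1 j1 → s2 j2 < u2 j2 z := by
    intro z hz hlt
    by_contra hle
    push_neg at hle
    have hzP2 : z ∈ P2 := by
      rw [hP2]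
      intro i
      by_cases hij : i = j2
      · subst hij; exact hle
      · exact le_of_lt ((hballmem z hz).2 i hij)
    have hzint : z ∈ interior P1 := by
      have hU : IsOpen ({w : Z | u1 j1 w < s1 j1} ∩ Metric.ball x0 r) :=
        (isOpen_lt (by continuity) continuous_const).inter Metric.isOpen_ball
      have hsub : {w : Z | u1 j1 w < s1 j1} ∩ Metric.ball x0 r ⊆ P1 := by
        intro w ⟨hw1, hw2⟩
        rw [hP1]
        intro i
        by_cases hij : i = j1
        · subst hij; exact le_of_lt hw1
        · exact le_of_lt ((hballmem w hw2).1 i hij)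
      exact interior_maximal hsub hU ⟨hlt, hz⟩
    have : z ∈ interior P1 ∩ P2 := ⟨hzint, hzP2⟩
    rw [hdisj] at this
    exact this
  -- implication A : directions decreasing u1 j1 increase u2 j2
  have hA : ∀ v : Z, u1 j1 v < 0 → 0 < u2 j2 v := by
    intro v hv
    set t : ℝ := r / (2 * (‖v‖ + 1)) with ht
    have hnv : (0:ℝ) < ‖v‖ + 1 := by positivity
    have htpos : 0 < t := by positivity
    have htv : t * ‖v‖ < r := by
      have h1 : t * ‖v‖ ≤ t * (‖v‖ + 1) := by nlinarith [norm_nonneg v]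
      have h2 : t * (‖v‖ + 1) = r / 2 := by
        rw [ht, div_mul_eq_mul_div, div_eq_div_iff (by positivity) (by norm_num)]; ring
      linarith
    have hzball : x0 + t • v ∈ Metric.ball x0 r := by
      rw [Metric.mem_ball, dist_eq_norm, add_sub_cancel_left, norm_smul, Real.norm_eq_abs,
        abs_of_pos htpos]
      exact htv
    have h1 : u1 j1 (x0 + t • v) < s1 j1 := by
      rw [map_add, map_smul, hx1e]
      simp only [smul_eq_mul]
      nlinarith
    have h2 := hcore _ hzball h1
    rw [map_add, map_smul, hx2e] at h2
    simp only [smul_eq_mul] at h2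
    nlinarith
  -- implication B (contrapositive of A)
  have hB : ∀ v : Z, u2 j2 v < 0 → 0 ≤ u1 j1 v := by
    intro v hv
    by_contra h
    push_neg at h
    exact absurd (hA v h) (by linarith)
  -- kernel equality
  have key : ∀ v : Z, u1 j1 v = 0 → u2 j2 v < 0 → False := by
    intro v hv1 hv2
    obtain ⟨w, hw⟩ : ∃ w, u1 j1 w ≠ 0 := by
      by_contra h
      push_neg at h
      exact hne1 (ContinuousLinearMap.ext fun w => by simpa using h w)
    have hw' : ∃ w, u1 j1 w < 0 := by
      rcases lt_trichotomy (u1 j1 w) 0 with h | h | h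
      · exact ⟨w, h⟩
      · exact absurd h hw
      · exact ⟨-w, by rw [map_neg]; linarith⟩
    obtain ⟨w, hw1⟩ := hw'
    have hw2 : 0 < u2 j2 w := hA w hw1
    set ε : ℝ := -(u2 j2 v) / (2 * u2 j2 w) with hε
    have hεpos : 0 < ε := div_pos (by linarith) (by linarith)
    have h1 : u2 j2 (v + ε • w) < 0 := by
      rw [map_add, map_smul]
      simp only [smul_eq_mul]
      have : ε * u2 j2 w = -(u2 j2 v) / 2 := by
        rw [hε, div_mul_eq_mul_div, div_eq_div_iff (ne_of_gt (by linarith)) (by norm_num)]; ring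
      rw [this]; linarith
    have h2 := hB _ h1
    rw [map_add, map_smul, hv1] at h2
    simp only [smul_eq_mul, zero_add] at h2
    nlinarith
  have hker : ∀ v : Z, u1 j1 v = 0 ↔ u2 j2 v = 0 := by
    intro v
    constructor
    · intro hv
      rcases lt_trichotomy (u2 j2 v) 0 with h | h | h
      · exact absurd (key v hv h) (by simp)
      · exact h
      · exact absurd (key (-v) (by rw [map_neg, hv]; ring) (by rw [map_neg]; linarith))
          (by simp)
    · intro hv
      have h1 : ¬ u1 j1 v < 0 := fun h => by have := hA v h; linarith
      have h2 : ¬ u1 j1 (-v) < 0 := fun h => by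
        have := hA (-v) h; rw [map_neg] at this; linarith
      rw [map_neg] at h2
      push_neg at h1 h2
      linarith
  have hks : {z : Z | u1 j1 z = 0} = {z : Z | u2 j2 z = 0} := Set.ext hker
  refine ⟨hks, r, hr, ?_, ?_⟩
  · ext z
    simp only [mem_inter_iff, mem_setOf_eq]
    constructor
    · rintro ⟨⟨he, _⟩, hb⟩
      refine ⟨⟨?_, (hballmem z hb).2⟩, hb⟩
      have h0 : u1 j1 (z - x0) = 0 := by rw [map_sub, he, hx1e, sub_self]
      have h0' := (hker _).mp h0
      rw [map_sub, hx2e] at h0'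
      linarith
    · rintro ⟨⟨he, _⟩, hb⟩
      refine ⟨⟨?_, (hballmem z hb).1⟩, hb⟩
      have h0 : u2 j2 (z - x0) = 0 := by rw [map_sub, he, hx2e, sub_self]
      have h0' := (hker _).mpr h0
      rw [map_sub, hx1e] at h0'
      linarith
  · ext z
    simp only [mem_inter_iff, mem_setOf_eq, mem_image]
    constructor
    · rintro ⟨⟨he, _⟩, hb⟩
      refine ⟨⟨z - x0, ?_, by abel⟩, hb⟩
      rw [map_sub, he, hx1e, sub_self]
    · rintro ⟨⟨w, hw, hwz⟩, hb⟩
      refine ⟨⟨?_, (hballmem z hb).1⟩, hb⟩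
      rw [← hwz, map_add, hw, hx1e, add_zero]
end

section
/- Let X and Y be real normed spaces. There exists a function f : X → Y whose graph gph(f) = {(x, f(x)) : x ∈ X} is the union of finitely many polyhedra in the product normed space X × Y if and only if Y is finite-dimensional. -/
open Set

/-- There exists a function `f : X → Y` whose graph is a finite union of
polyhedra in `X × Y` if and only if `Y` is finite-dimensional. -/
theorem stmt_10 {X Y : Type*} [NormedAddCommGroup X] [NormedSpace ℝ X]
    [NormedAddCommGroup Y] [NormedSpace ℝ Y] :
    (∃ f : X → Y, ∃ (n : ℕ) (Λ : Fin n → Set (X × Y)),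
        (∀ i, IsPolyhedron (Λ i)) ∧
        Set.range (fun x => (x, f x)) = ⋃ i, Λ i) ↔
      FiniteDimensional ℝ Y := by
  constructor
  · rintro ⟨f, n, Λ, hΛ, hgraph⟩
    choose m u s hus using hΛ
    let T : Y →ₗ[ℝ] (∀ i : Fin n, Fin (m i) → ℝ) :=
      { toFun := fun y i j => u i j (0, y)
        map_add' := by
          intro a b
          funext i j
          show u i j ((0 : X), a + b) = u i j ((0 : X), a) + u i j ((0 : X), b)
          have h : ((0 : X), a + b) = ((0 : X), a) + ((0 : X), b) := by simp
          rw [h, map_add]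
        map_smul' := by
          intro c a
          funext i j
          show u i j ((0 : X), c • a) = c • u i j ((0 : X), a)
          have h : ((0 : X), c • a) = c • ((0 : X), a) := by simp
          rw [h, map_smul] }
    have hinj : Function.Injective T := by
      rw [← LinearMap.ker_eq_bot, LinearMap.ker_eq_bot']
      intro y hy
      have hy' : ∀ i j, u i j ((0 : X), y) = 0 := by
        intro i j
        have := congrFun (congrFun hy i) j
        simpa [T] using this
      have h0 : ((0 : X), f 0) ∈ ⋃ i, Λ i := by
        rw [← hgraph]; exact ⟨0, rfl⟩
      obtain ⟨i, hi⟩ := mem_iUnion.1 h0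
      rw [hus i] at hi
      have h2 : ((0 : X), f 0 + y) ∈ Λ i := by
        rw [hus i]
        intro j
        have hsplit : ((0 : X), f 0 + y) = ((0 : X), f 0) + ((0 : X), y) := by simp
        rw [hsplit, map_add, hy' i j, add_zero]
        exact hi j
      have h3 : ((0 : X), f 0 + y) ∈ Set.range (fun x => (x, f x)) := by
        rw [hgraph]; exact mem_iUnion.2 ⟨i, h2⟩
      obtain ⟨x, hx⟩ := h3
      have hx1 : x = 0 := congrArg Prod.fst hx
      have hx2 : f x = f 0 + y := congrArg Prod.snd hx
      rw [hx1] at hx2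
      exact (add_eq_left).1 hx2.symm
    exact FiniteDimensional.of_injective T hinj
  · intro hY
    let d := Module.finrank ℝ Y
    let b : Module.Basis (Fin d) ℝ Y := Module.finBasis ℝ Y
    let φ : Fin d → (X × Y) →L[ℝ] ℝ := fun j =>
      (LinearMap.toContinuousLinearMap (b.coord j)).comp (ContinuousLinearMap.snd ℝ X Y)
    refine ⟨fun _ => 0, 1, fun _ => {z : X × Y | z.2 = 0}, fun _ => ?_, ?_⟩
    · refine ⟨d + d, Sum.elim (fun j => φ j) (fun j => -φ j) ∘ finSumFinEquiv.symm,
        fun _ => 0, ?_⟩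
      ext z
      simp only [Set.mem_setOf_eq, Function.comp_apply]
      rw [← finSumFinEquiv.forall_congr_right]
      constructor
      · rintro hz (j | j) <;>
        · rw [Equiv.symm_apply_apply]
          simp [hz, φ]
      · intro h
        have hcoord : ∀ j, b.coord j z.2 = 0 := by
          intro j
          have h1 := h (Sum.inl j)
          have h2 := h (Sum.inr j)
          simp only [Equiv.symm_apply_apply, Sum.elim_inl, Sum.elim_inr,
            ContinuousLinearMap.neg_apply, neg_nonpos] at h1 h2
          have h1' : b.coord j z.2 ≤ 0 := by simpa [φ] using h1
          have h2' : 0 ≤ b.coord j z.2 := by simpa [φ] using h2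
          linarith
        exact b.forall_coord_eq_zero_iff.1 hcoord
    · ext z
      simp [Prod.ext_iff, eq_comm]
end

section
/- Let X and Y be real normed spaces with Y finite-dimensional, and let f : X → Y. Then the following are equivalent: (a) there exist finitely many polyhedra P_1, …, P_m in X, continuous linear operators T_1, …, T_m : X → Y and points b_1, …, b_m ∈ Y such that X = ⋃_{i=1}^m P_i and f(x) = T_i x + b_i for all x ∈ P_i and all i; (b) the graph gph(f) = {(x, f(x)) : x ∈ X} is the union of finitely many polyhedra in the product normed space X × Y. -/
open Set

set_option maxHeartbeats 1000000


lemma isPolyhedron_of_fintype {Z : Type*} [NormedAddCommGroup Z] [NormedSpace ℝ Z]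
    {ι : Type*} [Fintype ι] (u : ι → Z →L[ℝ] ℝ) (s : ι → ℝ) :
    IsPolyhedron {z | ∀ i, u i z ≤ s i} := by
  classical
  let e := (Fintype.equivFin ι).symm
  refine ⟨Fintype.card ι, u ∘ e, s ∘ e, ?_⟩
  ext z
  simp only [mem_setOf_eq, Function.comp_apply]
  exact ⟨fun h i => h (e i), fun h i => by simpa using h (e.symm i)⟩

lemma isPolyhedron_empty {Z : Type*} [NormedAddCommGroup Z] [NormedSpace ℝ Z] :
    IsPolyhedron (∅ : Set Z) := by
  refine ⟨1, fun _ => 0, fun _ => -1, ?_⟩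
  ext z; simp

lemma IsPolyhedron.convex' {Z : Type*} [NormedAddCommGroup Z] [NormedSpace ℝ Z]
    {P : Set Z} (h : IsPolyhedron P) : Convex ℝ P := by
  obtain ⟨n, u, s, rfl⟩ := h
  have : {z : Z | ∀ i, u i z ≤ s i} = ⋂ i, {z | u i z ≤ s i} := by ext z; simp
  rw [this]
  exact convex_iInter fun i => convex_halfSpace_le (u i).toLinearMap.isLinear (s i)

set_option maxHeartbeats 1000000 in
lemma graph_poly_key {X Y : Type*} [NormedAddCommGroup X] [NormedSpace ℝ X]
    [NormedAddCommGroup Y] [NormedSpace ℝ Y] [FiniteDimensional ℝ Y]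
    (f : X → Y) (Λ : Set (X × Y)) (hΛ : IsPolyhedron Λ)
    (hsub : ∀ z ∈ Λ, z.2 = f z.1) :
    ∃ (P : Set X) (T : X →L[ℝ] Y) (b : Y), IsPolyhedron P ∧
      (∀ x ∈ P, f x = T x + b) ∧ (∀ x, (x, f x) ∈ Λ → x ∈ P) := by
  classical
  have hconv := hΛ.convex'
  rcases Λ.eq_empty_or_nonempty with hne | ⟨z₀, hz₀⟩
  · refine ⟨∅, 0, 0, isPolyhedron_empty, fun x hx => absurd hx (notMem_empty x),
      fun x hx => ?_⟩
    rw [hne] at hx; exact absurd hx (notMem_empty _)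
  obtain ⟨n, u, s, hΛeq⟩ := hΛ
  set a : Fin n → X →L[ℝ] ℝ := fun j => (u j).comp (ContinuousLinearMap.inl ℝ X Y) with ha
  set c : Fin n → Y →L[ℝ] ℝ := fun j => (u j).comp (ContinuousLinearMap.inr ℝ X Y) with hc
  have hu : ∀ (j : Fin n) (z : X × Y), u j z = a j z.1 + c j z.2 := by
    intro j z
    have hz : z = (z.1, (0:Y)) + ((0:X), z.2) := by simp
    have h1 : a j z.1 + c j z.2 = u j ((z.1, (0:Y)) + ((0:X), z.2)) := by
      rw [map_add]; rfl
    rw [h1]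
    congr 1
  have hmemΛ : ∀ z, z ∈ Λ ↔ ∀ j, u j z ≤ s j := by
    intro z; rw [hΛeq]; rfl
  set E : Finset (Fin n) := Finset.univ.filter (fun j => ∀ z ∈ Λ, u j z = s j) with hE
  set F : Finset (Fin n) := Finset.univ.filter (fun j => ¬ ∀ z ∈ Λ, u j z = s j) with hF
  have hEmem : ∀ j ∈ E, ∀ z ∈ Λ, u j z = s j := by
    intro j hj; exact (Finset.mem_filter.mp hj).2
  have hEF : ∀ j, j ∉ E → j ∈ F := by
    intro j hj
    simp only [hE, Finset.mem_filter, Finset.mem_univ, true_and] at hj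
    simp only [hF, Finset.mem_filter, Finset.mem_univ, true_and]
    exact hj
  -- a point of Λ where all non-equality constraints are strict
  have hwit : ∀ j ∈ F, ∃ z ∈ Λ, u j z < s j := by
    intro j hj
    simp only [hF, Finset.mem_filter, Finset.mem_univ, true_and] at hj
    push_neg at hj
    obtain ⟨z, hz, hne'⟩ := hj
    exact ⟨z, hz, lt_of_le_of_ne ((hmemΛ z).mp hz j) hne'⟩
  choose zc hzcΛ hzcs using hwit
  obtain ⟨g, hgΛ, hgs⟩ : ∃ g : Fin n → X × Y, (∀ j, g j ∈ Λ) ∧ ∀ j ∈ F, u j (g j) < s j := by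
    refine ⟨fun j => if h : j ∈ F then zc j h else z₀, fun j => ?_, fun j hj => ?_⟩
    · dsimp only
      split
      · exact hzcΛ _ _
      · exact hz₀
    · dsimp only
      rw [dif_pos hj]
      exact hzcs _ _
  have hzb : ∃ zb ∈ Λ, ∀ j ∈ F, u j zb < s j := by
    rcases F.eq_empty_or_nonempty with hFe | hFne
    · exact ⟨z₀, hz₀, by simp [hFe]⟩
    · have hk : (0 : ℝ) < (F.card : ℝ) := by
        exact_mod_cast Finset.card_pos.mpr hFne
      have hkinv : (0:ℝ) < (F.card : ℝ)⁻¹ := inv_pos.mpr hk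
      refine ⟨∑ j ∈ F, ((F.card : ℝ)⁻¹ : ℝ) • g j, ?_, ?_⟩
      · refine hconv.sum_mem (fun i _ => hkinv.le) ?_ (fun i _ => hgΛ i)
        rw [Finset.sum_const, nsmul_eq_mul, mul_inv_cancel₀ hk.ne']
      · intro j hj
        rw [map_sum]
        have hlt : ∑ i ∈ F, u j ((F.card : ℝ)⁻¹ • g i)
            < ∑ _i ∈ F, (F.card : ℝ)⁻¹ * s j := by
          refine Finset.sum_lt_sum (fun i hi => ?_) ⟨j, hj, ?_⟩
          · rw [map_smul, smul_eq_mul]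
            exact mul_le_mul_of_nonneg_left ((hmemΛ _).mp (hgΛ i) j) hkinv.le
          · rw [map_smul, smul_eq_mul]
            exact mul_lt_mul_of_pos_left (hgs j hj) hkinv
        calc ∑ i ∈ F, u j ((F.card : ℝ)⁻¹ • g i)
            < ∑ _i ∈ F, (F.card : ℝ)⁻¹ * s j := hlt
          _ = s j := by
            rw [Finset.sum_const, nsmul_eq_mul, ← mul_assoc, mul_inv_cancel₀ hk.ne', one_mul]
  obtain ⟨zb, hzbΛ, hzbF⟩ := hzb
  -- the coordinate map C is injective
  set C : Y →ₗ[ℝ] (Fin n → ℝ) :=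
    LinearMap.pi (fun j => if j ∈ E then (c j).toLinearMap else 0) with hCdef
  have hCapp : ∀ (y : Y) (j : Fin n), C y j = if j ∈ E then c j y else 0 := by
    intro y j
    rw [hCdef, LinearMap.pi_apply]
    by_cases hj : j ∈ E
    · rw [if_pos hj, if_pos hj]; rfl
    · rw [if_neg hj, if_neg hj]; rfl
  have hCker : LinearMap.ker C = ⊥ := by
    rw [LinearMap.ker_eq_bot']
    intro v hv
    have hvE : ∀ j ∈ E, c j v = 0 := by
      intro j hj
      have := congrFun hv j
      rwa [hCapp, if_pos hj] at this
    by_contra hv0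
    have hε : ∃ ε : ℝ, 0 < ε ∧ ∀ j ∈ F, ε * (|c j v| + 1) ≤ s j - u j zb := by
      rcases F.eq_empty_or_nonempty with hFe | hFne
      · exact ⟨1, one_pos, by simp [hFe]⟩
      · refine ⟨F.inf' hFne (fun j => (s j - u j zb) / (|c j v| + 1)), ?_, ?_⟩
        · rw [Finset.lt_inf'_iff]
          intro j hj
          have h1 : (0:ℝ) < |c j v| + 1 := by positivity
          exact div_pos (sub_pos.mpr (hzbF j hj)) h1
        · intro j hj
          have h1 : (0:ℝ) < |c j v| + 1 := by positivity
          rw [← le_div_iff₀ h1]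
          exact Finset.inf'_le _ hj
    obtain ⟨ε, hεpos, hεle⟩ := hε
    have hmem : (zb.1, zb.2 + ε • v) ∈ Λ := by
      rw [hmemΛ]
      intro j
      have huj : u j (zb.1, zb.2 + ε • v) = u j zb + ε * c j v := by
        rw [hu j (zb.1, zb.2 + ε • v), hu j zb]
        simp only [map_add, map_smul, smul_eq_mul]
        ring
      by_cases hj : j ∈ E
      · rw [huj, hvE j hj, mul_zero, add_zero]
        exact le_of_eq (hEmem j hj zb hzbΛ)
      · have hjF : j ∈ F := hEF j hj
        have h1 : ε * c j v ≤ ε * (|c j v| + 1) := by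
          have := le_abs_self (c j v)
          nlinarith
        have h2 := hεle j hjF
        rw [huj]; linarith
    have h1 := hsub _ hmem
    have h2 := hsub _ hzbΛ
    simp only at h1 h2
    have h3 : zb.2 + ε • v = zb.2 := by rw [h1]; exact h2.symm
    have h4 : ε • v = 0 := by
      have := congrArg (fun w => w - zb.2) h3
      simpa [add_sub_cancel_left] using this
    rcases smul_eq_zero.mp h4 with h | h
    · exact absurd h (ne_of_gt hεpos)
    · exact hv0 h
  obtain ⟨D, hD⟩ := C.exists_leftInverse_of_injective hCker
  set Dc : (Fin n → ℝ) →L[ℝ] Y := LinearMap.toContinuousLinearMap D with hDc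
  set A : X →L[ℝ] (Fin n → ℝ) :=
    ContinuousLinearMap.pi (fun j => if j ∈ E then a j else 0) with hA
  have hAapp : ∀ (x : X) (j : Fin n), A x j = if j ∈ E then a j x else 0 := by
    intro x j
    rw [hA, ContinuousLinearMap.pi_apply]
    by_cases hj : j ∈ E
    · rw [if_pos hj, if_pos hj]
    · rw [if_neg hj, if_neg hj]; rfl
  set sv : Fin n → ℝ := fun j => if j ∈ E then s j else 0 with hsv
  set T : X →L[ℝ] Y := - (Dc.comp A) with hT
  set b : Y := Dc sv with hb
  have hrep : ∀ z ∈ Λ, z.2 = T z.1 + b := by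
    intro z hz
    have h1 : C z.2 = sv - A z.1 := by
      funext j
      rw [hCapp]
      by_cases hj : j ∈ E
      · have heq := hEmem j hj z hz
        rw [hu] at heq
        simp only [Pi.sub_apply, if_pos hj, hAapp, hsv]
        linarith
      · simp only [Pi.sub_apply, if_neg hj, hAapp, hsv]
        ring
    have h2 : D (C z.2) = z.2 := by
      have := congrArg (fun (L : Y →ₗ[ℝ] Y) => L z.2) hD
      simpa using this
    have h3 : Dc (C z.2) = z.2 := h2
    rw [← h3, h1, map_sub]
    rw [hT, hb]
    simp only [ContinuousLinearMap.neg_apply, ContinuousLinearMap.comp_apply]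
    abel
  refine ⟨{x | ∀ j, ((u j).comp ((ContinuousLinearMap.id ℝ X).prod T)) x ≤ s j - c j b},
    T, b, isPolyhedron_of_fintype _ _, ?_, ?_⟩
  · intro x hx
    have hmem : (x, T x + b) ∈ Λ := by
      rw [hmemΛ]
      intro j
      have hxj := hx j
      simp only [ContinuousLinearMap.comp_apply, ContinuousLinearMap.prod_apply,
        ContinuousLinearMap.id_apply] at hxj
      rw [hu j (x, T x + b)]
      rw [hu j (x, T x)] at hxj
      simp only [map_add] at *
      linarith
    exact (hsub _ hmem).symm
  · intro x hx
    have hfx : f x = T x + b := by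
      have := hrep (x, f x) hx
      simpa using this
    rw [hfx] at hx
    intro j
    have hj := (hmemΛ _).mp hx j
    simp only [ContinuousLinearMap.comp_apply, ContinuousLinearMap.prod_apply,
      ContinuousLinearMap.id_apply]
    rw [hu j (x, T x + b)] at hj
    rw [hu j (x, T x)]
    simp only [map_add] at hj
    linarith

/-- For `Y` finite-dimensional, `f : X → Y` is piecewise linear (affine on
each member of a finite polyhedral cover of `X`) iff its graph is a finite union of
polyhedra in `X × Y`. -/
theorem stmt_11 {X Y : Type*} [NormedAddCommGroup X] [NormedSpace ℝ X]
    [NormedAddCommGroup Y] [NormedSpace ℝ Y] [FiniteDimensional ℝ Y]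
    (f : X → Y) :
    (∃ (m : ℕ) (P : Fin m → Set X) (T : Fin m → X →L[ℝ] Y) (b : Fin m → Y),
        (∀ i, IsPolyhedron (P i)) ∧ (⋃ i, P i) = Set.univ ∧
        ∀ i, ∀ x ∈ P i, f x = T i x + b i) ↔
    (∃ (k : ℕ) (Λ : Fin k → Set (X × Y)),
        (∀ i, IsPolyhedron (Λ i)) ∧
        Set.range (fun x => (x, f x)) = ⋃ i, Λ i) := by
  classical
  constructor
  · rintro ⟨m, P, T, b, hPoly, hcov, haff⟩
    set B : Module.Basis (Fin (Module.finrank ℝ Y)) ℝ Y := Module.finBasis ℝ Y with hB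
    set φ : Fin (Module.finrank ℝ Y) → Y →L[ℝ] ℝ :=
      fun k => LinearMap.toContinuousLinearMap (B.coord k) with hφ
    have hφapp : ∀ k y, φ k y = B.coord k y := fun k y => rfl
    choose np up sp hPeq using hPoly
    have hmemP : ∀ i x, x ∈ P i ↔ ∀ j, up i j x ≤ sp i j := fun i x => by
      rw [hPeq i]; exact Iff.rfl
    set L : Fin m → X × Y →L[ℝ] Y := fun i =>
      ContinuousLinearMap.snd ℝ X Y - (T i).comp (ContinuousLinearMap.fst ℝ X Y) with hL
    have hLapp : ∀ i (z : X × Y), L i z = z.2 - T i z.1 := fun i z => rfl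
    refine ⟨m, fun i => {z | ∀ jk : Fin (np i) ⊕ (Fin (Module.finrank ℝ Y) ⊕ Fin (Module.finrank ℝ Y)),
        Sum.elim (fun j => (up i j).comp (ContinuousLinearMap.fst ℝ X Y))
          (Sum.elim (fun k => (φ k).comp (L i)) (fun k => -((φ k).comp (L i)))) jk z ≤
        Sum.elim (sp i) (Sum.elim (fun k => φ k (b i)) (fun k => -(φ k (b i)))) jk},
      fun i => isPolyhedron_of_fintype _ _, ?_⟩
    ext z
    simp only [mem_range, mem_iUnion, mem_setOf_eq]
    constructor
    · rintro ⟨x, rfl⟩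
      obtain ⟨i, hxi⟩ : ∃ i, x ∈ P i := mem_iUnion.mp (hcov.symm ▸ mem_univ x)
      have hfx : f x = T i x + b i := haff i x hxi
      have hLx : L i (x, f x) = b i := by rw [hLapp]; simp [hfx]
      refine ⟨i, ?_⟩
      rintro (j | k | k)
      · simp only [Sum.elim_inl, ContinuousLinearMap.comp_apply, ContinuousLinearMap.coe_fst']
        exact (hmemP i x).mp hxi j
      · simp only [Sum.elim_inr, Sum.elim_inl, ContinuousLinearMap.comp_apply]
        rw [hLx]
      · simp only [Sum.elim_inr, ContinuousLinearMap.neg_apply, ContinuousLinearMap.comp_apply]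
        rw [hLx]
    · rintro ⟨i, hz⟩
      have hz1 : z.1 ∈ P i := by
        rw [hmemP]
        intro j
        have := hz (Sum.inl j)
        simpa using this
      have hcoord : ∀ k, B.coord k (L i z - b i) = 0 := by
        intro k
        have h1 := hz (Sum.inr (Sum.inl k))
        have h2 := hz (Sum.inr (Sum.inr k))
        simp only [Sum.elim_inr, Sum.elim_inl, ContinuousLinearMap.comp_apply,
          ContinuousLinearMap.neg_apply, neg_le_neg_iff] at h1 h2
        have heq : φ k (L i z) = φ k (b i) := le_antisymm h1 (by linarith)
        rw [map_sub, ← hφapp, ← hφapp, heq, sub_self]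
      have hLb : L i z = b i :=
        sub_eq_zero.mp ((B.forall_coord_eq_zero_iff).mp hcoord)
      have hz2 : z.2 = f z.1 := by
        rw [hLapp] at hLb
        have h3 : z.2 = T i z.1 + b i := by rw [← hLb]; abel
        rw [h3, ← haff i z.1 hz1]
      exact ⟨z.1, by rw [← hz2]⟩
  · rintro ⟨k, Λ, hΛ, hgraph⟩
    have hsub : ∀ i, ∀ z ∈ Λ i, z.2 = f z.1 := by
      intro i z hz
      have hzr : z ∈ range (fun x => (x, f x)) := by
        rw [hgraph]; exact mem_iUnion.mpr ⟨i, hz⟩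
      obtain ⟨x, hx⟩ := hzr
      rw [← hx]
    choose P T b hPoly' haff hproj using fun i => graph_poly_key f (Λ i) (hΛ i) (hsub i)
    refine ⟨k, P, T, b, hPoly', ?_, haff⟩
    rw [eq_univ_iff_forall]
    intro x
    have hx : (x, f x) ∈ ⋃ i, Λ i := by rw [← hgraph]; exact ⟨x, rfl⟩
    obtain ⟨i, hi⟩ := mem_iUnion.mp hx
    exact mem_iUnion.mpr ⟨i, hproj i x hi⟩
end

section
/- Let X and Y be real normed spaces and let f : X → Y be piecewise linear, i.e. there exist finitely many polyhedra covering X on each of which f is affine with continuous linear part. Then there exist polyhedra P_1, …, P_m in X, continuous linear operators T_1, …, T_m : X → Y and points b_1, …, b_m ∈ Y such that X = ⋃_{i=1}^m P_i, int(P_i) ≠ ∅ for every i, P_i ∩ int(P_j) = ∅ for all i ≠ j, and f(x) = T_i x + b_i for all x ∈ P_i and each i = 1,…,m. -/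
open Set

open Filter Topology

/-- `f` is piecewise linear: finitely many polyhedra cover `X` and on each of them `f`
is affine with continuous linear part. -/
def IsPLMap {X Y : Type*} [NormedAddCommGroup X] [NormedSpace ℝ X]
    [NormedAddCommGroup Y] [NormedSpace ℝ Y] (f : X → Y) : Prop :=
  ∃ (k : ℕ) (Q : Fin k → Set X) (S : Fin k → X →L[ℝ] Y) (c : Fin k → Y),
    (∀ j, IsPolyhedron (Q j)) ∧ (⋃ j, Q j) = Set.univ ∧
    ∀ j, ∀ x ∈ Q j, f x = S j x + c j

section PLaux

variable {X : Type*} [NormedAddCommGroup X] [NormedSpace ℝ X]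

/-- A generic vector avoiding the kernels of finitely many nonzero functionals. -/
theorem PLaux_generic {ι : Type*} [Finite ι] (L : ι → X →L[ℝ] ℝ)
    (h : ∀ i, L i ≠ 0) : ∃ v : X, ∀ i, L i v ≠ 0 := by
  by_contra hc
  push_neg at hc
  have hcov : ⋃ i, ((LinearMap.ker ((L i : X →ₗ[ℝ] ℝ)) : Submodule ℝ X) : Set X) = Set.univ := by
    ext v
    simp only [Set.mem_iUnion, SetLike.mem_coe, LinearMap.mem_ker, Set.mem_univ, iff_true]
    exact hc v
  obtain ⟨i, hi⟩ := Subspace.exists_eq_top_of_iUnion_eq_univ hcov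
  apply h i
  ext x
  have : x ∈ LinearMap.ker ((L i : X →ₗ[ℝ] ℝ)) := hi ▸ Submodule.mem_top
  simpa using this

theorem PLaux_strict {L : X →L[ℝ] ℝ} (hL : L ≠ 0) {r : ℝ} {A : Set X}
    (hsub : A ⊆ {z | L z ≤ r}) {z : X} (hz : z ∈ interior A) : L z < r := by
  have hle : L z ≤ r := hsub (interior_subset hz)
  rcases lt_or_eq_of_le hle with h | h
  · exact h
  exfalso
  obtain ⟨w₀, hw₀⟩ : ∃ w, L w ≠ 0 := by
    by_contra hc; push_neg at hc; exact hL (by ext x; simpa using hc x)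
  obtain ⟨w, hwpos⟩ : ∃ w, 0 < L w := by
    rcases hw₀.lt_or_gt with h1 | h1
    · exact ⟨-w₀, by simpa using h1⟩
    · exact ⟨w₀, h1⟩
  have hwne : w ≠ 0 := fun h0 => by simp [h0] at hwpos
  have hwn : (0:ℝ) < ‖w‖ := norm_pos_iff.mpr hwne
  obtain ⟨δ, hδ, hball⟩ := Metric.isOpen_iff.mp isOpen_interior z hz
  set t : ℝ := δ / (2 * ‖w‖) with ht
  have htpos : 0 < t := by positivity
  have hmem : z + t • w ∈ A := by
    apply interior_subset
    apply hball
    have : dist (z + t • w) z = t * ‖w‖ := by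
      rw [dist_eq_norm]
      simp [norm_smul, abs_of_pos htpos]
    rw [Metric.mem_ball, this, ht]
    rw [div_mul_eq_mul_div, mul_comm 2 ‖w‖, ← div_div, mul_div_assoc, mul_comm]
    rw [div_self hwn.ne']
    linarith
  have := hsub hmem
  simp only [Set.mem_setOf_eq, map_add, map_smul, smul_eq_mul] at this
  nlinarith

/-- The cell associated to a sign pattern `ε`. -/
def PLcell {ι : Type*} (L : ι → X →L[ℝ] ℝ) (r : ι → ℝ) (ε : ι → Bool) : Set X :=
  {z | ∀ i, if ε i = true then L i z ≤ r i else r i ≤ L i z}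

theorem PLcell_poly {ι : Type*} [Fintype ι] (L : ι → X →L[ℝ] ℝ) (r : ι → ℝ)
    (ε : ι → Bool) : IsPolyhedron (PLcell L r ε) := by
  classical
  set e := (Fintype.equivFin ι).symm with he
  refine ⟨Fintype.card ι,
    fun a => if ε (e a) = true then L (e a) else -(L (e a)),
    fun a => if ε (e a) = true then r (e a) else -(r (e a)), ?_⟩
  ext z
  simp only [PLcell, Set.mem_setOf_eq]
  constructor
  · intro h a
    have := h (e a)
    cases hb : ε (e a) <;> simp [hb] at this ⊢ <;> linarith
  · intro h i
    have := h ((Fintype.equivFin ι) i)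
    rw [he] at this
    simp only [Equiv.symm_apply_apply] at this
    cases hb : ε i <;> simp [hb] at this ⊢ <;> linarith

theorem PLcell_strict {ι : Type*} {L : ι → X →L[ℝ] ℝ} {r : ι → ℝ} {ε : ι → Bool}
    {z : X} (hz : z ∈ interior (PLcell L r ε)) (i : ι) (hL : L i ≠ 0) :
    if ε i = true then L i z < r i else r i < L i z := by
  cases hb : ε i
  · simp only [Bool.false_eq_true, if_false]
    have := PLaux_strict (L := -(L i)) (neg_ne_zero.mpr hL) (r := -(r i))
      (A := PLcell L r ε) ?_ hz
    · simp only [ContinuousLinearMap.neg_apply, neg_lt_neg_iff] at this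
      exact this
    · intro w hw
      have := hw i
      rw [hb] at this
      simp only [Bool.false_eq_true, if_false] at this
      simp only [Set.mem_setOf_eq, ContinuousLinearMap.neg_apply]
      linarith
  · simp only [if_true]
    refine PLaux_strict hL (fun w hw => ?_) hz
    have := hw i
    rw [hb] at this
    simpa using this

theorem PLcell_mem_interior {ι : Type*} [Finite ι] {L : ι → X →L[ℝ] ℝ} {r : ι → ℝ}
    {ε : ι → Bool} {y : X}
    (hcanon : ∀ i, L i = 0 → ε i = decide (0 ≤ r i))
    (hstrict : ∀ i, L i ≠ 0 → if ε i = true then L i y < r i else r i < L i y) :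
    y ∈ interior (PLcell L r ε) := by
  classical
  let U : ι → Set X := fun i =>
    if L i = 0 then Set.univ
    else if ε i = true then {z | L i z < r i} else {z | r i < L i z}
  have hopen : IsOpen (⋂ i, U i) := by
    apply isOpen_iInter_of_finite
    intro i
    by_cases h0 : L i = 0
    · simp only [U, if_pos h0]; exact isOpen_univ
    · simp only [U, if_neg h0]
      cases hb : ε i
      · simp only [Bool.false_eq_true, if_false]
        exact isOpen_lt continuous_const (L i).continuous
      · simp only [if_true]
        exact isOpen_lt (L i).continuous continuous_const
  have hyU : y ∈ ⋂ i, U i := by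
    apply Set.mem_iInter.mpr
    intro i
    by_cases h0 : L i = 0
    · simp only [U, if_pos h0]; exact Set.mem_univ y
    · simp only [U, if_neg h0]
      have := hstrict i h0
      cases hb : ε i
      · rw [hb] at this; simpa using this
      · rw [hb] at this; simpa using this
  have hsub : (⋂ i, U i) ⊆ PLcell L r ε := by
    intro z hz i
    have hzi := Set.mem_iInter.mp hz i
    by_cases h0 : L i = 0
    · have hci := hcanon i h0
      rw [hci, h0]
      by_cases hr : 0 ≤ r i
      · simp [hr]
      · rw [decide_eq_false hr]
        simp only [Bool.false_eq_true, if_false, ContinuousLinearMap.zero_apply]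
        linarith
    · simp only [U, if_neg h0] at hzi
      cases hb : ε i
      · rw [hb] at hzi
        simp only [Bool.false_eq_true, if_false] at hzi ⊢
        exact le_of_lt hzi
      · rw [hb] at hzi
        simp only [if_true] at hzi ⊢
        exact le_of_lt hzi
  exact interior_maximal hsub hopen hyU

/-- Every point lies in a cell with canonical degenerate signs and nonempty interior. -/
theorem PLcell_exists_good {ι : Type*} [Finite ι] (L : ι → X →L[ℝ] ℝ) (r : ι → ℝ)
    (x : X) :
    ∃ ε : ι → Bool, (∀ i, L i = 0 → ε i = decide (0 ≤ r i)) ∧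
      (interior (PLcell L r ε)).Nonempty ∧ x ∈ PLcell L r ε := by
  classical
  obtain ⟨v, hv⟩ : ∃ v : X, ∀ i : {i : ι // L i ≠ 0}, L i.1 v ≠ 0 :=
    PLaux_generic (fun i : {i : ι // L i ≠ 0} => L i.1) (fun i => i.2)
  have hv' : ∀ i : ι, L i ≠ 0 → L i v ≠ 0 := fun i hi => hv ⟨i, hi⟩
  set ε : ι → Bool := fun i =>
    if L i = 0 then decide (0 ≤ r i)
    else decide (L i x < r i ∨ (L i x = r i ∧ L i v < 0)) with hε
  have hcanon : ∀ i, L i = 0 → ε i = decide (0 ≤ r i) := by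
    intro i h0; simp [hε, h0]
  have hxcell : x ∈ PLcell L r ε := by
    intro i
    by_cases h0 : L i = 0
    · rw [hcanon i h0, h0]
      by_cases hr : 0 ≤ r i
      · simp [hr]
      · rw [decide_eq_false hr]
        simp only [Bool.false_eq_true, if_false, ContinuousLinearMap.zero_apply]
        linarith
    · simp only [hε, if_neg h0]
      by_cases hcase : L i x < r i ∨ (L i x = r i ∧ L i v < 0)
      · rw [decide_eq_true hcase, if_pos rfl]
        rcases hcase with h1 | ⟨h1, _⟩
        · exact le_of_lt h1
        · exact le_of_eq h1
      · rw [decide_eq_false hcase]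
        simp only [Bool.false_eq_true, if_false]
        rcases lt_trichotomy (L i x) (r i) with h1 | h1 | h1
        · exact absurd (Or.inl h1) hcase
        · exact le_of_eq h1.symm
        · exact le_of_lt h1
  -- find a point in the interior
  have hev : ∀ i : ι, ∀ᶠ t in 𝓝[>] (0:ℝ), L i ≠ 0 →
      (if ε i = true then L i (x + t • v) < r i else r i < L i (x + t • v)) := by
    intro i
    by_cases h0 : L i = 0
    · filter_upwards with t h; exact absurd h0 h
    · have hkey : ∀ t : ℝ, L i (x + t • v) = L i x + t * L i v := by
        intro t; simp [map_add, map_smul]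
      have htend : Tendsto (fun t : ℝ => L i x + t * L i v) (𝓝[>] 0) (𝓝 (L i x)) := by
        have : Tendsto (fun t : ℝ => L i x + t * L i v) (𝓝 0) (𝓝 (L i x + 0 * L i v)) := by
          apply Tendsto.add tendsto_const_nhds
          exact (continuous_id.mul continuous_const).tendsto 0
        simpa using this.mono_left nhdsWithin_le_nhds
      rcases lt_trichotomy (L i x) (r i) with h1 | h1 | h1
      · have hb : ε i = true := by
          simp only [hε, if_neg h0]
          exact decide_eq_true (Or.inl h1)
        have := htend.eventually_lt_const h1
        filter_upwards [this] with t ht _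
        rw [hb, if_pos rfl, hkey t]
        exact ht
      · -- boundary case : use the generic direction
        have hvne := hv' i h0
        rcases hvne.lt_or_gt with h2 | h2
        · have hb : ε i = true := by
            simp only [hε, if_neg h0]
            exact decide_eq_true (Or.inr ⟨h1, h2⟩)
          filter_upwards [self_mem_nhdsWithin] with t ht _
          rw [hb, if_pos rfl, hkey t, h1]
          have : t * L i v < 0 := mul_neg_of_pos_of_neg ht h2
          linarith
        · have hb : ε i = false := by
            simp only [hε, if_neg h0]
            apply decide_eq_false
            push_neg
            exact ⟨le_of_eq h1.symm, fun _ => h2.le⟩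
          filter_upwards [self_mem_nhdsWithin] with t ht _
          rw [hb]
          simp only [Bool.false_eq_true, if_false]
          rw [hkey t, h1]
          have : 0 < t * L i v := mul_pos ht h2
          linarith
      · have hb : ε i = false := by
          simp only [hε, if_neg h0]
          apply decide_eq_false
          push_neg
          exact ⟨h1.le, fun h => absurd h (ne_of_gt h1)⟩
        have := htend.eventually_const_lt h1
        filter_upwards [this] with t ht _
        rw [hb]
        simp only [Bool.false_eq_true, if_false]
        rw [hkey t]
        exact ht
  have hall : ∀ᶠ t in 𝓝[>] (0:ℝ), ∀ i : ι, L i ≠ 0 →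
      (if ε i = true then L i (x + t • v) < r i else r i < L i (x + t • v)) :=
    eventually_all.mpr hev
  obtain ⟨t, ht⟩ := hall.exists
  refine ⟨ε, hcanon, ⟨x + t • v, PLcell_mem_interior hcanon ht⟩, hxcell⟩

end PLaux

/-- Every piecewise linear function admits a representation by polyhedra
with nonempty interiors whose interiors do not meet the other pieces. -/
theorem stmt_12 {X Y : Type*} [NormedAddCommGroup X] [NormedSpace ℝ X]
    [NormedAddCommGroup Y] [NormedSpace ℝ Y]
    (f : X → Y) (hf : IsPLMap f) :
    ∃ (m : ℕ) (P : Fin m → Set X) (T : Fin m → X →L[ℝ] Y) (b : Fin m → Y),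
      (∀ i, IsPolyhedron (P i)) ∧ (⋃ i, P i) = Set.univ ∧
      (∀ i, (interior (P i)).Nonempty) ∧
      (∀ i j, i ≠ j → P i ∩ interior (P j) = ∅) ∧
      ∀ i, ∀ x ∈ P i, f x = T i x + b i := by
  classical
  obtain ⟨k, Q, S, c, hQpoly, hQcover, hQf⟩ := hf
  choose n u s hQ using hQpoly
  set L : ((j : Fin k) × Fin (n j)) → (X →L[ℝ] ℝ) := fun i => u i.1 i.2 with hL
  set r : ((j : Fin k) × Fin (n j)) → ℝ := fun i => s i.1 i.2 with hr
  set Good : (((j : Fin k) × Fin (n j)) → Bool) → Prop := fun ε =>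
    (∀ i, L i = 0 → ε i = decide (0 ≤ r i)) ∧ (interior (PLcell L r ε)).Nonempty with hGood
  set E : Finset (((j : Fin k) × Fin (n j)) → Bool) := Finset.univ.filter Good with hE
  set ee : Fin E.card → (((j : Fin k) × Fin (n j)) → Bool) :=
    fun i => (E.equivFin.symm i : ((j : Fin k) × Fin (n j)) → Bool) with hee
  have h_ee_good : ∀ i, Good (ee i) := by
    intro i
    have h := (E.equivFin.symm i).2
    exact (Finset.mem_filter.mp h).2
  have h_ee_inj : Function.Injective ee := by
    intro a b hab
    apply E.equivFin.symm.injective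
    exact Subtype.ext hab
  have h_ee_surj : ∀ ε, Good ε → ∃ i, ee i = ε := by
    intro ε hg
    have hmem : ε ∈ E := by rw [hE, Finset.mem_filter]; exact ⟨Finset.mem_univ _, hg⟩
    exact ⟨E.equivFin ⟨ε, hmem⟩, by simp [hee]⟩
  have hsubQ : ∀ i : Fin E.card, ∃ j, PLcell L r (ee i) ⊆ Q j := by
    intro i
    obtain ⟨z, hz⟩ := (h_ee_good i).2
    have hzuniv : z ∈ ⋃ j, Q j := by rw [hQcover]; exact mem_univ z
    obtain ⟨j, hj⟩ := mem_iUnion.mp hzuniv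
    refine ⟨j, ?_⟩
    rw [hQ j] at hj
    have hzQ : ∀ a : Fin (n j), u j a z ≤ s j a := hj
    have htrue : ∀ a : Fin (n j), ee i ⟨j, a⟩ = true := by
      intro a
      by_contra hb
      have hbf : ee i ⟨j, a⟩ = false := Bool.eq_false_iff.mpr hb
      by_cases h0 : L ⟨j, a⟩ = 0
      · have hcan := (h_ee_good i).1 ⟨j, a⟩ h0
        rw [hbf] at hcan
        have hr0 : ¬ (0 ≤ r ⟨j, a⟩) := by
          intro h; rw [decide_eq_true h] at hcan; exact Bool.false_ne_true hcan
        apply hr0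
        simp only [hL] at h0
        have h1 := hzQ a
        rw [h0] at h1
        simpa [hr] using h1
      · have hstr := PLcell_strict hz ⟨j, a⟩ h0
        rw [hbf] at hstr
        simp only [Bool.false_eq_true, if_false] at hstr
        have h1 := hzQ a
        simp only [hL, hr] at hstr
        exact absurd h1 (not_le.mpr hstr)
    intro w hw
    rw [hQ j]
    intro a
    have h2 := hw ⟨j, a⟩
    rw [htrue a, if_pos rfl] at h2
    exact h2
  choose jj hjj using hsubQ
  refine ⟨E.card, fun i => PLcell L r (ee i), fun i => S (jj i), fun i => c (jj i),
    fun i => PLcell_poly L r (ee i), ?_, fun i => (h_ee_good i).2, ?_, ?_⟩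
  · apply eq_univ_of_forall
    intro x
    obtain ⟨ε, hc, hne, hx⟩ := PLcell_exists_good L r x
    obtain ⟨i, hi⟩ := h_ee_surj ε ⟨hc, hne⟩
    exact mem_iUnion.mpr ⟨i, hi ▸ hx⟩
  · intro i j hne
    apply eq_empty_iff_forall_notMem.mpr
    rintro z ⟨hz1, hz2⟩
    have hεne : ee i ≠ ee j := fun h => hne (h_ee_inj h)
    obtain ⟨i₀, hi₀⟩ := Function.ne_iff.mp hεne
    have hL0 : L i₀ ≠ 0 := by
      intro h0
      apply hi₀
      rw [(h_ee_good i).1 i₀ h0, (h_ee_good j).1 i₀ h0]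
    have hs := PLcell_strict hz2 i₀ hL0
    have hns := hz1 i₀
    cases hbi : ee i i₀ <;> cases hbj : ee j i₀
    · exact hi₀ (hbi.trans hbj.symm)
    · rw [hbi] at hns; rw [hbj, if_pos rfl] at hs
      simp only [Bool.false_eq_true, if_false] at hns
      linarith
    · rw [hbi, if_pos rfl] at hns; rw [hbj] at hs
      simp only [Bool.false_eq_true, if_false] at hs
      linarith
    · exact hi₀ (hbi.trans hbj.symm)
  · intro i x hx
    exact hQf (jj i) x (hjj i hx)
end

section
/- Let X and Y be real normed spaces, f : X → Y, and let P_1, …, P_m be polyhedra in X, T_1, …, T_m : X → Y continuous linear operators and b_1, …, b_m ∈ Y such that X = ⋃_{i=1}^m P_i, int(P_i) ≠ ∅ for every i, P_i ∩ int(P_j) = ∅ for all i ≠ j, and f(x) = T_i x + b_i for all x ∈ P_i and each i. Define lin(P_i) = {h ∈ X : P_i + ℝh ⊆ P_i} and X_f = ⋂_{i=1}^m lin(P_i). Then X_f is a closed linear subspace of X of finite codimension, and T_1 x = T_2 x = ⋯ = T_m x for every x ∈ X_f. -/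
open Set

/-- For a piecewise linear `f` represented on a polyhedral cover with
nonempty interiors and non-overlapping pieces, the set
`X_f = ⋂ᵢ lin(Pᵢ)` (intersection of the linearity spaces) is a closed linear subspace
of finite codimension on which all the linear parts `Tᵢ` coincide. -/
theorem stmt_13 {X Y : Type*} [NormedAddCommGroup X] [NormedSpace ℝ X]
    [NormedAddCommGroup Y] [NormedSpace ℝ Y]
    (f : X → Y) {m : ℕ}
    (P : Fin m → Set X) (T : Fin m → X →L[ℝ] Y) (b : Fin m → Y)
    (hpoly : ∀ i, IsPolyhedron (P i)) (hcover : (⋃ i, P i) = Set.univ)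
    (hint : ∀ i, (interior (P i)).Nonempty)
    (hdisj : ∀ i j, i ≠ j → P i ∩ interior (P j) = ∅)
    (hf : ∀ i, ∀ x ∈ P i, f x = T i x + b i)
    (Xf : Set X)
    (hXf : Xf = ⋂ i, {h | ∀ x ∈ P i, ∀ t : ℝ, x + t • h ∈ P i}) :
    (∃ S : Submodule ℝ X, (S : Set X) = Xf ∧ IsClosed (S : Set X) ∧
        FiniteDimensional ℝ (X ⧸ S)) ∧
      ∀ x ∈ Xf, ∀ i j, T i x = T j x := by
  classical
  choose n u s hP using hpoly
  have hne : ∀ i, (P i).Nonempty := fun i => (hint i).mono interior_subset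
  have hclosedP : ∀ i, IsClosed (P i) := by
    intro i
    rw [hP i]
    have : {z : X | ∀ k, u i k z ≤ s i k} = ⋂ k, (u i k) ⁻¹' Iic (s i k) := by
      ext z; simp [Set.mem_iInter]
    rw [this]
    exact isClosed_iInter fun k => IsClosed.preimage (u i k).continuous isClosed_Iic
  have hlin : ∀ (i) (h : X), (∀ x ∈ P i, ∀ t : ℝ, x + t • h ∈ P i) ↔ ∀ k, u i k h = 0 := by
    intro i h
    constructor
    · intro H k
      obtain ⟨x0, hx0⟩ := hne i
      by_contra hk
      have ht : ∀ t : ℝ, u i k x0 + t * u i k h ≤ s i k := by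
        intro t
        have h1 := H x0 hx0 t
        rw [hP i] at h1
        have := h1 k
        simpa [mul_comm] using this
      have := ht ((s i k - u i k x0 + 1) / u i k h)
      rw [div_mul_cancel₀ _ hk] at this
      linarith
    · intro H x hx t
      rw [hP i] at hx ⊢
      intro k
      have : u i k (x + t • h) = u i k x + t * u i k h := by simp
      rw [this, H k, mul_zero, add_zero]
      exact hx k
  constructor
  · -- the subspace part
    set Φ : X →ₗ[ℝ] (∀ i : Fin m, Fin (n i) → ℝ) :=
      LinearMap.pi fun i => LinearMap.pi fun k => (u i k : X →ₗ[ℝ] ℝ) with hΦ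
    have hker : ∀ x, x ∈ LinearMap.ker Φ ↔ ∀ i k, u i k x = 0 := by
      intro x
      simp [hΦ, LinearMap.mem_ker, funext_iff]
    refine ⟨LinearMap.ker Φ, ?_, ?_, ?_⟩
    · ext x
      rw [hXf, Set.mem_iInter]
      simp only [SetLike.mem_coe, hker]
      constructor
      · intro H i
        exact (hlin i x).mpr (H i)
      · intro H i k
        exact (hlin i x).mp (H i) k
    · have : (LinearMap.ker Φ : Set X) = ⋂ i, ⋂ k, (u i k) ⁻¹' {0} := by
        ext x; simp [hker x, Set.mem_iInter]
      rw [this]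
      exact isClosed_iInter fun i => isClosed_iInter fun k =>
        IsClosed.preimage (u i k).continuous isClosed_singleton
    · exact LinearEquiv.finiteDimensional Φ.quotKerEquivRange.symm
  · -- agreement of the linear parts
    intro h hh i j
    rw [hXf, Set.mem_iInter] at hh
    have hmove : ∀ k, ∀ x ∈ P k, x + h ∈ P k := by
      intro k x hx
      have := hh k x hx 1
      simpa using this
    have hstep : ∀ k, ∀ x ∈ P k, f (x + h) - f x = T k h := by
      intro k x hx
      rw [hf k _ (hmove k x hx), hf k x hx]
      simp [map_add]

    -- on overlaps the linear parts agree on h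
    have hover : ∀ k k', ∀ x, x ∈ P k → x ∈ P k' → T k h = T k' h := by
      intro k k' x hk hk'
      rw [← hstep k x hk, ← hstep k' x hk']
    set A := ⋃ k ∈ {k : Fin m | T k h = T i h}, P k with hA
    set B := ⋃ k ∈ {k : Fin m | T k h ≠ T i h}, P k with hB
    have hAcl : IsClosed A := Set.Finite.isClosed_biUnion (Set.toFinite _) fun k _ => hclosedP k
    have hBcl : IsClosed B := Set.Finite.isClosed_biUnion (Set.toFinite _) fun k _ => hclosedP k
    have hcov : (univ : Set X) ⊆ A ∪ B := by
      intro x _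
      have : x ∈ ⋃ k, P k := by rw [hcover]; trivial
      obtain ⟨k, hk⟩ := Set.mem_iUnion.mp this
      by_cases hc : T k h = T i h
      · exact Or.inl (Set.mem_biUnion hc hk)
      · exact Or.inr (Set.mem_biUnion hc hk)
    have hBempty : B = ∅ := by
      by_contra hBne
      obtain ⟨y, hy⟩ := Set.nonempty_iff_ne_empty.mpr hBne
      obtain ⟨x0, hx0⟩ := hne i
      have hAne : (univ ∩ A).Nonempty :=
        ⟨x0, trivial, Set.mem_biUnion (show T i h = T i h from rfl) hx0⟩
      have hBne' : (univ ∩ B).Nonempty := ⟨y, trivial, hy⟩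
      obtain ⟨z, _, hzA, hzB⟩ := isPreconnected_closed_iff.mp
        (convex_univ.isPreconnected) A B hAcl hBcl hcov hAne hBne'
      obtain ⟨k, hkmem, hzk⟩ := Set.mem_iUnion₂.mp hzA
      obtain ⟨k', hk'mem, hzk'⟩ := Set.mem_iUnion₂.mp hzB
      exact hk'mem ((hover k' k z hzk' hzk).trans hkmem)
    obtain ⟨x, hx⟩ := hne j
    have hxA : x ∈ A := by
      rcases hcov (Set.mem_univ x) with hA' | hB'
      · exact hA'
      · rw [hBempty] at hB'; exact absurd hB' (Set.notMem_empty x)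
    obtain ⟨k, hkmem, hxk⟩ := Set.mem_iUnion₂.mp hxA
    have h1 : T j h = T k h := hover j k x hx hxk
    exact (h1.trans hkmem).symm
end

section
/- Let X and Y be real normed spaces, f : X → Y, and let P_1, …, P_m be polyhedra in X, T_1, …, T_m : X → Y continuous linear operators and b_1, …, b_m ∈ Y such that X = ⋃_{i=1}^m P_i, int(P_i) ≠ ∅ for every i, P_i ∩ int(P_j) = ∅ for all i ≠ j, and f(x) = T_i x + b_i for all x ∈ P_i and each i. Let X_1 and X_2 be closed linear subspaces of X such that X_1 ⊆ ⋂_{i=1}^m lin(P_i), X_1 ∩ X_2 = {0}, X_1 + X_2 = X, and X_2 is finite-dimensional. Then there exist a continuous linear operator T : X_1 → Y, a finite-dimensional linear subspace Ŷ of Y, and a piecewise linear function g : X_2 → Ŷ (i.e. X_2 is covered by finitely many polyhedra of X_2 on each of which g is affine with continuous linear part) such that f(x_1 + x_2) = T x_1 + g(x_2) for all (x_1, x_2) ∈ X_1 × X_2. -/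
open Set

/-- Decomposition of a piecewise linear function as the sum of a continuous
linear operator on an (infinite dimensional) closed subspace `X₁` and a piecewise linear
function on a finite dimensional complement `X₂` with values in a finite dimensional
subspace `Ŷ` of `Y`. -/
theorem stmt_14 {X Y : Type*} [NormedAddCommGroup X] [NormedSpace ℝ X]
    [NormedAddCommGroup Y] [NormedSpace ℝ Y]
    (f : X → Y) {m : ℕ}
    (P : Fin m → Set X) (T : Fin m → X →L[ℝ] Y) (b : Fin m → Y)
    (hpoly : ∀ i, IsPolyhedron (P i)) (hcover : (⋃ i, P i) = Set.univ)
    (hint : ∀ i, (interior (P i)).Nonempty)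
    (hdisj : ∀ i j, i ≠ j → P i ∩ interior (P j) = ∅)
    (hf : ∀ i, ∀ x ∈ P i, f x = T i x + b i)
    (X1 X2 : Submodule ℝ X)
    (hX1closed : IsClosed (X1 : Set X)) (hX2closed : IsClosed (X2 : Set X))
    (hX1lin : (X1 : Set X) ⊆ ⋂ i, {h | ∀ x ∈ P i, ∀ t : ℝ, x + t • h ∈ P i})
    (hinf : X1 ⊓ X2 = ⊥) (hsup : X1 ⊔ X2 = ⊤)
    (hfin : FiniteDimensional ℝ X2) :
    ∃ (T0 : X1 →L[ℝ] Y) (Yhat : Submodule ℝ Y) (g : X2 → Yhat),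
      FiniteDimensional ℝ Yhat ∧ IsPLMap g ∧
      ∀ (x1 : X1) (x2 : X2), f ((x1 : X) + (x2 : X)) = T0 x1 + (g x2 : Y) := by
  -- every point lies in some `P i`
  have hmemU : ∀ x : X, ∃ i, x ∈ P i := by
    intro x
    have hx : x ∈ ⋃ i, P i := hcover ▸ mem_univ x
    exact mem_iUnion.1 hx
  obtain ⟨i0, hi0⟩ := hmemU 0
  -- each `P i` is closed
  have hclosed : ∀ i, IsClosed (P i) := by
    intro i
    obtain ⟨n, u, s, hP⟩ := hpoly i
    rw [hP]
    have hset : {z : X | ∀ j, u j z ≤ s j} = ⋂ j, {z : X | u j z ≤ s j} := by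
      ext z; simp
    rw [hset]
    exact isClosed_iInter fun j => isClosed_le (u j).continuous continuous_const
  -- translating along X1 stays in each P i
  have htrans : ∀ h ∈ X1, ∀ i, ∀ x ∈ P i, x + h ∈ P i := by
    intro h hh i x hx
    have := mem_iInter.1 (hX1lin hh) i x hx 1
    simpa using this
  -- increment formula on each piece
  have hstep : ∀ h ∈ X1, ∀ i, ∀ x ∈ P i, f (x + h) = f x + T i h := by
    intro h hh i x hx
    rw [hf i _ (htrans h hh i x hx), hf i x hx, map_add]
    abel
  -- key : the increment is T i0 h for all x
  have key : ∀ h ∈ X1, ∀ x : X, f (x + h) = f x + T i0 h := by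
    intro h hh
    set S : Set X := {x | f (x + h) = f x + T i0 h} with hSdef
    have hSunion : S = ⋃ i ∈ {i | T i h = T i0 h}, P i := by
      ext x
      constructor
      · intro hx
        obtain ⟨i, hi⟩ := hmemU x
        refine mem_biUnion ?_ hi
        have h1 := hstep h hh i x hi
        have h2 : f x + T i h = f x + T i0 h := h1 ▸ hx
        exact add_left_cancel h2
      · intro hx
        obtain ⟨i, hiI, hi⟩ := mem_iUnion₂.1 hx
        show f (x + h) = f x + T i0 h
        rw [hstep h hh i x hi, hiI]
    have hScunion : Sᶜ = ⋃ i ∈ {i | T i h ≠ T i0 h}, P i := by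
      ext x
      constructor
      · intro hx
        obtain ⟨i, hi⟩ := hmemU x
        refine mem_biUnion ?_ hi
        intro hEq
        exact hx (show f (x + h) = f x + T i0 h by rw [hstep h hh i x hi, hEq])
      · intro hx
        obtain ⟨i, hiI, hi⟩ := mem_iUnion₂.1 hx
        intro hxS
        apply hiI
        have h1 := hstep h hh i x hi
        have h2 : f x + T i h = f x + T i0 h := h1 ▸ hxS
        exact add_left_cancel h2
    have hSclosed : IsClosed S := by
      rw [hSunion]
      exact Set.Finite.isClosed_biUnion (Set.toFinite _) fun i _ => hclosed i
    have hScclosed : IsClosed Sᶜ := by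
      rw [hScunion]
      exact Set.Finite.isClosed_biUnion (Set.toFinite _) fun i _ => hclosed i
    have hclopen : IsClopen S := ⟨hSclosed, isClosed_compl_iff.1 hScclosed⟩
    have h0S : (0 : X) ∈ S := by
      show f (0 + h) = f 0 + T i0 h
      rw [← hstep h hh i0 0 hi0]
    have hSuniv : S = univ := hclopen.eq_univ ⟨0, h0S⟩
    intro x
    have hx : x ∈ S := by rw [hSuniv]; trivial
    exact hx
  -- the continuous linear operator on X1
  refine ⟨(T i0).comp X1.subtypeL, ?_, ?_, ?_, ?_, ?_⟩
  -- the finite dimensional target subspace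
  · exact ⨆ i, (X2.map ((T i) : X →ₗ[ℝ] Y) ⊔ Submodule.span ℝ {b i})
  -- membership of values
  · intro x2
    refine ⟨f (x2 : X), ?_⟩
    obtain ⟨i, hi⟩ := hmemU (x2 : X)
    rw [hf i _ hi]
    refine Submodule.add_mem _ ?_ ?_
    · exact Submodule.mem_iSup_of_mem i (Submodule.mem_sup_left
        (Submodule.mem_map_of_mem x2.2))
    · exact Submodule.mem_iSup_of_mem i (Submodule.mem_sup_right
        (Submodule.mem_span_singleton_self _))
  · -- finite dimensionality
    have : ∀ i : Fin m, FiniteDimensional ℝ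
        (X2.map ((T i) : X →ₗ[ℝ] Y) ⊔ Submodule.span ℝ {b i} : Submodule ℝ Y) := by
      intro i
      have h1 : FiniteDimensional ℝ (X2.map ((T i) : X →ₗ[ℝ] Y)) :=
        Module.Finite.map X2 _
      have h2 : FiniteDimensional ℝ (Submodule.span ℝ {b i}) := inferInstance
      infer_instance
    infer_instance
  · -- piecewise linearity of g
    refine ⟨m, fun j => {z : X2 | (z : X) ∈ P j},
      fun j => ((T j).comp X2.subtypeL).codRestrict _ fun z =>
        Submodule.mem_iSup_of_mem j (Submodule.mem_sup_left (Submodule.mem_map_of_mem z.2)),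
      fun j => ⟨b j, Submodule.mem_iSup_of_mem j (Submodule.mem_sup_right
        (Submodule.mem_span_singleton_self _))⟩, ?_, ?_, ?_⟩
    · intro j
      obtain ⟨n, u, s, hP⟩ := hpoly j
      refine ⟨n, fun k => (u k).comp X2.subtypeL, s, ?_⟩
      ext z
      simp only [mem_setOf_eq, hP, ContinuousLinearMap.comp_apply, Submodule.subtypeL_apply]
    · ext z
      simp only [mem_iUnion, mem_setOf_eq, mem_univ, iff_true]
      exact hmemU (z : X)
    · intro j z hz
      apply Subtype.ext
      push_cast
      rw [hf j _ hz]
      rfl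
  · -- the decomposition formula
    intro x1 x2
    obtain ⟨i, hi⟩ := hmemU (x2 : X)
    have hk := key (x1 : X) x1.2 (x2 : X)
    simp only [ContinuousLinearMap.comp_apply, Submodule.subtypeL_apply]
    rw [add_comm ((x1 : X)) ((x2 : X)), hk, add_comm]
end

section
/- Let Y be a real normed space, Y_1 a closed linear subspace of Y, and Z a finite-dimensional linear subspace of Y with Y_1 ∩ Z = {0}. Let Π_Z : Y_1 + Z → Z be the projection defined by Π_Z(y + z) = z for (y, z) ∈ Y_1 × Z. Let C be a convex cone in Y such that (Y_1 + Z) ∩ int(C) ≠ ∅, and set C_Z = Π_Z((Y_1 + Z) ∩ C). Then the interior of C_Z in the normed space Z equals Π_Z((Y_1 + Z) ∩ int(C)). -/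
open Set Pointwise

/-- `int_Z (C_Z) = Π_Z ((Y₁ ⊕ Z) ∩ int C)`, where
`C_Z = Π_Z ((Y₁ ⊕ Z) ∩ C)` and `Π_Z` projects `Y₁ ⊕ Z` onto `Z`.
Here `C_Z` is expressed inside the subtype `Z`, so that
`C_Z = {z : Z | ∃ y ∈ Y₁, y + z ∈ C}` and similarly for the image of `int C`. -/
theorem stmt_15 {Y : Type*} [NormedAddCommGroup Y] [NormedSpace ℝ Y]
    (Y1 Z : Submodule ℝ Y) (hY1closed : IsClosed (Y1 : Set Y))
    (hZfin : FiniteDimensional ℝ Z) (hinf : Y1 ⊓ Z = ⊥)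
    (C : Set Y) (hCconv : Convex ℝ C)
    (hCcone : ∀ t : ℝ, 0 ≤ t → t • C ⊆ C)
    (hne : (((Y1 : Set Y) + (Z : Set Y)) ∩ interior C).Nonempty)
    (CZ : Set Z) (hCZ : CZ = {z : Z | ∃ y ∈ Y1, y + (z : Y) ∈ C}) :
    interior CZ = {z : Z | ∃ y ∈ Y1, y + (z : Y) ∈ interior C} := by
  obtain ⟨x₀, hx₀mem, hx₀int⟩ := hne
  rw [Set.mem_add] at hx₀mem
  obtain ⟨y₀, hy₀, z₀, hz₀, rfl⟩ := hx₀mem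
  set w : Z := ⟨z₀, hz₀⟩ with hw
  apply Set.Subset.antisymm
  · intro z hz
    have hcont : Continuous (fun ε : ℝ => z + ε • (z - w)) := by fun_prop
    have h0 : z + (0:ℝ) • (z - w) ∈ interior CZ := by simpa using hz
    have hnb : ∀ᶠ ε in nhds (0:ℝ), z + ε • (z - w) ∈ interior CZ :=
      hcont.continuousAt.eventually_mem (isOpen_interior.mem_nhds h0)
    obtain ⟨δ, hδpos, hball⟩ := Metric.eventually_nhds_iff.mp hnb
    set ε : ℝ := δ / 2 with hε
    have hεpos : 0 < ε := by positivity
    have hεmem : z + ε • (z - w) ∈ interior CZ := by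
      apply hball
      rw [Real.dist_eq, sub_zero, abs_of_pos hεpos]
      linarith
    have hz' : z + ε • (z - w) ∈ CZ := interior_subset hεmem
    rw [hCZ] at hz'
    obtain ⟨y', hy', hy'C⟩ := hz'
    have h1ε : (0:ℝ) < 1 + ε := by linarith
    set a : ℝ := ε / (1 + ε) with ha
    set b : ℝ := 1 / (1 + ε) with hb
    have hne1 : (1 + ε) ≠ 0 := h1ε.ne'
    have hab : a + b = 1 := by rw [ha, hb]; field_simp; ring
    have hapos : 0 < a := div_pos hεpos h1ε
    have hbnn : 0 ≤ b := by positivity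
    have hkey : a • (y₀ + z₀) + b • (y' + ((z + ε • (z - w) : Z) : Y)) ∈ interior C :=
      hCconv.combo_interior_self_mem_interior hx₀int hy'C hapos hbnn hab
    refine ⟨a • y₀ + b • y',
      Y1.add_mem (Y1.smul_mem _ hy₀) (Y1.smul_mem _ hy'), ?_⟩
    convert hkey using 1
    push_cast
    have h3 : ((1:ℝ) + δ * (1/2)) ≠ 0 := by positivity
    match_scalars <;>
      first
        | linear_combination -mul_inv_cancel₀ h3
        | ring
  · rintro z ⟨y, hy, hmem⟩
    have hopen : IsOpen {z' : Z | y + (z' : Y) ∈ interior C} := by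
      have hc : Continuous fun z' : Z => y + (z' : Y) := by fun_prop
      exact isOpen_interior.preimage hc
    exact interior_maximal
      (fun z' hz' => hCZ ▸ ⟨y, hy, interior_subset hz'⟩) hopen hmem
end

section
/- Let Y be a real normed space, Y_1 a closed linear subspace of Y, and Z a finite-dimensional linear subspace of Y with Y_1 ∩ Z = {0}. Let Π_Z : Y_1 + Z → Z be the projection Π_Z(y + z) = z for (y, z) ∈ Y_1 × Z. Let C be a convex cone in Y with (Y_1 + Z) ∩ int(C) ≠ ∅, and set C_Z = Π_Z((Y_1 + Z) ∩ C). Then for every subset B of Z: (Y_1 + B) \ ((Y_1 + B) + int(C)) = Y_1 + (B \ (B + int_Z(C_Z))), where int_Z(C_Z) denotes the interior of C_Z in the normed space Z. Equivalently, the weak Pareto efficient points of Y_1 + B with respect to C equal the Minkowski sum of Y_1 with the weak Pareto efficient points of B with respect to C_Z. -/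
open Set Pointwise

/-- For every subset `B` of `Z`,
`(Y₁ + B) \ ((Y₁ + B) + int C) = Y₁ + (B \ (B + int_Z C_Z))`, i.e. the weak Pareto
efficient points of `Y₁ + B` with respect to `C` equal `Y₁ + WE(B, C_Z)`.
Here `C_Z = Π_Z ((Y₁ ⊕ Z) ∩ C) = {z : Z | ∃ y ∈ Y₁, y + z ∈ C}` is expressed inside the
subtype `Z`, whose subspace topology gives `int_Z`. -/
theorem stmt_16 {Y : Type*} [NormedAddCommGroup Y] [NormedSpace ℝ Y]
    (Y1 Z : Submodule ℝ Y) (hY1closed : IsClosed (Y1 : Set Y))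
    (hZfin : FiniteDimensional ℝ Z) (hinf : Y1 ⊓ Z = ⊥)
    (C : Set Y) (hCconv : Convex ℝ C)
    (hCcone : ∀ t : ℝ, 0 ≤ t → t • C ⊆ C)
    (hne : (((Y1 : Set Y) + (Z : Set Y)) ∩ interior C).Nonempty)
    (CZ : Set Z) (hCZ : CZ = {z : Z | ∃ y ∈ Y1, y + (z : Y) ∈ C}) :
    ∀ B : Set Z,
      ((Y1 : Set Y) + Subtype.val '' B) \
          (((Y1 : Set Y) + Subtype.val '' B) + interior C) =
        (Y1 : Set Y) + Subtype.val '' (B \ (B + interior CZ)) := by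
  -- extract the interior point
  obtain ⟨w0, hw0mem, hw0int⟩ := hne
  rw [Set.mem_add] at hw0mem
  obtain ⟨y0, hy0, z0v, hz0v, hw0⟩ := hw0mem
  set z0 : Z := ⟨z0v, hz0v⟩ with hz0def
  have hw0int' : y0 + (z0 : Y) ∈ interior C := by rw [hw0]; exact hw0int
  -- Lemma A
  have lemA : ∀ z : Z, (∃ y ∈ Y1, y + (z : Y) ∈ interior C) → z ∈ interior CZ := by
    rintro z ⟨y, hy, hyz⟩
    have hcont : Continuous fun ζ : Z => y + (ζ : Y) := by continuity
    have hopen : IsOpen {ζ : Z | y + (ζ : Y) ∈ interior C} :=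
      isOpen_interior.preimage hcont
    have hsub : {ζ : Z | y + (ζ : Y) ∈ interior C} ⊆ CZ := fun ζ hζ => by
      rw [hCZ]; exact ⟨y, hy, interior_subset hζ⟩
    exact interior_maximal hsub hopen hyz
  -- Lemma B
  have lemB : ∀ z : Z, z ∈ interior CZ → ∃ y ∈ Y1, y + (z : Y) ∈ interior C := by
    intro z hz
    set g : ℝ → Z := fun t => z + t • (z - z0) with hg
    have hgc : Continuous g := by
      apply continuous_const.add
      exact continuous_id.smul continuous_const
    have hmem0 : (0 : ℝ) ∈ g ⁻¹' interior CZ := by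
      simp only [Set.mem_preimage, hg, zero_smul, add_zero]
      exact hz
    obtain ⟨ε, hε, hball⟩ := Metric.isOpen_iff.mp (isOpen_interior.preimage hgc) 0 hmem0
    set t : ℝ := ε / 2 with htdef
    have ht : 0 < t := by positivity
    have htmem : g t ∈ interior CZ := by
      apply hball
      simp only [Metric.mem_ball, Real.dist_eq, sub_zero]
      rw [abs_of_pos ht]
      linarith
    have hwCZ : g t ∈ CZ := interior_subset htmem
    rw [hCZ] at hwCZ
    obtain ⟨yw, hyw, hywC⟩ := hwCZ
    have h1t : (0 : ℝ) < 1 + t := by linarith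
    have hab : t / (1 + t) + 1 / (1 + t) = 1 := by field_simp; ring
    have key := hCconv.combo_interior_self_mem_interior hw0int' hywC
      (div_pos ht h1t) (le_of_lt (div_pos one_pos h1t)) hab
    refine ⟨(t / (1 + t)) • y0 + (1 / (1 + t)) • yw,
      Y1.add_mem (Y1.smul_mem _ hy0) (Y1.smul_mem _ hyw), ?_⟩
    have hwY : ((g t : Z) : Y) = (z : Y) + t • ((z : Y) - (z0 : Y)) := by
      simp [hg]
    have heq : (t / (1 + t)) • y0 + (1 / (1 + t)) • yw + (z : Y) =
        (t / (1 + t)) • (y0 + (z0 : Y)) + (1 / (1 + t)) • (yw + ((g t : Z) : Y)) := by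
      rw [hwY]
      match_scalars <;> field_simp <;> ring
    rw [heq]
    exact key
  intro B
  ext w
  constructor
  · rintro ⟨hwmem, hwnot⟩
    rw [Set.mem_add] at hwmem
    obtain ⟨y1, hy1, bv, hbv, hsum⟩ := hwmem
    obtain ⟨b, hbB, rfl⟩ := hbv
    rw [Set.mem_add]
    refine ⟨y1, hy1, (b : Y), ⟨b, ⟨hbB, ?_⟩, rfl⟩, hsum⟩
    intro hbmem
    rw [Set.mem_add] at hbmem
    obtain ⟨b', hb', ζ, hζ, hsumb⟩ := hbmem
    obtain ⟨y, hy, hyζ⟩ := lemB ζ hζ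
    apply hwnot
    rw [Set.mem_add]
    refine ⟨y1 - y + (b' : Y), ?_, y + (ζ : Y), hyζ, ?_⟩
    · rw [Set.mem_add]
      exact ⟨y1 - y, Y1.sub_mem hy1 hy, (b' : Y), ⟨b', hb', rfl⟩, rfl⟩
    · have hc : (b' : Y) + (ζ : Y) = (b : Y) := by exact_mod_cast congrArg Subtype.val hsumb
      rw [← hsum, ← hc]; abel
  · rintro hwmem
    rw [Set.mem_add] at hwmem
    obtain ⟨y1, hy1, bv, hbv, hsum⟩ := hwmem
    obtain ⟨b, ⟨hbB, hbnot⟩, rfl⟩ := hbv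
    constructor
    · rw [Set.mem_add]
      exact ⟨y1, hy1, (b : Y), ⟨b, hbB, rfl⟩, hsum⟩
    · intro hcon
      rw [Set.mem_add] at hcon
      obtain ⟨u, hu, c, hc, hsumc⟩ := hcon
      rw [Set.mem_add] at hu
      obtain ⟨y', hy', bv', hbv', hsumu⟩ := hu
      obtain ⟨b', hb'B, rfl⟩ := hbv'
      apply hbnot
      rw [Set.mem_add]
      refine ⟨b', hb'B, b - b', ?_, by abel⟩
      apply lemA
      refine ⟨y1 - y', Y1.sub_mem hy1 hy', ?_⟩
      have hcval : c = (y1 + (b : Y)) - (y' + (b' : Y)) := by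
        rw [← hsumu] at hsumc
        have h2 : y1 + (b : Y) = y' + (b' : Y) + c := hsum.trans hsumc.symm
        rw [h2]; abel
      have hfin : y1 - y' + ((b - b' : Z) : Y) = c := by
        rw [hcval]; push_cast; abel
      rw [hfin]
      exact hc
end

section
/- Let Y be a real normed space, Y_1 and Z linear subspaces of Y with Y_1 ∩ Z = {0}, and let Π_Z : Y_1 + Z → Z be the projection Π_Z(y + z) = z for (y, z) ∈ Y_1 × Z. Let C be a convex cone in Y with 0 ∈ C, and set C_Z = Π_Z((Y_1 + Z) ∩ C). Let B ⊆ Z, y_1 ∈ Y_1, y_2 ∈ B. Then: (a) if y_1 + y_2 ∈ E(Y_1 + B, C), then y_2 ∈ E(B, C_Z); and (b) if C_Z = C ∩ (Y_1 + Z) and y_2 ∈ E(B, C_Z), then y_1 + y_2 ∈ E(Y_1 + B, C). -/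
open Set Pointwise

/-- The set of Pareto efficient points of `Ω` with respect to the cone `K`:
points `ω ∈ Ω` such that there is no `v ∈ Ω \ {ω}` with `ω - v ∈ K`. -/
def paretoEff {α : Type*} [AddCommGroup α] (K Ω : Set α) : Set α :=
  {ω ∈ Ω | ∀ v ∈ Ω, ω - v ∈ K → v = ω}

/-- With `C_Z = Π_Z ((Y₁ + Z) ∩ C)`:
(a) if `y₁ + y₂ ∈ E(Y₁ + B, C)` then `y₂ ∈ E(B, C_Z)`;
(b) if moreover `C_Z = C ∩ (Y₁ + Z)` and `y₂ ∈ E(B, C_Z)` then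
`y₁ + y₂ ∈ E(Y₁ + B, C)`. -/
theorem stmt_17 {Y : Type*} [NormedAddCommGroup Y] [NormedSpace ℝ Y]
    (Y1 Z : Submodule ℝ Y) (hinf : Y1 ⊓ Z = ⊥)
    (C : Set Y) (hCconv : Convex ℝ C)
    (hCcone : ∀ t : ℝ, 0 ≤ t → t • C ⊆ C) (h0 : (0 : Y) ∈ C)
    (CZ : Set Z) (hCZ : CZ = {z : Z | ∃ y ∈ Y1, y + (z : Y) ∈ C})
    (B : Set Z) (y1 : Y1) (y2 : Z) (hy2 : y2 ∈ B) :
    (((y1 : Y) + (y2 : Y)) ∈ paretoEff C ((Y1 : Set Y) + Subtype.val '' B) →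
      y2 ∈ paretoEff CZ B) ∧
    ((Subtype.val '' CZ = C ∩ ((Y1 : Set Y) + (Z : Set Y)) ∧
        y2 ∈ paretoEff CZ B) →
      ((y1 : Y) + (y2 : Y)) ∈ paretoEff C ((Y1 : Set Y) + Subtype.val '' B)) := by
  have hdis : ∀ x : Y, x ∈ Y1 → x ∈ Z → x = 0 := by
    intro x hx hz
    have hx2 : x ∈ Y1 ⊓ Z := ⟨hx, hz⟩
    rw [hinf] at hx2
    simpa using hx2
  constructor
  · rintro ⟨hmem, heff⟩
    refine ⟨hy2, ?_⟩
    intro v hv hsub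
    rw [hCZ] at hsub
    obtain ⟨y, hy, hyC⟩ := hsub
    have hw : ((y1 : Y) - y) + (v : Y) ∈ (Y1 : Set Y) + Subtype.val '' B :=
      ⟨(y1 : Y) - y, sub_mem y1.2 hy, (v : Y), ⟨v, hv, rfl⟩, rfl⟩
    have hc : (y1 : Y) + (y2 : Y) - (((y1 : Y) - y) + (v : Y)) ∈ C := by
      have heq : (y1 : Y) + (y2 : Y) - (((y1 : Y) - y) + (v : Y))
          = y + ((y2 - v : Z) : Y) := by push_cast; abel
      rw [heq]; exact hyC
    have hveq := heff _ hw hc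
    have hzmem : ((v - y2 : Z) : Y) = 0 := by
      refine hdis _ ?_ (v - y2).2
      have : ((v - y2 : Z) : Y) = y := by push_cast; linear_combination (norm := module) hveq
      rw [this]; exact hy
    have : v - y2 = 0 := by exact_mod_cast hzmem
    exact sub_eq_zero.mp this
  · rintro ⟨hset, hmem, heff⟩
    refine ⟨⟨(y1 : Y), y1.2, (y2 : Y), ⟨y2, hy2, rfl⟩, rfl⟩, ?_⟩
    rintro w ⟨u, hu, _, ⟨v, hv, rfl⟩, rfl⟩ hc
    have hmem2 : (y1 : Y) + (y2 : Y) - (u + (v : Y)) ∈ C ∩ ((Y1 : Set Y) + (Z : Set Y)) := by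
      refine ⟨hc, (y1 : Y) - u, sub_mem y1.2 hu, ((y2 - v : Z) : Y), (y2 - v).2, ?_⟩
      push_cast; abel
    rw [← hset] at hmem2
    obtain ⟨z, hz, hzeq⟩ := hmem2
    have hz0 : ((z - (y2 - v) : Z) : Y) = 0 := by
      refine hdis _ ?_ (z - (y2 - v)).2
      have : ((z - (y2 - v) : Z) : Y) = (y1 : Y) - u := by push_cast; linear_combination (norm := module) hzeq
      rw [this]; exact sub_mem y1.2 hu
    have hzz : z = y2 - v := by
      have : z - (y2 - v) = 0 := by exact_mod_cast hz0
      exact sub_eq_zero.mp this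
    have hveq : v = y2 := heff v hv (hzz ▸ hz)
    have hcv : ((z : Y)) = (y2 : Y) - (v : Y) := by rw [hzz]; push_cast; abel
    have : u = (y1 : Y) := by
      rw [hcv] at hzeq; linear_combination (norm := module) hzeq
    rw [this, hveq]
end

section
/- Let Y be a real vector space, C a convex cone in Y with 0 ∈ C, and B_1, …, B_m subsets of Y. Then E(⋃_{i=1}^m B_i, C) = ⋃_{i=1}^m ⋂_{j=1}^m ( E(B_i, C) \ ((B_j + C) \ E(B_j, C)) ). -/
open Set Pointwise

/-- The Pareto efficient points of a finite union:
`E(⋃ᵢ Bᵢ, C) = ⋃ᵢ ⋂ⱼ (E(Bᵢ, C) \ ((Bⱼ + C) \ E(Bⱼ, C)))`. -/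
theorem stmt_18 {Y : Type*} [AddCommGroup Y] [Module ℝ Y]
    (C : Set Y) (hCconv : Convex ℝ C)
    (hCcone : ∀ t : ℝ, 0 ≤ t → t • C ⊆ C) (h0 : (0 : Y) ∈ C)
    {m : ℕ} (B : Fin m → Set Y) :
    paretoEff C (⋃ i, B i) =
      ⋃ i, ⋂ j, (paretoEff C (B i) \ ((B j + C) \ paretoEff C (B j))) := by
  ext ω
  simp only [mem_iUnion, mem_iInter, mem_diff, paretoEff, mem_setOf_eq]
  constructor
  · rintro ⟨hω, heff⟩
    obtain ⟨i, hi⟩ := hω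
    refine ⟨i, fun j => ⟨⟨hi, fun v hv hc => heff v (⟨i, hv⟩) hc⟩, ?_⟩⟩
    rintro ⟨⟨b, hb, c, hc, hbc⟩, hnot⟩
    have hbω : b = ω := heff b (⟨j, hb⟩) (by
      have : ω - b = c := by rw [← hbc]; exact add_sub_cancel_left b c
      rw [this]; exact hc)
    exact hnot ⟨hbω ▸ hb, fun v hv hc => heff v (⟨j, hv⟩) hc⟩
  · rintro ⟨i, h⟩
    obtain ⟨⟨hωi, heffi⟩, _⟩ := h i
    refine ⟨⟨i, hωi⟩, fun v hv hc => ?_⟩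
    obtain ⟨j, hvj⟩ := hv
    obtain ⟨_, hj⟩ := h j
    have hmem : ω ∈ B j + C := ⟨v, hvj, ω - v, hc, add_sub_cancel v ω⟩
    by_contra hne
    exact hne ((not_and.mp hj hmem |> not_not.mp).2 v hvj hc)
end

section
/- Let X and Y be real normed spaces and C a convex cone in Y with int(C) ≠ ∅. Let P_1, …, P_m be polyhedra in X with X = ⋃_{i=1}^m P_i, int(P_i) ≠ ∅ for each i, and P_i ∩ int(P_{i'}) = ∅ for i ≠ i'. Let f : X → Y and φ_1, …, φ_l : X → ℝ, and suppose there exist continuous linear operators T_i : X → Y, points b_i ∈ Y, continuous linear functionals x_{ij}^* on X and reals c_{ij} (i = 1,…,m, j = 1,…,l) such that for each i and all x ∈ P_i: f(x) = T_i x + b_i and φ_j(x) = ⟨x_{ij}^*, x⟩ − c_{ij} for all j. Let A = {x ∈ X : φ_j(x) ≤ 0 for all j = 1,…,l}, A_i = {x ∈ P_i : ⟨x_{ij}^*, x⟩ ≤ c_{ij} for all j}, S^w = {x ∈ A : there is no u ∈ A with f(x) − f(u) ∈ int(C)}, and S_i^w = {x ∈ A_i : there is no u ∈ A_i with T_i x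 − T_i u ∈ int(C)}. If f(A) + C is a convex subset of Y, then there exist finitely many polyhedra F_1, …, F_p in X such that S^w = ⋃_{k=1}^p F_k and, for each k, there exists i ∈ {1,…,m} with A_i ≠ ∅ such that F_k is an exposed face of A_i and F_k ⊆ S_i^w. -/
open Set Pointwise

section Aux
variable {X : Type*} [NormedAddCommGroup X] [NormedSpace ℝ X]

lemma isPolyhedron_of_fintype_s19 {ι : Type} [Fintype ι] (w : ι → X →L[ℝ] ℝ) (d : ι → ℝ) :
    IsPolyhedron {z : X | ∀ k, w k z ≤ d k} := by
  refine ⟨Fintype.card ι, fun j => w ((Fintype.equivFin ι).symm j),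
    fun j => d ((Fintype.equivFin ι).symm j), ?_⟩
  ext z
  constructor
  · intro h j; exact h _
  · intro h k; simpa using h (Fintype.equivFin ι k)

lemma convex_poly {ι : Type*} (w : ι → X →L[ℝ] ℝ) (d : ι → ℝ) :
    Convex ℝ {x : X | ∀ k, w k x ≤ d k} := by
  intro x hx y hy a b ha hb hab
  intro k
  have h1 := hx k
  have h2 := hy k
  have h3 : w k (a • x + b • y) = a * w k x + b * w k y := by
    simp [map_add, map_smul, smul_eq_mul]
  change w k x ≤ d k at h1
  change w k y ≤ d k at h2
  change w k (a • x + b • y) ≤ d k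
  rw [h3]
  calc a * w k x + b * w k y ≤ a * d k + b * d k :=
        add_le_add (mul_le_mul_of_nonneg_left h1 ha) (mul_le_mul_of_nonneg_left h2 hb)
    _ = d k := by rw [← add_mul, hab, one_mul]

lemma face_eq_active {ι : Type} [Fintype ι] (w : ι → X →L[ℝ] ℝ) (d : ι → ℝ)
    {Q : Set X} (hQ : Q = {x | ∀ k, w k x ≤ d k})
    (l : X →L[ℝ] ℝ) {F : Set X} (hF : F = {u ∈ Q | ∀ v ∈ Q, l v ≤ l u})
    (hne : F.Nonempty) :
    F = {x ∈ Q | ∀ k, (∀ y ∈ F, w k y = d k) → w k x = d k} := by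
  classical
  have hQconv : Convex ℝ Q := hQ ▸ convex_poly w d
  have hFconv : Convex ℝ F := by
    rw [hF]
    intro x hx y hy a b ha hb hab
    refine ⟨hQconv hx.1 hy.1 ha hb hab, fun v hv => ?_⟩
    have h3 : l (a • x + b • y) = a * l x + b * l y := by
      simp [map_add, map_smul, smul_eq_mul]
    rw [h3]
    calc l v = a * l v + b * l v := by rw [← add_mul, hab, one_mul]
      _ ≤ a * l x + b * l y :=
        add_le_add (mul_le_mul_of_nonneg_left (hx.2 v hv) ha)
          (mul_le_mul_of_nonneg_left (hy.2 v hv) hb)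
  apply subset_antisymm
  · intro x hx
    have hxQ : x ∈ Q := by rw [hF] at hx; exact hx.1
    exact ⟨hxQ, fun k hk => hk x hx⟩
  · rintro y ⟨hyQ, hyI⟩
    set J : Finset ι := Finset.univ.filter (fun k => ¬ (∀ z ∈ F, w k z = d k)) with hJ
    have hJstrict : ∀ k ∈ J, ∃ z ∈ F, w k z < d k := by
      intro k hk
      rw [hJ, Finset.mem_filter] at hk
      push_neg at hk
      obtain ⟨z, hzF, hzne⟩ := hk.2
      have hzQ : z ∈ Q := by rw [hF] at hzF; exact hzF.1
      rw [hQ] at hzQ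
      exact ⟨z, hzF, lt_of_le_of_ne (hzQ k) hzne⟩
    choose zf hzF hzlt using hJstrict
    obtain ⟨xb, hxbF, hxbs⟩ : ∃ xb ∈ F, ∀ k ∈ J, w k xb < d k := by
      rcases J.eq_empty_or_nonempty with hJe | hJne
      · exact ⟨hne.choose, hne.choose_spec, by simp [hJe]⟩
      · have hcard : (0:ℝ) < (J.card : ℝ) := by
          exact_mod_cast Nat.pos_of_ne_zero (Finset.card_ne_zero_of_mem hJne.choose_spec)
        refine ⟨∑ k ∈ J.attach, ((J.card : ℝ)⁻¹) • zf k.1 k.2, ?_, ?_⟩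
        · apply hFconv.sum_mem (fun _ _ => by positivity) ?_ (fun k _ => hzF k.1 k.2)
          rw [Finset.sum_const, Finset.card_attach, nsmul_eq_mul]
          field_simp
        · intro k0 hk0
          have hmap : w k0 (∑ k ∈ J.attach, ((J.card : ℝ)⁻¹) • zf k.1 k.2)
              = ∑ k ∈ J.attach, ((J.card : ℝ)⁻¹) * w k0 (zf k.1 k.2) := by
            rw [map_sum]
            simp [map_smul, smul_eq_mul]
          rw [hmap]
          have hlt : ∑ k ∈ J.attach, ((J.card : ℝ)⁻¹) * w k0 (zf k.1 k.2)
              < ∑ _k ∈ J.attach, ((J.card : ℝ)⁻¹) * d k0 := by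
            apply Finset.sum_lt_sum
            · intro k _
              apply mul_le_mul_of_nonneg_left _ (by positivity)
              have hzQ : zf k.1 k.2 ∈ Q := by
                have := hzF k.1 k.2; rw [hF] at this; exact this.1
              rw [hQ] at hzQ
              exact hzQ k0
            · exact ⟨⟨k0, hk0⟩, Finset.mem_attach _ _,
                mul_lt_mul_of_pos_left (hzlt k0 hk0) (by positivity)⟩
          have hsum : ∑ _k ∈ J.attach, ((J.card : ℝ)⁻¹) * d k0 = d k0 := by
            rw [Finset.sum_const, Finset.card_attach, nsmul_eq_mul]
            field_simp
          rw [hsum] at hlt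
          exact hlt
    obtain ⟨ε, hε0, hεs⟩ : ∃ ε : ℝ, 0 < ε ∧ ∀ k ∈ J, ε * (w k xb - w k y) ≤ d k - w k xb := by
      rcases J.eq_empty_or_nonempty with hJe | hJne
      · exact ⟨1, one_pos, by simp [hJe]⟩
      · set δ := J.inf' hJne (fun k => d k - w k xb) with hδdef
        have hδ : 0 < δ := by
          rw [hδdef, Finset.lt_inf'_iff]
          exact fun k hk => sub_pos.mpr (hxbs k hk)
        set M := J.sup' hJne (fun k => w k xb - w k y) with hMdef
        refine ⟨δ / (max M 0 + 1), by positivity, ?_⟩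
        intro k hk
        have h1 : w k xb - w k y ≤ max M 0 + 1 := by
          have := Finset.le_sup' (fun k => w k xb - w k y) hk
          have h2 : M ≤ max M 0 := le_max_left _ _
          linarith
        have h2 : δ / (max M 0 + 1) * (w k xb - w k y) ≤ δ / (max M 0 + 1) * (max M 0 + 1) :=
          mul_le_mul_of_nonneg_left h1 (by positivity)
        have h3 : δ / (max M 0 + 1) * (max M 0 + 1) = δ :=
          div_mul_cancel₀ _ (by positivity)
        have h4 : δ ≤ d k - w k xb := Finset.inf'_le _ hk
        linarith
    have hxbQ : xb ∈ Q := by rw [hF] at hxbF; exact hxbF.1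
    set zp := xb + ε • (xb - y) with hzp
    have hzpQ : zp ∈ Q := by
      rw [hQ]
      intro k
      have hxk : w k xb ≤ d k := by rw [hQ] at hxbQ; exact hxbQ k
      have hwz : w k zp = w k xb + ε * (w k xb - w k y) := by
        rw [hzp]
        simp [map_add, map_smul, map_sub, smul_eq_mul]
      by_cases hkI : ∀ z ∈ F, w k z = d k
      · have h1 : w k xb = d k := hkI xb hxbF
        have h2 : w k y = d k := hyI k hkI
        rw [hwz, h1, h2]
        simp
      · have hkJ : k ∈ J := by rw [hJ, Finset.mem_filter]; exact ⟨Finset.mem_univ k, hkI⟩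
        have := hεs k hkJ
        rw [hwz]
        linarith
    have hxbmax : ∀ v ∈ Q, l v ≤ l xb := by rw [hF] at hxbF; exact hxbF.2
    have hlz : l zp ≤ l xb := hxbmax zp hzpQ
    have hlz2 : l zp = l xb + ε * (l xb - l y) := by
      rw [hzp]
      simp [map_add, map_smul, map_sub, smul_eq_mul]
    have hlxy : l xb ≤ l y := by nlinarith
    rw [hF]
    exact ⟨hyQ, fun v hv => le_trans (hxbmax v hv) hlxy⟩

end Aux


/-- Structure of the weak Pareto solution set of a fully piecewise linear
vector optimization problem under the `C`-convexity assumption on `f(A)`: `S^w` is a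
finite union of polyhedra, each of which is an exposed face of some `Aᵢ` contained in the
weak Pareto solution set `Sᵢ^w` of the corresponding linear subproblem. -/
theorem stmt_19 {X Y : Type*} [NormedAddCommGroup X] [NormedSpace ℝ X]
    [NormedAddCommGroup Y] [NormedSpace ℝ Y]
    (C : Set Y) (hCconv : Convex ℝ C)
    (hCcone : ∀ t : ℝ, 0 ≤ t → t • C ⊆ C)
    (hCint : (interior C).Nonempty)
    {m l : ℕ}
    (P : Fin m → Set X)
    (hpoly : ∀ i, IsPolyhedron (P i)) (hcover : (⋃ i, P i) = Set.univ)
    (hint : ∀ i, (interior (P i)).Nonempty)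
    (hdisj : ∀ i i', i ≠ i' → P i ∩ interior (P i') = ∅)
    (f : X → Y) (φ : Fin l → X → ℝ)
    (T : Fin m → X →L[ℝ] Y) (b : Fin m → Y)
    (xs : Fin m → Fin l → X →L[ℝ] ℝ) (c : Fin m → Fin l → ℝ)
    (hf : ∀ i, ∀ x ∈ P i, f x = T i x + b i)
    (hφ : ∀ i, ∀ x ∈ P i, ∀ j, φ j x = xs i j x - c i j)
    (A : Set X) (hA : A = {x | ∀ j, φ j x ≤ 0})
    (Ai : Fin m → Set X) (hAi : ∀ i, Ai i = {x ∈ P i | ∀ j, xs i j x ≤ c i j})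
    (Sw : Set X) (hSw : Sw = {x ∈ A | ¬ ∃ u ∈ A, f x - f u ∈ interior C})
    (Siw : Fin m → Set X)
    (hSiw : ∀ i, Siw i = {x ∈ Ai i | ¬ ∃ u ∈ Ai i, T i x - T i u ∈ interior C})
    (hconv : Convex ℝ (f '' A + C)) :
    ∃ (p : ℕ) (F : Fin p → Set X),
      (∀ k, IsPolyhedron (F k)) ∧
      Sw = ⋃ k, F k ∧
      ∀ k, ∃ i, (Ai i).Nonempty ∧ IsExposedFace (Ai i) (F k) ∧ F k ⊆ Siw i := by
  classical
  choose n u s hP using hpoly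
  set w : ∀ i : Fin m, (Fin (n i) ⊕ Fin l) → X →L[ℝ] ℝ := fun i => Sum.elim (u i) (xs i)
    with hw
  set d : ∀ i : Fin m, (Fin (n i) ⊕ Fin l) → ℝ := fun i => Sum.elim (s i) (c i) with hd
  have hAiQ : ∀ i, Ai i = {x | ∀ k, w i k x ≤ d i k} := by
    intro i
    rw [hAi i, hP i]
    ext x
    simp only [mem_setOf_eq, mem_sep_iff, hw, hd]
    constructor
    · rintro ⟨h1, h2⟩ k
      cases k with
      | inl a => exact h1 a
      | inr j => exact h2 j
    · intro h
      exact ⟨fun a => h (Sum.inl a), fun j => h (Sum.inr j)⟩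
  have hAiP : ∀ i, Ai i ⊆ P i := by
    intro i x hx; rw [hAi i] at hx; exact hx.1
  have hAiA : ∀ i, Ai i ⊆ A := by
    intro i x hx
    rw [hAi i] at hx
    rw [hA]
    intro j
    rw [hφ i x hx.1 j]
    linarith [hx.2 j]
  have hAcov : ∀ x ∈ A, ∃ i, x ∈ Ai i := by
    intro x hx
    have hx2 : x ∈ ⋃ i, P i := by rw [hcover]; exact mem_univ x
    obtain ⟨i, hxP⟩ := mem_iUnion.mp hx2
    refine ⟨i, ?_⟩
    rw [hAi i]
    refine ⟨hxP, fun j => ?_⟩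
    have h1 : φ j x ≤ 0 := by rw [hA] at hx; exact hx j
    rw [hφ i x hxP j] at h1
    linarith
  -- basic facts about C
  have hCne : C.Nonempty := ⟨hCint.choose, interior_subset hCint.choose_spec⟩
  have h0C : (0:Y) ∈ C := by
    have h1 := hCcone 0 le_rfl
    rw [Set.zero_smul_set hCne] at h1
    exact h1 rfl
  have hCC : C + C ⊆ C := by
    rintro _ ⟨a, ha, b2, hb2, rfl⟩
    have hmid : (1/2:ℝ) • a + (1/2:ℝ) • b2 ∈ C :=
      hCconv ha hb2 (by norm_num) (by norm_num) (by norm_num)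
    have h2 := hCcone 2 (by norm_num) (Set.smul_mem_smul_set (a := (2:ℝ)) hmid)
    simpa [smul_smul, smul_add] using h2
  have hintscale : ∀ t : ℝ, 0 < t → ∀ e ∈ interior C, t • e ∈ interior C := by
    intro t ht e he
    have hopen : IsOpen (t • interior C) := isOpen_interior.smul₀ (ne_of_gt ht)
    have hsub : t • interior C ⊆ C := fun z hz =>
      hCcone t ht.le (Set.smul_set_mono interior_subset hz)
    exact interior_maximal hsub hopen (Set.smul_mem_smul_set he)
  have hCplusint : ∀ y0 ∈ C, ∀ e ∈ interior C, y0 + e ∈ interior C := by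
    intro y0 hy0 e he
    have hopen : IsOpen ({y0} + interior C) := IsOpen.add_left isOpen_interior
    have hsub : {y0} + interior C ⊆ C := by
      rintro _ ⟨a, ha, b2, hb2, rfl⟩
      rw [mem_singleton_iff] at ha
      subst ha
      exact hCC (Set.add_mem_add hy0 (interior_subset hb2))
    exact interior_maximal hsub hopen (Set.add_mem_add rfl he)
  -- scalarization
  have hscal : ∀ x ∈ Sw, ∃ g : Y →L[ℝ] ℝ,
      (∀ e ∈ interior C, 0 < g e) ∧ (∀ v ∈ A, g (f x) ≤ g (f v)) := by
    intro x hx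
    rw [hSw] at hx
    obtain ⟨hxA, hxnd⟩ := hx
    have hSopen : IsOpen (f '' A + interior C) := IsOpen.add_left isOpen_interior
    have hCi : C + interior C = interior C := by
      apply subset_antisymm
      · rintro _ ⟨a, ha, e, he, rfl⟩
        exact hCplusint a ha e he
      · intro e he
        rw [← zero_add e]
        exact Set.add_mem_add h0C he
    have hSconv : Convex ℝ (f '' A + interior C) := by
      have h1 : f '' A + interior C = (f '' A + C) + interior C := by
        rw [add_assoc, hCi]
      rw [h1]
      exact hconv.add hCconv.interior
    have hfxS : f x ∉ f '' A + interior C := by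
      rintro ⟨_, ⟨v, hvA, rfl⟩, e, he, hsum⟩
      exact hxnd ⟨v, hvA, by rw [← hsum, add_sub_cancel_left]; exact he⟩
    obtain ⟨g, hg⟩ := geometric_hahn_banach_point_open hSconv hSopen hfxS
    have hpos : ∀ e ∈ interior C, 0 < g e := by
      intro e he
      have h1 : f x + e ∈ f '' A + interior C :=
        Set.add_mem_add (mem_image_of_mem f hxA) he
      have h2 := hg _ h1
      rw [map_add] at h2
      linarith
    refine ⟨g, hpos, ?_⟩
    intro v hv
    obtain ⟨e0, he0⟩ := hCint
    have he0p : 0 < g e0 := hpos e0 he0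
    apply le_of_forall_pos_lt_add
    intro ε hε
    have ht : 0 < ε / g e0 := by positivity
    have h1 : (ε / g e0) • e0 ∈ interior C := hintscale _ ht e0 he0
    have h2 : f v + (ε / g e0) • e0 ∈ f '' A + interior C :=
      Set.add_mem_add (mem_image_of_mem f hv) h1
    have h3 := hg _ h2
    rw [map_add, map_smul, smul_eq_mul, div_mul_cancel₀ _ (ne_of_gt he0p)] at h3
    linarith
  -- candidate faces
  set Gset : ∀ i : Fin m, Set (Fin (n i) ⊕ Fin l) → Set X :=
    fun i I => {x ∈ Ai i | ∀ k, k ∈ I → w i k x = d i k} with hGset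
  have hGpoly : ∀ i I, IsPolyhedron (Gset i I) := by
    intro i I
    have heq : Gset i I = {x : X | ∀ k : (Fin (n i) ⊕ Fin l) ⊕ (Fin (n i) ⊕ Fin l),
        (Sum.elim (w i) (fun k' => if k' ∈ I then -(w i k') else w i k')) k x ≤
        (Sum.elim (d i) (fun k' => if k' ∈ I then -(d i k') else d i k')) k} := by
      ext x
      simp only [hGset, mem_sep_iff, mem_setOf_eq]
      rw [hAiQ i]
      simp only [mem_setOf_eq]
      constructor
      · rintro ⟨h1, h2⟩ k
        cases k with
        | inl a => exact h1 a
        | inr a =>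
          by_cases ha : a ∈ I
          · simp [ha, ContinuousLinearMap.neg_apply, h2 a ha]
          · simpa [ha] using h1 a
      · intro h
        refine ⟨fun a => h (Sum.inl a), fun a ha => ?_⟩
        have h1 := h (Sum.inl a)
        have h2 := h (Sum.inr a)
        simp only [Sum.elim_inl, Sum.elim_inr, if_pos ha,
          ContinuousLinearMap.neg_apply] at h1 h2
        linarith
    rw [heq]
    exact isPolyhedron_of_fintype_s19 _ _
  -- the good family
  set Good : Set (Set X) := {F0 | (∃ i I, F0 = Gset i I) ∧ F0 ⊆ Sw ∧
      ∃ i, (Ai i).Nonempty ∧ IsExposedFace (Ai i) F0 ∧ F0 ⊆ Siw i} with hGood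
  have hGoodFin : Good.Finite := by
    apply Set.Finite.subset (Set.finite_iUnion (fun i : Fin m => Set.finite_range (Gset i)))
    rintro F0 ⟨⟨i, I, rfl⟩, -⟩
    exact mem_iUnion.mpr ⟨i, mem_range_self I⟩
  have hmain : ∀ x ∈ Sw, ∃ F0 ∈ Good, x ∈ F0 := by
    intro x hxSw
    obtain ⟨g, hgpos, hgmin⟩ := hscal x hxSw
    have hxA : x ∈ A := by rw [hSw] at hxSw; exact hxSw.1
    obtain ⟨i, hxAi⟩ := hAcov x hxA
    set L : X →L[ℝ] ℝ := -(g.comp (T i)) with hL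
    set F0 : Set X := {u ∈ Ai i | ∀ v ∈ Ai i, L v ≤ L u} with hF0
    have hLval : ∀ z : X, L z = -(g (T i z)) := fun z => rfl
    have hfAi : ∀ z ∈ Ai i, f z = T i z + b i := fun z hz => hf i z (hAiP i hz)
    have hxF0 : x ∈ F0 := by
      refine ⟨hxAi, fun v hv => ?_⟩
      have h1 := hgmin v (hAiA i hv)
      rw [hfAi x hxAi, hfAi v hv, map_add, map_add] at h1
      rw [hLval, hLval]
      linarith
    have hF0Sw : F0 ⊆ Sw := by
      intro u' hu
      obtain ⟨huAi, humax⟩ := hu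
      have huA : u' ∈ A := hAiA i huAi
      have hgu : ∀ v ∈ A, g (f u') ≤ g (f v) := by
        intro v hv
        have h1 : L x ≤ L u' := humax x hxAi
        rw [hLval, hLval] at h1
        have h3 : g (f u') ≤ g (f x) := by
          rw [hfAi u' huAi, hfAi x hxAi, map_add, map_add]
          linarith
        exact h3.trans (hgmin v hv)
      rw [hSw]
      refine ⟨huA, ?_⟩
      rintro ⟨v, hvA, hmem⟩
      have h2 := hgpos _ hmem
      rw [map_sub] at h2
      linarith [hgu v hvA]
    have hF0Siw : F0 ⊆ Siw i := by
      intro u' hu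
      rw [hSiw i]
      refine ⟨hu.1, ?_⟩
      rintro ⟨v, hvAi, hmem⟩
      have h1 := hu.2 v hvAi
      rw [hLval, hLval] at h1
      have h2 := hgpos _ hmem
      rw [map_sub] at h2
      linarith
    have hface := face_eq_active (w i) (d i) (hAiQ i) L hF0 ⟨x, hxF0⟩
    have hGeq : F0 = Gset i {k | ∀ y0 ∈ F0, w i k y0 = d i k} := by
      conv_lhs => rw [hface]
      rfl
    exact ⟨F0, ⟨⟨i, _, hGeq⟩, hF0Sw, ⟨i, ⟨x, hxAi⟩, ⟨L, hF0⟩, hF0Siw⟩⟩, hxF0⟩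
  -- assemble
  have hmemk : ∀ k : Fin hGoodFin.toFinset.card,
      ((hGoodFin.toFinset.equivFin.symm k : Set X)) ∈ Good := fun k =>
    hGoodFin.mem_toFinset.mp (hGoodFin.toFinset.equivFin.symm k).2
  refine ⟨hGoodFin.toFinset.card, fun k => (hGoodFin.toFinset.equivFin.symm k : Set X), ?_, ?_, ?_⟩
  · intro k
    show IsPolyhedron ((hGoodFin.toFinset.equivFin.symm k : Set X))
    obtain ⟨⟨i, I, hEq⟩, -⟩ := hmemk k
    rw [hEq]
    exact hGpoly i I
  · apply subset_antisymm
    · intro x hx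
      obtain ⟨F0, hF0G, hxF0⟩ := hmain x hx
      have hmemF : F0 ∈ hGoodFin.toFinset := hGoodFin.mem_toFinset.mpr hF0G
      refine mem_iUnion.mpr ⟨hGoodFin.toFinset.equivFin ⟨F0, hmemF⟩, ?_⟩
      show x ∈ ((hGoodFin.toFinset.equivFin.symm (hGoodFin.toFinset.equivFin ⟨F0, hmemF⟩) : Set X))
      rw [Equiv.symm_apply_apply]
      exact hxF0
    · apply iUnion_subset
      intro k
      exact (hmemk k).2.1
  · intro k
    exact (hmemk k).2.2
end
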